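/- arXiv:0711.4236 — 9 statements merged into one kernel-verified Lean document; each statement's English description precedes it below -/
import Mathlib

section
/- Let s₀ > 0 and let n be analytic on ℂ∖ℝ with n(conj z) = conj(n(z)) and n(z) ≠ 0 for all nonreal z, and define ñ(z) = −s₀/n(z) − z. Then n is a Nevanlinna function satisfying lim_{y→±∞} (iy)·n(iy) = −s₀ (condition (1₀)) if and only if ñ is a Nevanlinna function satisfying lim_{y→±∞} ñ(iy)/y = 0. -/
open Filter Complex

noncomputable section

section Auxiliary

open Set Metric

lemma sqAbsSubConj (a b : ℂ) :
    ‖a - (starRingEnd ℂ) b‖ ^ 2 = ‖a - b‖ ^ 2 + 4 * a.im * b.im := by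
  rw [Complex.sq_norm, Complex.sq_norm]
  simp only [Complex.normSq_apply, Complex.sub_re, Complex.sub_im, Complex.conj_re,
    Complex.conj_im]
  ring

lemma neOfImPos {u : ℂ} (h : 0 < u.im) : u ≠ 0 := fun h0 => by simp [h0] at h

lemma absDivLtOne {a b : ℂ} (ha : 0 < a.im) (hb : 0 < b.im) :
    ‖(a - b) / (a - (starRingEnd ℂ) b)‖ < 1 := by
  have hd : a - (starRingEnd ℂ) b ≠ 0 := by
    apply neOfImPos; simp only [Complex.sub_im, Complex.conj_im]; linarith
  have hd' : 0 < ‖a - (starRingEnd ℂ) b‖ := by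
    simpa [norm_pos_iff] using hd
  rw [norm_div, div_lt_one hd']
  have h := sqAbsSubConj a b
  nlinarith [norm_nonneg (a - b), mul_pos ha hb]

lemma mobiusIm {w : ℂ} (hw : 0 < w.im) {ζ : ℂ} (hζ : ‖ζ‖ < 1) :
    0 < ((w - (starRingEnd ℂ) w * ζ) / (1 - ζ)).im := by
  have h1 : (1 : ℂ) - ζ ≠ 0 := by
    intro h; rw [sub_eq_zero] at h; rw [← h] at hζ; simp at hζ
  have hns : 0 < Complex.normSq (1 - ζ) := Complex.normSq_pos.mpr h1
  have key : ((w - (starRingEnd ℂ) w * ζ) / (1 - ζ)).im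
      = w.im * (1 - Complex.normSq ζ) / Complex.normSq (1 - ζ) := by
    rw [Complex.div_im]
    field_simp
    simp only [Complex.normSq_apply, Complex.sub_re, Complex.sub_im, Complex.mul_re,
      Complex.mul_im, Complex.conj_re, Complex.conj_im, Complex.one_re, Complex.one_im]
    ring
  rw [key]
  have : Complex.normSq ζ < 1 := by
    have := Complex.sq_norm ζ
    nlinarith [norm_nonneg ζ]
  exact div_pos (mul_pos hw (by linarith)) hns

lemma mobiusEval {z w : ℂ} (hz : 0 < z.im) (hw : 0 < w.im) :
    (w - (starRingEnd ℂ) w * ((z - w) / (z - (starRingEnd ℂ) w))) /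
      (1 - (z - w) / (z - (starRingEnd ℂ) w)) = z := by
  have hd : z - (starRingEnd ℂ) w ≠ 0 := by
    apply neOfImPos; simp only [Complex.sub_im, Complex.conj_im]; linarith
  have hwc : w - (starRingEnd ℂ) w ≠ 0 := by
    apply neOfImPos; simp only [Complex.sub_im, Complex.conj_im]; linarith
  have h1 : (1 : ℂ) - (z - w) / (z - (starRingEnd ℂ) w) ≠ 0 := by
    rw [sub_ne_zero]
    intro h
    apply hwc
    have := (div_eq_one_iff_eq hd).mp h.symm
    linear_combination -this
  rw [div_eq_iff h1]
  field_simp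
  ring

/-- The Schwarz-Pick type inequality for holomorphic self-maps of the upper half plane. -/
lemma schwarzPick {v : ℂ → ℂ} (hv : DifferentiableOn ℂ v {z : ℂ | 0 < z.im})
    (him : ∀ z : ℂ, 0 < z.im → 0 < (v z).im) {z w : ℂ} (hz : 0 < z.im) (hw : 0 < w.im) :
    ‖v z - v w‖ ^ 2 * (z.im * w.im) ≤
      ‖z - w‖ ^ 2 * ((v z).im * (v w).im) := by
  set M : ℂ → ℂ := fun ζ => (w - (starRingEnd ℂ) w * ζ) / (1 - ζ) with hM
  set g : ℂ → ℂ := fun ζ => (v (M ζ) - v w) / (v (M ζ) - (starRingEnd ℂ) (v w)) with hg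
  have hM0 : M 0 = w := by simp [hM]
  have hMim : ∀ ζ ∈ ball (0:ℂ) 1, 0 < (M ζ).im := fun ζ hζ =>
    mobiusIm hw (by simpa [Complex.dist_eq] using (mem_ball.mp hζ))
  have hg0 : g 0 = 0 := by simp [hg, hM0]
  have hmaps : MapsTo g (ball (0:ℂ) 1) (ball (0:ℂ) 1) := by
    intro ζ hζ
    have h1 := him _ (hMim ζ hζ)
    have := absDivLtOne h1 (him w hw)
    simpa [hg, Complex.dist_eq] using this
  have hMdiff : DifferentiableOn ℂ M (ball (0:ℂ) 1) := by
    apply DifferentiableOn.div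
    · exact (differentiable_const _).differentiableOn.sub
        ((differentiable_const _).mul differentiable_id).differentiableOn
    · exact ((differentiable_const _).sub differentiable_id).differentiableOn
    · intro ζ hζ
      intro h; rw [sub_eq_zero] at h
      have : ‖ζ‖ < 1 := by simpa [Complex.dist_eq] using (mem_ball.mp hζ)
      rw [← h] at this; simp at this
  have hcomp : DifferentiableOn ℂ (fun ζ => v (M ζ)) (ball (0:ℂ) 1) :=
    hv.comp hMdiff fun ζ hζ => hMim ζ hζ
  have hgdiff : DifferentiableOn ℂ g (ball (0:ℂ) 1) := by
    apply DifferentiableOn.div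
    · exact hcomp.sub (differentiable_const _).differentiableOn
    · exact hcomp.sub (differentiable_const _).differentiableOn
    · intro ζ hζ
      apply neOfImPos
      simp only [Complex.sub_im, Complex.conj_im]
      have := him _ (hMim ζ hζ); have := him w hw; linarith
  set ζ₀ : ℂ := (z - w) / (z - (starRingEnd ℂ) w) with hζ₀def
  have hζ₀ : ζ₀ ∈ ball (0:ℂ) 1 := by
    simp only [mem_ball, Complex.dist_eq, sub_zero]
    exact absDivLtOne hz hw
  have hMζ₀ : M ζ₀ = z := mobiusEval hz hw
  have key := Complex.dist_le_dist_of_mapsTo_ball hgdiff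
    (by rw [hg0]; exact hmaps.mono_right ball_subset_closedBall) hζ₀
  rw [hg0] at key
  rw [Complex.dist_eq, Complex.dist_eq, sub_zero, sub_zero, hg] at key
  simp only [hMζ₀] at key
  have hd1 : 0 < ‖v z - (starRingEnd ℂ) (v w)‖ := by
    rw [norm_pos_iff]
    apply neOfImPos
    simp only [Complex.sub_im, Complex.conj_im]
    have := him z hz; have := him w hw; linarith
  have hd2 : 0 < ‖z - (starRingEnd ℂ) w‖ := by
    rw [norm_pos_iff]
    apply neOfImPos
    simp only [Complex.sub_im, Complex.conj_im]; linarith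
  rw [hζ₀def, norm_div, norm_div, div_le_div_iff₀ hd1 hd2] at key
  have hsq : (‖v z - v w‖ * ‖z - (starRingEnd ℂ) w‖) ^ 2 ≤
      (‖z - w‖ * ‖v z - (starRingEnd ℂ) (v w)‖) ^ 2 := by
    apply pow_le_pow_left₀ (by positivity) key
  rw [mul_pow, mul_pow, sqAbsSubConj z w, sqAbsSubConj (v z) (v w)] at hsq
  nlinarith [hsq]

/-- A Nevanlinna function with nonvanishing values satisfying (1₀) has strictly positive
imaginary part on the upper half plane. -/
lemma imPosOfCondOne {n : ℂ → ℂ} (hanal : AnalyticOn ℂ n {z : ℂ | z.im ≠ 0})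
    (hne : ∀ z : ℂ, z.im ≠ 0 → n z ≠ 0) (hpos : ∀ z : ℂ, 0 < z.im → 0 ≤ (n z).im)
    {s₀ : ℝ}
    (hlim : Tendsto (fun y : ℝ => (Complex.I * y) * n (Complex.I * y)) atTop
      (nhds (-(s₀ : ℂ)))) :
    ∀ z : ℂ, 0 < z.im → 0 < (n z).im := by
  set U : Set ℂ := {z : ℂ | 0 < z.im} with hU
  have hUopen : IsOpen U := isOpen_lt continuous_const Complex.continuous_im
  have hUsub : U ⊆ {z : ℂ | z.im ≠ 0} := fun z hz => ne_of_gt hz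
  have hA : AnalyticOnNhd ℂ n U :=
    (hUopen.analyticOn_iff_analyticOnNhd).mp (hanal.mono hUsub)
  have hconn : IsPreconnected U := (convex_halfSpace_im_gt 0).isPreconnected
  rcases hA.is_constant_or_isOpen hconn with ⟨c, hc⟩ | hopen
  · exfalso
    have hIU : Complex.I ∈ U := by simp [hU]
    have hc0 : c ≠ 0 := by
      rw [← hc Complex.I hIU]
      exact hne Complex.I (by simp)
    have habs : Tendsto (fun y : ℝ => ‖(Complex.I * y) * n (Complex.I * y)‖)
        atTop atTop := by
      have hcongr : ∀ᶠ y : ℝ in atTop,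
          ‖c‖ * y = ‖(Complex.I * y) * n (Complex.I * y)‖ := by
        filter_upwards [eventually_gt_atTop 0] with y hy
        have hyU : Complex.I * (y : ℂ) ∈ U := by simp [hU, hy]
        rw [hc _ hyU, norm_mul, norm_mul, Complex.norm_I, Complex.norm_real, Real.norm_eq_abs,
          abs_of_pos hy]
        ring
      refine Tendsto.congr' hcongr ?_
      exact (tendsto_const_mul_atTop_of_pos (norm_pos_iff.mpr hc0)).mpr tendsto_id
    have hnorm : Tendsto (fun y : ℝ => ‖(Complex.I * y) * n (Complex.I * y)‖)
        atTop (nhds (‖-(s₀ : ℂ)‖)) := (continuous_norm.tendsto _).comp hlim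
    exact not_tendsto_nhds_of_tendsto_atTop habs _ hnorm
  · intro z hz
    rcases lt_or_eq_of_le (hpos z hz) with h | h
    · exact h
    exfalso
    have hzU : z ∈ U := hz
    have hio : IsOpen (n '' U) := hopen U subset_rfl hUopen
    have hmem : n z ∈ n '' U := ⟨z, hzU, rfl⟩
    rcases Metric.isOpen_iff.mp hio _ hmem with ⟨ε, hε, hball⟩
    have hpmem : n z - (ε/2) * Complex.I ∈ ball (n z) ε := by
      simp only [mem_ball, Complex.dist_eq]
      rw [sub_sub_cancel_left, norm_neg, norm_mul, Complex.norm_I, norm_div,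
        Complex.norm_real, Real.norm_eq_abs, Complex.norm_ofNat]
      rw [abs_of_pos hε]; linarith
    rcases hball hpmem with ⟨z', hz'U, hz'⟩
    have : 0 ≤ (n z').im := hpos z' hz'U
    rw [hz'] at this
    simp only [Complex.sub_im, Complex.mul_im, Complex.I_im, Complex.I_re] at this
    rw [← h] at this
    simp at this
    nlinarith [this]

lemma ofRealInvTendsto : Tendsto (fun y : ℝ => ((y : ℂ))⁻¹) atTop (nhds 0) := by
  have h : Tendsto (fun y : ℝ => ((y⁻¹ : ℝ) : ℂ)) atTop (nhds ((0:ℝ):ℂ)) :=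
    (Complex.continuous_ofReal.tendsto _).comp tendsto_inv_atTop_zero
  simpa using h

lemma constDivTendsto (a : ℂ) : Tendsto (fun y : ℝ => a / (y : ℂ)) atTop (nhds 0) := by
  simpa [div_eq_mul_inv] using (tendsto_const_nhds (x := a)).mul ofRealInvTendsto

lemma forwardVlim {n : ℂ → ℂ} (hne : ∀ z : ℂ, z.im ≠ 0 → n z ≠ 0) {s₀ : ℝ} (hs₀ : 0 < s₀)
    (hlim : Tendsto (fun y : ℝ => (Complex.I * y) * n (Complex.I * y)) atTop
      (nhds (-(s₀ : ℂ)))) :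
    Tendsto (fun y : ℝ => (-(s₀ : ℂ) / n (Complex.I * y)) / y) atTop (nhds Complex.I) := by
  have hs : (-(s₀ : ℂ)) ≠ 0 := neg_ne_zero.mpr (Complex.ofReal_ne_zero.mpr hs₀.ne')
  have h1 : Tendsto (fun y : ℝ => (-(s₀ : ℂ) * Complex.I) / ((Complex.I * y) * n (Complex.I * y)))
      atTop (nhds ((-(s₀ : ℂ) * Complex.I) / (-(s₀ : ℂ)))) :=
    tendsto_const_nhds.div hlim hs
  have hval : (-(s₀ : ℂ) * Complex.I) / (-(s₀ : ℂ)) = Complex.I := by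
    rw [mul_comm, mul_div_assoc, div_self hs, mul_one]
  rw [hval] at h1
  refine Tendsto.congr' ?_ h1
  filter_upwards [eventually_gt_atTop 0] with y hy
  have hyne : (y : ℂ) ≠ 0 := Complex.ofReal_ne_zero.mpr hy.ne'
  have hn : n (Complex.I * y) ≠ 0 := hne _ (by simp [hy.ne'])
  field_simp

lemma negDivIm {s₀ : ℝ} (w : ℂ) : ((-(s₀:ℂ)) / w).im = s₀ * w.im / Complex.normSq w := by
  rw [Complex.div_im]
  simp [Complex.neg_im, Complex.neg_re]
  ring

/-- Main inequality in forward direction: `z.im ≤ Im (-s₀ / n z)`. -/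
lemma forwardKey {n : ℂ → ℂ} (hdiff : DifferentiableOn ℂ n {z : ℂ | 0 < z.im})
    (hne : ∀ z : ℂ, z.im ≠ 0 → n z ≠ 0)
    (himpos : ∀ z : ℂ, 0 < z.im → 0 < (n z).im) {s₀ : ℝ} (hs₀ : 0 < s₀)
    (hvlim : Tendsto (fun y : ℝ => (-(s₀ : ℂ) / n (Complex.I * y)) / y) atTop
      (nhds Complex.I))
    {z : ℂ} (hz : 0 < z.im) : z.im ≤ ((-(s₀:ℂ)) / n z).im := by
  set v : ℂ → ℂ := fun u => -(s₀:ℂ) / n u with hv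
  have hvdiff : DifferentiableOn ℂ v {u : ℂ | 0 < u.im} :=
    (differentiable_const _).differentiableOn.div hdiff fun u hu => hne u (ne_of_gt hu)
  have hvim : ∀ u : ℂ, 0 < u.im → 0 < (v u).im := by
    intro u hu
    rw [hv]
    simp only
    rw [negDivIm]
    have h1 := himpos u hu
    have h2 : 0 < Complex.normSq (n u) := Complex.normSq_pos.mpr (hne u (ne_of_gt hu))
    positivity
  set F : ℝ → ℝ := fun y => ‖v z / y - v (Complex.I * y) / y‖ ^ 2 * z.im with hF
  set G : ℝ → ℝ := fun y =>
    ‖z / y - Complex.I‖ ^ 2 * ((v z).im * ((v (Complex.I * y)).im / y)) with hG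
  have hFlim : Tendsto F atTop (nhds (z.im)) := by
    have h1 : Tendsto (fun y : ℝ => v z / (y:ℂ) - v (Complex.I * y) / y) atTop
        (nhds (0 - Complex.I)) := (constDivTendsto (v z)).sub hvlim
    have h2 := ((continuous_norm.tendsto _).comp h1).pow 2
    have h3 := h2.mul_const z.im
    simpa using h3
  have hGlim : Tendsto G atTop (nhds ((v z).im)) := by
    have h1 : Tendsto (fun y : ℝ => z / (y:ℂ) - Complex.I) atTop (nhds (0 - Complex.I)) :=
      (constDivTendsto z).sub tendsto_const_nhds
    have h2 := ((continuous_norm.tendsto _).comp h1).pow 2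
    have h4 : Tendsto (fun y : ℝ => (v (Complex.I * y)).im / y) atTop (nhds 1) := by
      have h5 := (Complex.continuous_im.tendsto _).comp hvlim
      simp only [Function.comp_def, Complex.div_ofReal_im] at h5
      simpa using h5
    have h6 := h2.mul ((tendsto_const_nhds (x := (v z).im)).mul h4)
    simpa using h6
  have hle : ∀ᶠ y : ℝ in atTop, F y ≤ G y := by
    filter_upwards [eventually_gt_atTop 0] with y hy
    have hyim : (Complex.I * (y:ℂ)).im = y := by simp
    have key := schwarzPick hvdiff hvim hz (w := Complex.I * y) (by rw [hyim]; exact hy)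
    rw [hyim] at key
    have hyne : (y:ℂ) ≠ 0 := Complex.ofReal_ne_zero.mpr hy.ne'
    have e1 : ‖v z / y - v (Complex.I * y) / y‖
        = ‖v z - v (Complex.I * y)‖ / y := by
      rw [div_sub_div_same, norm_div, Complex.norm_real, Real.norm_eq_abs, abs_of_pos hy]
    have e2 : ‖z / y - Complex.I‖ = ‖z - Complex.I * y‖ / y := by
      rw [show z / (y:ℂ) - Complex.I = (z - Complex.I * y) / y by field_simp,
        norm_div, Complex.norm_real, Real.norm_eq_abs, abs_of_pos hy]
    have hFy : F y = (‖v z - v (Complex.I * y)‖ ^ 2 * (z.im * y)) / (y^2*y) := by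
      rw [hF]; simp only; rw [e1, eq_div_iff (by positivity : (0:ℝ) < y^2*y).ne']
      field_simp
      try ring
    have hGy : G y = (‖z - Complex.I * y‖ ^ 2 * ((v z).im * (v (Complex.I * y)).im)) / (y^2*y) := by
      rw [hG]; simp only; rw [e2, eq_div_iff (by positivity : (0:ℝ) < y^2*y).ne']
      field_simp
      try ring
    rw [hFy, hGy]
    gcongr
  exact le_of_tendsto_of_tendsto hFlim hGlim hle

end Auxiliary

/-- A Nevanlinna function: analytic on `ℂ ∖ ℝ`, symmetric with respect to conjugation,
and with non-negative imaginary part in the upper half plane. -/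
def IsNevanlinna (n : ℂ → ℂ) : Prop :=
  AnalyticOn ℂ n {z : ℂ | z.im ≠ 0} ∧
  (∀ z : ℂ, z.im ≠ 0 → n ((starRingEnd ℂ) z) = (starRingEnd ℂ) (n z)) ∧
  (∀ z : ℂ, 0 < z.im → 0 ≤ (n z).im)

/-- for `ñ(z) = -s₀/n(z) - z`, the function `n` is a Nevanlinna function
satisfying condition (1₀) (i.e. `(iy)·n(iy) → -s₀` as `y → ±∞`) if and only if `ñ` is a
Nevanlinna function with `ñ(iy)/y → 0` as `y → ±∞`. -/
theorem schur_type_transform_cond_one_zero (s₀ : ℝ) (hs₀ : 0 < s₀) (n : ℂ → ℂ)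
    (hanal : AnalyticOn ℂ n {z : ℂ | z.im ≠ 0})
    (hsym : ∀ z : ℂ, z.im ≠ 0 → n ((starRingEnd ℂ) z) = (starRingEnd ℂ) (n z))
    (hne : ∀ z : ℂ, z.im ≠ 0 → n z ≠ 0)
    (nt : ℂ → ℂ) (hnt : ∀ z : ℂ, nt z = -(s₀ : ℂ) / n z - z) :
    (IsNevanlinna n ∧
        Tendsto (fun y : ℝ => (Complex.I * y) * n (Complex.I * y))
          (atTop ⊔ atBot) (nhds (-(s₀ : ℂ)))) ↔
      (IsNevanlinna nt ∧
        Tendsto (fun y : ℝ => nt (Complex.I * y) / (y : ℂ))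
          (atTop ⊔ atBot) (nhds 0)) := by
  have hs0c : (s₀ : ℂ) ≠ 0 := Complex.ofReal_ne_zero.mpr hs₀.ne'
  have hsne : (-(s₀ : ℂ)) ≠ 0 := neg_ne_zero.mpr hs0c
  have hOpen : IsOpen {z : ℂ | z.im ≠ 0} := by
    have : {z : ℂ | z.im ≠ 0} = Complex.im ⁻¹' ({(0:ℝ)}ᶜ) := rfl
    rw [this]
    exact (isOpen_compl_singleton).preimage Complex.continuous_im
  have hANhd : AnalyticOnNhd ℂ n {z : ℂ | z.im ≠ 0} :=
    (hOpen.analyticOn_iff_analyticOnNhd).mp hanal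
  have hntfun : nt = fun z => -(s₀ : ℂ) / n z - z := funext hnt
  have hntanal : AnalyticOn ℂ nt {z : ℂ | z.im ≠ 0} := by
    rw [hntfun]
    apply AnalyticOnNhd.analyticOn
    exact (analyticOnNhd_const.div hANhd hne).sub analyticOnNhd_id
  have hntsym : ∀ z : ℂ, z.im ≠ 0 → nt ((starRingEnd ℂ) z) = (starRingEnd ℂ) (nt z) := by
    intro z hz
    have hz' : ((starRingEnd ℂ) z).im ≠ 0 := by
      simpa [Complex.conj_im] using neg_ne_zero.mpr hz
    rw [hnt, hnt, hsym z hz, map_sub, map_div₀, map_neg, Complex.conj_ofReal]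
  have hy0 : ∀ᶠ y : ℝ in atTop ⊔ atBot, y ≠ 0 := by
    rw [eventually_sup]
    exact ⟨(eventually_gt_atTop 0).mono fun y hy => hy.ne',
      (eventually_lt_atBot 0).mono fun y hy => hy.ne⟩
  constructor
  · rintro ⟨⟨-, -, hpos⟩, hlim⟩
    have hlimTop : Tendsto (fun y : ℝ => (Complex.I * y) * n (Complex.I * y)) atTop
        (nhds (-(s₀ : ℂ))) := hlim.mono_left le_sup_left
    have himpos := imPosOfCondOne hanal hne hpos hlimTop
    have hvlim := forwardVlim hne hs₀ hlimTop
    have hdiff : DifferentiableOn ℂ n {z : ℂ | 0 < z.im} :=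
      (hANhd.mono fun z hz => ne_of_gt hz).differentiableOn
    refine ⟨⟨hntanal, hntsym, ?_⟩, ?_⟩
    · intro z hz
      have hk := forwardKey hdiff hne himpos hs₀ hvlim hz
      rw [hnt, Complex.sub_im]
      linarith
    · -- nt (iy) / y → 0
      have h2 : Tendsto (fun y : ℝ =>
          Complex.I * ((-(s₀:ℂ)) / ((Complex.I * y) * n (Complex.I * y)) - 1))
          (atTop ⊔ atBot) (nhds (Complex.I * ((-(s₀:ℂ)) / (-(s₀:ℂ)) - 1))) :=
        tendsto_const_nhds.mul ((tendsto_const_nhds.div hlim hsne).sub tendsto_const_nhds)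
      rw [div_self hsne] at h2
      simp only [sub_self, mul_zero] at h2
      refine Tendsto.congr' ?_ h2
      filter_upwards [hy0] with y hy
      have hyne : (y : ℂ) ≠ 0 := Complex.ofReal_ne_zero.mpr hy
      have hn : n (Complex.I * y) ≠ 0 := hne _ (by simp [hy])
      rw [hnt]
      field_simp
  · rintro ⟨⟨-, -, hntpos⟩, hntlim⟩
    have hnim : ∀ z : ℂ, 0 < z.im → 0 ≤ (n z).im := by
      intro z hz
      have hn : n z ≠ 0 := hne z (ne_of_gt hz)
      have hsum : nt z + z = -(s₀ : ℂ) / n z := by rw [hnt]; ring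
      have hsumim : 0 < (nt z + z).im := by
        rw [Complex.add_im]
        have := hntpos z hz
        linarith
      have hnz : n z = -(s₀ : ℂ) / (nt z + z) := by
        rw [hsum]
        field_simp
      rw [hnz, negDivIm]
      have h2 : 0 < Complex.normSq (nt z + z) := Complex.normSq_pos.mpr (neOfImPos hsumim)
      positivity
    refine ⟨⟨hanal, hsym, hnim⟩, ?_⟩
    have hden : Tendsto (fun y : ℝ => nt (Complex.I * y) / (y:ℂ) * Complex.I⁻¹ + 1)
        (atTop ⊔ atBot) (nhds (0 * Complex.I⁻¹ + 1)) :=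
      (hntlim.mul tendsto_const_nhds).add tendsto_const_nhds
    rw [zero_mul, zero_add] at hden
    have h3 : Tendsto (fun y : ℝ =>
        (-(s₀:ℂ)) / (nt (Complex.I * y) / (y:ℂ) * Complex.I⁻¹ + 1))
        (atTop ⊔ atBot) (nhds ((-(s₀:ℂ)) / 1)) :=
      tendsto_const_nhds.div hden one_ne_zero
    rw [div_one] at h3
    refine Tendsto.congr' ?_ h3
    filter_upwards [hy0] with y hy
    have hyne : (y : ℂ) ≠ 0 := Complex.ofReal_ne_zero.mpr hy
    have hn : n (Complex.I * y) ≠ 0 := hne _ (by simp [hy])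
    have hd : nt (Complex.I * y) / (y:ℂ) * Complex.I⁻¹ + 1
        = -(s₀:ℂ) / ((Complex.I * y) * n (Complex.I * y)) := by
      rw [hnt]
      field_simp
      ring
    rw [hd]
    have hb : (Complex.I * y) * n (Complex.I * y) ≠ 0 :=
      mul_ne_zero (mul_ne_zero Complex.I_ne_zero hyne) hn
    field_simp
end
end

section
/- Let s₀ > 0 and let n be analytic on ℂ∖ℝ with n(conj z) = conj(n(z)) and n(z) ≠ 0 for all nonreal z, and define ñ(z) = −s₀/n(z) − z. Then n is a Nevanlinna function such that the function y ↦ (iy)²·(n(iy) + s₀/(iy)) is bounded for |y| sufficiently large (condition (2₀)) if and only if ñ is a Nevanlinna function such that y ↦ ñ(iy) is bounded for |y| sufficiently large. -/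
open Filter Complex Metric Set

noncomputable section

/- ### Auxiliary lemmas -/

lemma normSq_mobius_diff (τ a : ℂ) :
    Complex.normSq (τ - (starRingEnd ℂ) a) - Complex.normSq (τ - a) = 4 * τ.im * a.im := by
  simp [Complex.normSq_apply, Complex.sub_re, Complex.sub_im]
  ring

lemma abs_mobius_lt {τ a : ℂ} (hτ : 0 < τ.im) (ha : 0 < a.im) :
    ‖τ - a‖ < ‖τ - (starRingEnd ℂ) a‖ := by
  have h := normSq_mobius_diff τ a
  have h2 : ‖τ - a‖ ^ 2 < ‖τ - (starRingEnd ℂ) a‖ ^ 2 := by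
    rw [Complex.sq_norm, Complex.sq_norm]
    nlinarith
  exact lt_of_pow_lt_pow_left₀ 2 (norm_nonneg _) h2

lemma sub_conj_ne_zero {τ a : ℂ} (hτ : 0 < τ.im) (ha : 0 < a.im) :
    τ - (starRingEnd ℂ) a ≠ 0 := by
  intro h
  have h2 : (τ - (starRingEnd ℂ) a).im = τ.im + a.im := by simp
  rw [h] at h2
  simp at h2
  linarith

lemma psi_im {w ζ : ℂ} (hw : 0 < w.im) (hζ : ‖ζ‖ < 1) :
    0 < ((w - (starRingEnd ℂ) w * ζ) / (1 - ζ)).im := by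
  have hd : (1 - ζ) ≠ 0 := by
    intro h
    have : ζ = 1 := by linear_combination -h
    rw [this] at hζ; simp at hζ
  have hnorm : Complex.normSq ζ < 1 := by
    rw [← Complex.sq_norm]
    nlinarith [norm_nonneg ζ]
  have key : (w - (starRingEnd ℂ) w * ζ).im * (1 - ζ).re -
      (w - (starRingEnd ℂ) w * ζ).re * (1 - ζ).im = (1 - Complex.normSq ζ) * w.im := by
    simp [Complex.sub_re, Complex.sub_im, Complex.mul_re, Complex.mul_im, Complex.normSq_apply]
    ring
  have hN : 0 < Complex.normSq (1 - ζ) := Complex.normSq_pos.2 hd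
  rw [Complex.div_im, div_sub_div_same]
  rw [key]
  exact div_pos (mul_pos (by linarith) hw) hN
lemma schwarz_pick {q : ℂ → ℂ} (hq : DifferentiableOn ℂ q {z : ℂ | 0 < z.im})
    (him : ∀ z : ℂ, 0 < z.im → 0 < (q z).im) {z w : ℂ} (hz : 0 < z.im) (hw : 0 < w.im) :
    ‖q z - q w‖ * ‖z - (starRingEnd ℂ) w‖ ≤ ‖q z - (starRingEnd ℂ) (q w)‖ * ‖z - w‖ := by
  set ψ : ℂ → ℂ := fun ζ => (w - (starRingEnd ℂ) w * ζ) / (1 - ζ) with hψdef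
  set g : ℂ → ℂ := fun ζ => (q (ψ ζ) - q w) / (q (ψ ζ) - (starRingEnd ℂ) (q w)) with hgdef
  have hball : ∀ ζ ∈ ball (0:ℂ) 1, ‖ζ‖ < 1 := by
    intro ζ hζ; simpa [mem_ball_zero_iff] using hζ
  have hψ_im : ∀ ζ ∈ ball (0:ℂ) 1, 0 < (ψ ζ).im := fun ζ hζ => psi_im hw (hball ζ hζ)
  have hden2 : ∀ ζ ∈ ball (0:ℂ) 1, q (ψ ζ) - (starRingEnd ℂ) (q w) ≠ 0 := fun ζ hζ =>
    sub_conj_ne_zero (him _ (hψ_im ζ hζ)) (him _ hw)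
  -- differentiability of ψ on the ball
  have hψdiff : DifferentiableOn ℂ ψ (ball (0:ℂ) 1) := by
    apply DifferentiableOn.div
    · exact (differentiableOn_const _).sub ((differentiableOn_const _).mul differentiableOn_id)
    · exact (differentiableOn_const _).sub differentiableOn_id
    · intro ζ hζ
      intro h
      have h1 : ζ = 1 := by linear_combination -h
      have h2 := hball ζ hζ; rw [h1] at h2; simp at h2
  have hqψ : DifferentiableOn ℂ (q ∘ ψ) (ball (0:ℂ) 1) :=
    hq.comp hψdiff (fun ζ hζ => hψ_im ζ hζ)
  have hgdiff : DifferentiableOn ℂ g (ball (0:ℂ) 1) := by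
    apply DifferentiableOn.div
    · exact hqψ.sub (differentiableOn_const _)
    · exact hqψ.sub (differentiableOn_const _)
    · exact hden2
  have hgmaps : MapsTo g (ball (0:ℂ) 1) (ball (0:ℂ) 1) := by
    intro ζ hζ
    rw [mem_ball_zero_iff]
    have h1 := abs_mobius_lt (him _ (hψ_im ζ hζ)) (him _ hw)
    rw [hgdef]
    simp only [norm_div]
    rw [div_lt_one (norm_pos_iff.2 (hden2 ζ hζ))]
    exact h1
  have hψ0 : ψ 0 = w := by simp [hψdef]
  have hg0 : g 0 = 0 := by simp [hgdef, hψ0]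
  have hzw : z - (starRingEnd ℂ) w ≠ 0 := sub_conj_ne_zero hz hw
  set ζ₀ : ℂ := (z - w) / (z - (starRingEnd ℂ) w) with hζ₀def
  have hζ₀ : ‖ζ₀‖ < 1 := by
    rw [hζ₀def, norm_div, div_lt_one (norm_pos_iff.2 hzw)]
    exact abs_mobius_lt hz hw
  have hwconj : w - (starRingEnd ℂ) w ≠ 0 := by
    intro h
    have h2 : (w - (starRingEnd ℂ) w).im = 2 * w.im := by simp; ring
    rw [h] at h2; simp at h2; linarith
  have hψζ₀ : ψ ζ₀ = z := by
    rw [hψdef, hζ₀def]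
    have hden : 1 - (z - w) / (z - (starRingEnd ℂ) w) ≠ 0 := by
      rw [sub_ne_zero]
      intro h
      apply hwconj
      field_simp at h
      linear_combination h
    field_simp
    linear_combination z * mul_inv_cancel₀ hwconj
  have := Complex.norm_le_norm_of_mapsTo_ball hgdiff (hgmaps.mono_right ball_subset_closedBall) hg0
    hζ₀
  rw [hgdef] at this
  simp only [hψζ₀] at this
  rw [hζ₀def] at this
  rw [norm_div, norm_div] at this
  rw [div_le_div_iff₀ (norm_pos_iff.2 (sub_conj_ne_zero (him z hz) (him w hw)))
    (norm_pos_iff.2 hzw)] at this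
  simpa [mul_comm] using this
lemma normSq_add_I_mul (a : ℂ) (y : ℝ) :
    Complex.normSq (a + I * y) = Complex.normSq a + 2 * y * a.im + y ^ 2 := by
  simp [Complex.normSq_apply, Complex.add_re, Complex.add_im, Complex.mul_re, Complex.mul_im]
  ring

lemma normSq_sub_I_mul (a : ℂ) (y : ℝ) :
    Complex.normSq (a - I * y) = Complex.normSq a - 2 * y * a.im + y ^ 2 := by
  simp [Complex.normSq_apply, Complex.sub_re, Complex.sub_im, Complex.mul_re, Complex.mul_im]
  ring

lemma aux1 (A B M β α v : ℝ) (hA0 : 0 ≤ A) (hBM : B ≤ M^2) (hα2 : α ≤ M)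
    (hγ1 : -M ≤ 2*v - α) (hβ0 : 0 < β) :
    (B - A) + 4*β*(α - (2*v-α)) ≤ M^2 + 8*M*β := by nlinarith

lemma aux2 (A B M Nz β α v : ℝ) (hNz0 : 0 ≤ Nz) (hα2 : α ≤ M) (hγ2 : 2*v - α ≤ M)
    (hA0 : 0 ≤ A) (hB0 : 0 ≤ B) (hβ0 : 0 < β) :
    (α+(2*v-α))*Nz - β*(A+B) ≤ 2*M*Nz := by nlinarith

lemma aux3 (A B M Nz : ℝ) (hBM : B ≤ M^2) (hA0 : 0 ≤ A) (hNz0 : 0 ≤ Nz) :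
    (B - A)*Nz ≤ M^2*Nz := by nlinarith

lemma aux4 (M Nz y : ℝ) (hy1 : 1 ≤ y) (hM0 : 0 ≤ M) (hNz0 : 0 ≤ Nz) :
    2*y*(2*M*Nz) ≤ 4*M*Nz*y^2 := by
  have hyy : y ≤ y^2 := by nlinarith
  calc 2*y*(2*M*Nz) = 4*M*Nz*y := by ring
  _ ≤ 4*M*Nz*y^2 := by
    apply mul_le_mul_of_nonneg_left hyy
    positivity

lemma aux4b (A B M Nz y : ℝ) (hy1 : 1 ≤ y) (hBM : B ≤ M^2) (hA0 : 0 ≤ A) (hNz0 : 0 ≤ Nz) :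
    (B - A)*Nz ≤ M^2*Nz*y^2 := by
  have h1 : (B - A)*Nz ≤ M^2*Nz := aux3 A B M Nz hBM hA0 hNz0
  have h2 : (1:ℝ) ≤ y^2 := by nlinarith
  have h3 : M^2*Nz ≤ M^2*Nz*y^2 := le_mul_of_one_le_right (by positivity) h2
  linarith

lemma aux5 (δ K y E : ℝ) (h4 : 4*δ*y^3 ≤ E) (hE : E ≤ K*y^2) (hyK : K < 4*δ*y)
    (hy0 : 0 < y) : False := by nlinarith [mul_pos (sub_pos.2 hyK) (mul_pos hy0 hy0)]

lemma julia {q : ℂ → ℂ} (hq : DifferentiableOn ℂ q {z : ℂ | 0 < z.im})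
    (him : ∀ z : ℂ, 0 < z.im → 0 < (q z).im)
    {C Y : ℝ} (hbd : ∀ y : ℝ, Y ≤ y → ‖q (I * y) - I * y‖ ≤ C)
    {z : ℂ} (hz : 0 < z.im) : z.im ≤ (q z).im := by
  by_contra hlt
  push_neg at hlt
  have hC : 0 ≤ C := le_trans (norm_nonneg _) (hbd (max Y 1) (le_max_left _ _))
  set β : ℝ := z.im with hβ
  set v : ℝ := (q z).im with hv
  set V : ℝ := ‖q z‖ with hV
  set Nz : ℝ := Complex.normSq z with hNz
  set M : ℝ := V + C + 1 with hM
  have hM1 : 1 ≤ M := by have := norm_nonneg (q z); simp [hM]; linarith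
  have hM0 : 0 ≤ M := by linarith
  set δ : ℝ := β - v with hδ
  have hδ0 : 0 < δ := by simp [hδ]; linarith
  set K : ℝ := M^2 + 8*M*β + 4*M*Nz + M^2*Nz with hK
  set y : ℝ := max (max Y 1) (K/(4*δ)) + 1 with hy
  have hz' : 0 < z.im := by rw [← hβ]; exact hz
  clear_value β v V Nz M δ K y
  have hyY : Y ≤ y := by
    have h1 := le_max_left Y 1
    have h2 := le_max_left (max Y 1) (K/(4*δ)); rw [hy]; linarith
  have hy1 : 1 ≤ y := by
    have h1 := le_max_right Y 1
    have h2 := le_max_left (max Y 1) (K/(4*δ)); rw [hy]; linarith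
  have hy0 : 0 < y := by linarith
  have hyK : K < 4*δ*y := by
    have h1 : K/(4*δ) < y := by
      have h2 := le_max_right (max Y 1) (K/(4*δ)); rw [hy]; linarith
    calc K = (K/(4*δ))*(4*δ) := by field_simp
    _ < y * (4*δ) := by apply mul_lt_mul_of_pos_right h1; linarith
    _ = 4*δ*y := by ring
  have hiy : 0 < (I * (y:ℂ)).im := by simpa using hy0
  have sp := schwarz_pick hq him hz' hiy
  set r : ℂ := q (I * y) - I * y with hr
  have hrC : ‖r‖ ≤ C := hbd y hyY
  set a : ℂ := q z - r with ha
  set b : ℂ := q z - (starRingEnd ℂ) r with hb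
  clear_value r a b
  have h1 : q z - q (I*(y:ℂ)) = a - I*(y:ℂ) := by rw [ha, hr]; ring
  have h2 : z - (starRingEnd ℂ) (I*(y:ℂ)) = z + I*(y:ℂ) := by
    rw [map_mul, Complex.conj_I, Complex.conj_ofReal]; ring
  have h3 : q z - (starRingEnd ℂ) (q (I*(y:ℂ))) = b + I*(y:ℂ) := by
    have hq2 : (starRingEnd ℂ) (q (I*(y:ℂ))) = (starRingEnd ℂ) r - I*(y:ℂ) := by
      rw [show q (I*(y:ℂ)) = I*(y:ℂ) + r by rw [hr]; ring, map_add, map_mul,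
        Complex.conj_I, Complex.conj_ofReal]
      ring
    rw [hq2, hb]; ring
  rw [h1, h2, h3] at sp
  have hsq := pow_le_pow_left₀ (by positivity) sp 2
  have conv : ∀ u u' : ℂ, (‖u‖*‖u'‖)^2 = Complex.normSq u * Complex.normSq u' := fun u u' => by
    rw [mul_pow, Complex.sq_norm, Complex.sq_norm]
  rw [conv, conv, normSq_sub_I_mul, normSq_add_I_mul, normSq_add_I_mul, normSq_sub_I_mul] at hsq
  set A : ℝ := Complex.normSq a with hA
  set B : ℝ := Complex.normSq b with hB
  set α : ℝ := a.im with hα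
  set γ : ℝ := b.im with hγ
  clear_value A B α γ
  -- basic bounds
  have hrim : |r.im| ≤ C := le_trans (Complex.abs_im_le_norm r) hrC
  have hna : ‖a‖ ≤ M := by
    calc ‖a‖ = ‖q z - r‖ := by rw [ha]
    _ ≤ ‖q z‖ + ‖r‖ := norm_sub_le _ _
    _ ≤ V + C := by rw [hV]; linarith
    _ ≤ M := by rw [hM]; linarith
  have hnb : ‖b‖ ≤ M := by
    calc ‖b‖ = ‖q z - (starRingEnd ℂ) r‖ := by rw [hb]
    _ ≤ ‖q z‖ + ‖(starRingEnd ℂ) r‖ := norm_sub_le _ _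
    _ ≤ V + C := by rw [hV, RCLike.norm_conj]; linarith
    _ ≤ M := by rw [hM]; linarith
  have hAM : A ≤ M^2 := by
    rw [hA, ← Complex.sq_norm]
    exact pow_le_pow_left₀ (norm_nonneg a) hna 2
  have hBM : B ≤ M^2 := by
    rw [hB, ← Complex.sq_norm]
    exact pow_le_pow_left₀ (norm_nonneg b) hnb 2
  have hαM : |α| ≤ M := by
    have h := Complex.abs_im_le_norm a
    rw [← hα] at h; linarith
  have hγM : |γ| ≤ M := by
    have h := Complex.abs_im_le_norm b
    rw [← hγ] at h; linarith
  have hA0 : 0 ≤ A := hA ▸ Complex.normSq_nonneg a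
  have hB0 : 0 ≤ B := hB ▸ Complex.normSq_nonneg b
  have hNz0 : 0 ≤ Nz := hNz ▸ Complex.normSq_nonneg z
  have hβ0 : 0 < β := hz
  have hsum : α + γ = 2*v := by
    rw [hα, hγ, ha, hb, hv]
    simp [Complex.sub_im, Complex.conj_im]
    ring
  obtain ⟨hα1, hα2⟩ := abs_le.mp hαM
  obtain ⟨hγ1, hγ2⟩ := abs_le.mp hγM
  -- the key inequality
  have hγeq : γ = 2*v - α := by linarith
  rw [hγeq] at hsq
  rw [← hNz, ← hβ] at hsq
  have hkey : (B + 2*y*(2*v - α) + y^2)*(Nz - 2*y*β + y^2) - (A - 2*y*α + y^2)*(Nz + 2*y*β + y^2)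
      = -4*(β - v)*y^3 + (y^2*((B - A) + 4*β*(α - (2*v-α))) + 2*y*((α+(2*v-α))*Nz - β*(A+B))
        + (B - A)*Nz) := by ring
  have h4 : 4*δ*y^3 ≤ y^2*((B - A) + 4*β*(α - (2*v-α))) + 2*y*((α+(2*v-α))*Nz - β*(A+B))
      + (B - A)*Nz := by
    rw [hδ]
    linarith [hsq, hkey]
  clear hsq hkey sp conv h1 h2 h3 hbd hq him
  -- bound the error terms
  have hγ1' : -M ≤ 2*v - α := by linarith
  have hγ2' : 2*v - α ≤ M := by linarith
  have hterm1 := aux1 A B M β α v hA0 hBM hα2 hγ1' hβ0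
  have hterm2 := aux2 A B M Nz β α v hNz0 hα2 hγ2' hA0 hB0 hβ0
  have hE : y^2*((B - A) + 4*β*(α - (2*v-α))) + 2*y*((α+(2*v-α))*Nz - β*(A+B))
      + (B - A)*Nz ≤ K*y^2 := by
    have e1 : y^2*((B - A) + 4*β*(α - (2*v-α))) ≤ y^2*(M^2 + 8*M*β) :=
      mul_le_mul_of_nonneg_left hterm1 (sq_nonneg y)
    have e2 : 2*y*((α+(2*v-α))*Nz - β*(A+B)) ≤ 2*y*(2*M*Nz) :=
      mul_le_mul_of_nonneg_left hterm2 (by linarith)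
    have e3 := aux4 M Nz y hy1 hM0 hNz0
    have e4 := aux4b A B M Nz y hy1 hBM hA0 hNz0
    have e5 : y^2*(M^2+8*M*β) + 4*M*Nz*y^2 + M^2*Nz*y^2 = K*y^2 := by rw [hK]; ring
    linarith
  exact aux5 δ K y _ h4 hE hyK hy0
lemma im_pos_or_const {n : ℂ → ℂ} (hanal : AnalyticOn ℂ n {z : ℂ | z.im ≠ 0})
    (hpos : ∀ z : ℂ, 0 < z.im → 0 ≤ (n z).im) :
    (∀ z : ℂ, 0 < z.im → 0 < (n z).im) ∨ (∃ c : ℝ, ∀ z : ℂ, 0 < z.im → n z = (c : ℂ)) := by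
  set U : Set ℂ := {z : ℂ | 0 < z.im} with hU
  have hU_open : IsOpen U := isOpen_lt continuous_const Complex.continuous_im
  have hUconn : IsPreconnected U := (convex_halfSpace_im_gt 0).isPreconnected
  have hsub : U ⊆ {z : ℂ | z.im ≠ 0} := fun z hz => ne_of_gt hz
  have hanalU : AnalyticOnNhd ℂ n U :=
    (hU_open.analyticOn_iff_analyticOnNhd).mp (hanal.mono hsub)
  by_cases hzero : ∃ z₀ ∈ U, (n z₀).im = 0
  · right
    obtain ⟨z₀, hz₀, him0⟩ := hzero
    have hdiffn : DifferentiableOn ℂ n U := hanalU.differentiableOn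
    have hdiff : DifferentiableOn ℂ (fun z => Complex.exp (I * n z)) U :=
      ((differentiableOn_const I).mul hdiffn).cexp
    have hmax : IsMaxOn (norm ∘ fun z => Complex.exp (I * n z)) U z₀ := by
      intro z hz
      simp only [Function.comp_apply, Complex.norm_exp, Set.mem_setOf_eq]
      have h1 : (I * n z).re = -(n z).im := by simp
      have h2 : (I * n z₀).re = -(n z₀).im := by simp
      rw [h1, h2, him0]
      exact Real.exp_le_exp.2 (by simpa using hpos z hz)
    have heq := eqOn_of_isPreconnected_of_isMaxOn_norm hUconn hU_open hdiff hz₀ hmax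
    have himz : ∀ z ∈ U, (n z).im = 0 := by
      intro z hz
      have h := heq hz
      simp only [Function.const_apply] at h
      have habs := congrArg norm h
      rw [Complex.norm_exp, Complex.norm_exp] at habs
      have h1 : (I * n z).re = -(n z).im := by simp
      have h2 : (I * n z₀).re = -(n z₀).im := by simp
      rw [h1, h2, him0] at habs
      have h3 := Real.exp_eq_exp.mp habs
      linarith
    rcases hanalU.is_constant_or_isOpen hUconn with ⟨c, hc⟩ | hopen
    · refine ⟨c.re, fun z hz => ?_⟩
      have hcz : n z = c := hc z hz
      have hcim : c.im = 0 := by rw [← hc z₀ hz₀]; exact him0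
      rw [hcz]
      exact Complex.ext (by simp) (by simp [hcim])
    · exfalso
      have hO : IsOpen (n '' U) := hopen U subset_rfl hU_open
      obtain ⟨ε, hε, hball⟩ := Metric.isOpen_iff.mp hO (n z₀) ⟨z₀, hz₀, rfl⟩
      have hmem : n z₀ + (ε/2) * I ∈ ball (n z₀) ε := by
        simp [dist_eq_norm]
        rw [abs_of_pos hε]
        linarith
      obtain ⟨z, hzU, hnz⟩ := hball hmem
      have h1 : (n z).im = 0 := himz z hzU
      have h2 : (n z₀ + (ε/2) * I).im = ε/2 := by simp [himz z₀ hz₀]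
      rw [hnz] at h1
      rw [h1] at h2
      linarith
  · left
    intro z hz
    push_neg at hzero
    exact lt_of_le_of_ne (hpos z hz) (Ne.symm (hzero z hz))
lemma nt_bound (s₀ : ℝ) (hs₀ : 0 < s₀) (n nt : ℂ → ℂ)
    (hnt : ∀ z : ℂ, nt z = -(s₀ : ℂ) / n z - z) (y : ℝ) (hy : y ≠ 0)
    (hnz : n (I * y) ≠ 0) (c : ℝ)
    (hb : ‖(I * (y:ℂ)) ^ 2 * (n (I * y) + (s₀ : ℂ) / (I * y))‖ ≤ c)
    (hybig : 2 * c ≤ s₀ * |y|) : ‖nt (I * (y:ℂ))‖ ≤ 2 * c / s₀ := by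
  set u : ℂ := I * (y:ℂ) with hu_def
  have hu : u ≠ 0 := mul_ne_zero I_ne_zero (Complex.ofReal_ne_zero.2 hy)
  set m : ℂ := u ^ 2 * (n u + (s₀:ℂ) / u) with hm_def
  have hyabs : (0:ℝ) < |y| := abs_pos.2 hy
  have hnu : ‖u‖ = |y| := by
    rw [hu_def, norm_mul, Complex.norm_I, one_mul, Complex.norm_real, Real.norm_eq_abs]
  have hid : nt u * (u ^ 2 * n u) = -u * m := by
    rw [hnt u, hm_def]; field_simp; ring
  have hid2 : u ^ 2 * n u = m - (s₀:ℂ) * u := by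
    rw [hm_def]; field_simp; ring
  have hmc : ‖m‖ ≤ c := hb
  have hlow : s₀ * |y| / 2 ≤ ‖u ^ 2 * n u‖ := by
    rw [hid2]
    have h1 : ‖(s₀:ℂ) * u‖ - ‖m‖ ≤ ‖(s₀:ℂ) * u - m‖ := norm_sub_norm_le _ _
    rw [norm_sub_rev] at h1
    have h2 : ‖(s₀:ℂ) * u‖ = s₀ * |y| := by
      rw [norm_mul, hnu, Complex.norm_real, Real.norm_eq_abs, abs_of_pos hs₀]
    linarith
  have heq : ‖nt u‖ * ‖u ^ 2 * n u‖ = |y| * ‖m‖ := by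
    rw [← norm_mul, hid, norm_mul, norm_neg, hnu]
  rw [le_div_iff₀ hs₀]
  have h3 : ‖nt u‖ * (s₀ * |y| / 2) ≤ |y| * c := by
    calc ‖nt u‖ * (s₀ * |y| / 2) ≤ ‖nt u‖ * ‖u ^ 2 * n u‖ :=
      mul_le_mul_of_nonneg_left hlow (norm_nonneg _)
    _ = |y| * ‖m‖ := heq
    _ ≤ |y| * c := mul_le_mul_of_nonneg_left hmc (le_of_lt hyabs)
  nlinarith [norm_nonneg (nt u)]

lemma m_bound (s₀ : ℝ) (hs₀ : 0 < s₀) (n nt : ℂ → ℂ)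
    (hnt : ∀ z : ℂ, nt z = -(s₀ : ℂ) / n z - z) (y : ℝ) (hy : y ≠ 0)
    (hnz : n (I * y) ≠ 0) (c : ℝ) (hb : ‖nt (I * (y:ℂ))‖ ≤ c) (hybig : 2 * c ≤ |y|) :
    ‖(I * (y:ℂ)) ^ 2 * (n (I * y) + (s₀ : ℂ) / (I * y))‖ ≤ 2 * s₀ * c := by
  set u : ℂ := I * (y:ℂ) with hu_def
  have hu : u ≠ 0 := mul_ne_zero I_ne_zero (Complex.ofReal_ne_zero.2 hy)
  set m : ℂ := u ^ 2 * (n u + (s₀:ℂ) / u) with hm_def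
  have hyabs : (0:ℝ) < |y| := abs_pos.2 hy
  have hnu : ‖u‖ = |y| := by
    rw [hu_def, norm_mul, Complex.norm_I, one_mul, Complex.norm_real, Real.norm_eq_abs]
  have hid : m * (nt u + u) = (s₀:ℂ) * u * nt u := by
    rw [hnt u, hm_def]; field_simp; ring
  have hlow : |y| / 2 ≤ ‖nt u + u‖ := by
    have h1 : ‖u‖ - ‖nt u‖ ≤ ‖u - (- nt u)‖ := by
      have := norm_sub_norm_le u (-nt u)
      rwa [norm_neg] at this
    have h2 : u - (- nt u) = nt u + u := by ring
    rw [h2] at h1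
    linarith
  have heq : ‖m‖ * ‖nt u + u‖ = s₀ * |y| * ‖nt u‖ := by
    rw [← norm_mul, hid, norm_mul, norm_mul, hnu, Complex.norm_real, Real.norm_eq_abs,
      abs_of_pos hs₀]
  have h3 : ‖m‖ * (|y| / 2) ≤ s₀ * |y| * c := by
    calc ‖m‖ * (|y| / 2) ≤ ‖m‖ * ‖nt u + u‖ := mul_le_mul_of_nonneg_left hlow (norm_nonneg _)
    _ = s₀ * |y| * ‖nt u‖ := heq
    _ ≤ s₀ * |y| * c := mul_le_mul_of_nonneg_left hb (by positivity)
  nlinarith [norm_nonneg m]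

lemma im_neg_real_div (s : ℝ) (w : ℂ) :
    ((-(s:ℂ))/w).im = s * w.im / Complex.normSq w := by
  rw [Complex.div_im]; simp; ring

/-- for `ñ(z) = -s₀/n(z) - z`, the function `n` is a Nevanlinna function
satisfying condition (2₀) (i.e. `(iy)²·(n(iy) + s₀/(iy))` is bounded for `|y|` large) if and
only if `ñ` is a Nevanlinna function with `ñ(iy)` bounded for `|y|` large. -/
theorem schur_type_transform_cond_two_zero (s₀ : ℝ) (hs₀ : 0 < s₀) (n : ℂ → ℂ)
    (hanal : AnalyticOn ℂ n {z : ℂ | z.im ≠ 0})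
    (hsym : ∀ z : ℂ, z.im ≠ 0 → n ((starRingEnd ℂ) z) = (starRingEnd ℂ) (n z))
    (hne : ∀ z : ℂ, z.im ≠ 0 → n z ≠ 0)
    (nt : ℂ → ℂ) (hnt : ∀ z : ℂ, nt z = -(s₀ : ℂ) / n z - z) :
    (IsNevanlinna n ∧
        IsBoundedUnder (· ≤ ·) (atTop ⊔ atBot)
          (fun y : ℝ =>
            ‖(Complex.I * y) ^ 2 * (n (Complex.I * y) + (s₀ : ℂ) / (Complex.I * y))‖)) ↔
      (IsNevanlinna nt ∧
        IsBoundedUnder (· ≤ ·) (atTop ⊔ atBot)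
          (fun y : ℝ => ‖nt (Complex.I * y)‖)) := by
  have hsub : {z : ℂ | 0 < z.im} ⊆ {z : ℂ | z.im ≠ 0} := fun z hz => ne_of_gt hz
  have hIyim : ∀ y : ℝ, (I * (y:ℂ)).im = y := by intro y; simp
  constructor
  · rintro ⟨⟨hnA, hnS, hnP⟩, hb⟩
    obtain ⟨c, hc⟩ := hb
    rw [Filter.eventually_map, Filter.eventually_sup] at hc
    obtain ⟨htop, hbot⟩ := hc
    rw [eventually_atTop] at htop
    rw [eventually_atBot] at hbot
    obtain ⟨Y₁, hY₁⟩ := htop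
    obtain ⟨Y₂, hY₂⟩ := hbot
    have hc0 : 0 ≤ c := by
      have h1 : Y₁ ≤ max Y₁ 0 + 1 := by
        have := le_max_left Y₁ (0:ℝ); linarith
      exact le_trans (norm_nonneg _) (hY₁ _ h1)
    -- eventual bound for nt along atTop
    have hbdtop : ∀ y : ℝ, max Y₁ ((2*c+1)/s₀) ≤ y → ‖nt (I * (y:ℂ))‖ ≤ 2*c/s₀ := by
      intro y hy
      have h1 : Y₁ ≤ y := le_trans (le_max_left _ _) hy
      have h2 : (2*c+1)/s₀ ≤ y := le_trans (le_max_right _ _) hy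
      have h3 : 2*c + 1 ≤ s₀ * y := by rw [div_le_iff₀ hs₀] at h2; linarith
      have hy0 : 0 < y := by nlinarith
      have hyne : y ≠ 0 := ne_of_gt hy0
      refine nt_bound s₀ hs₀ n nt hnt y hyne (hne _ (by rw [hIyim]; exact hyne)) c
        (hY₁ y h1) ?_
      rw [abs_of_pos hy0]; linarith
    have hbdbot : ∀ y : ℝ, y ≤ min Y₂ (-((2*c+1)/s₀)) → ‖nt (I * (y:ℂ))‖ ≤ 2*c/s₀ := by
      intro y hy
      have h1 : y ≤ Y₂ := le_trans hy (min_le_left _ _)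
      have h2 : y ≤ -((2*c+1)/s₀) := le_trans hy (min_le_right _ _)
      have h3 : (2*c+1)/s₀ ≤ -y := by linarith
      have h4 : 2*c+1 ≤ s₀ * (-y) := by rw [div_le_iff₀ hs₀] at h3; linarith
      have hy0 : y < 0 := by nlinarith
      have hyne : y ≠ 0 := ne_of_lt hy0
      refine nt_bound s₀ hs₀ n nt hnt y hyne (hne _ (by rw [hIyim]; exact hyne)) c
        (hY₂ y h1) ?_
      rw [abs_of_neg hy0]; linarith
    -- strict positivity of Im n on the upper half plane
    have hstrict : ∀ z : ℂ, 0 < z.im → 0 < (n z).im := by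
      rcases im_pos_or_const hanal hnP with hs | ⟨c₀, hc₀⟩
      · exact hs
      · exfalso
        set y : ℝ := max Y₁ ((c+1)/s₀) + 1 with hydef
        have hy1 : Y₁ ≤ y := by
          have := le_max_left Y₁ ((c+1)/s₀); rw [hydef]; linarith
        have hy2 : (c+1)/s₀ < y := by
          have := le_max_right Y₁ ((c+1)/s₀); rw [hydef]; linarith
        have hy3 : c + 1 < s₀ * y := by rw [div_lt_iff₀ hs₀] at hy2; linarith
        have hy0 : 0 < y := by nlinarith
        have hyne : (y:ℂ) ≠ 0 := Complex.ofReal_ne_zero.2 (ne_of_gt hy0)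
        have hnval : n (I * (y:ℂ)) = (c₀:ℂ) := hc₀ _ (by rw [hIyim]; exact hy0)
        have hEeq : (I * (y:ℂ))^2 * (n (I * y) + (s₀:ℂ)/(I * y))
            = (c₀:ℂ) * (I*(y:ℂ))^2 + (s₀:ℝ) * (I * (y:ℂ)) := by
          rw [hnval]
          have hI : I * (y:ℂ) ≠ 0 := mul_ne_zero I_ne_zero hyne
          field_simp
        have hEim : ((I * (y:ℂ))^2 * (n (I * y) + (s₀:ℂ)/(I * y))).im = s₀ * y := by
          rw [hEeq]
          simp [pow_two, Complex.add_im, Complex.mul_im, Complex.mul_re]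
        have hle := hY₁ y hy1
        have habs : |((I * (y:ℂ))^2 * (n (I * y) + (s₀:ℂ)/(I * y))).im|
            ≤ ‖(I * (y:ℂ))^2 * (n (I * y) + (s₀:ℂ)/(I * y))‖ := by
          exact Complex.abs_im_le_norm _
        rw [hEim] at habs
        have : s₀ * y ≤ |s₀ * y| := le_abs_self _
        linarith
    -- the Julia-type argument
    set q : ℂ → ℂ := fun z => -(s₀:ℂ)/n z with hq
    have hqdiff : DifferentiableOn ℂ q {z : ℂ | 0 < z.im} :=
      DifferentiableOn.div (differentiableOn_const _)
        ((hanal.differentiableOn).mono hsub) (fun z hz => hne z (ne_of_gt hz))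
    have him : ∀ z : ℂ, 0 < z.im → 0 < (q z).im := by
      intro z hz
      have h1 : (q z).im = s₀ * (n z).im / Complex.normSq (n z) := im_neg_real_div s₀ (n z)
      rw [h1]
      exact div_pos (mul_pos hs₀ (hstrict z hz)) (Complex.normSq_pos.2 (hne z (ne_of_gt hz)))
    have hjul : ∀ z : ℂ, 0 < z.im → z.im ≤ (q z).im := fun z hz =>
      julia hqdiff him (C := 2*c/s₀) (Y := max Y₁ ((2*c+1)/s₀))
        (fun y hy => by
          have h1 : q (I * (y:ℂ)) - I * y = nt (I * y) := by
            simp only [hq]; rw [hnt]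
          rw [h1]; exact hbdtop y hy) hz
    refine ⟨⟨?_, ?_, ?_⟩, ⟨2*c/s₀, ?_⟩⟩
    · have h1 : nt = fun z => -(s₀:ℂ)/n z - z := funext hnt
      rw [h1]
      exact (analyticOn_const.div hanal hne).sub analyticOn_id
    · intro z hz
      rw [hnt, hnt, hsym z hz]
      simp [map_div₀, Complex.conj_ofReal]
    · intro z hz
      have h2 := hjul z hz
      have h3 : (nt z).im = (q z).im - z.im := by
        rw [hnt]
        simp only [hq]
        rw [Complex.sub_im]
      rw [h3]; linarith
    · rw [Filter.eventually_map, Filter.eventually_sup]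
      constructor
      · rw [eventually_atTop]; exact ⟨max Y₁ ((2*c+1)/s₀), hbdtop⟩
      · rw [eventually_atBot]; exact ⟨min Y₂ (-((2*c+1)/s₀)), hbdbot⟩
  · rintro ⟨⟨hntA, hntS, hntP⟩, hb⟩
    obtain ⟨c, hc⟩ := hb
    rw [Filter.eventually_map, Filter.eventually_sup] at hc
    obtain ⟨htop, hbot⟩ := hc
    rw [eventually_atTop] at htop
    rw [eventually_atBot] at hbot
    obtain ⟨Y₁, hY₁⟩ := htop
    obtain ⟨Y₂, hY₂⟩ := hbot
    have hc0 : 0 ≤ c := by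
      have h1 : Y₁ ≤ max Y₁ 0 + 1 := by
        have := le_max_left Y₁ (0:ℝ); linarith
      exact le_trans (norm_nonneg _) (hY₁ _ h1)
    refine ⟨⟨hanal, hsym, ?_⟩, ⟨2*s₀*c, ?_⟩⟩
    · intro z hz
      have hnz := hne z (ne_of_gt hz)
      have hw : nt z + z = -(s₀:ℂ)/n z := by rw [hnt]; ring
      have hwim : 0 < (nt z + z).im := by
        rw [Complex.add_im]
        have := hntP z hz; linarith
      have hwne : nt z + z ≠ 0 := by
        intro h; rw [h] at hwim; simp at hwim
      have hs₀c : (s₀:ℂ) ≠ 0 := Complex.ofReal_ne_zero.2 (ne_of_gt hs₀)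
      have h2 : n z = -(s₀:ℂ)/(nt z + z) := by
        rw [hw]
        field_simp
      have h3 : (n z).im = s₀ * (nt z + z).im / Complex.normSq (nt z + z) := by
        conv_lhs => rw [h2]
        exact im_neg_real_div s₀ _
      rw [h3]
      exact le_of_lt (div_pos (mul_pos hs₀ hwim) (Complex.normSq_pos.2 hwne))
    · rw [Filter.eventually_map, Filter.eventually_sup]
      constructor
      · rw [eventually_atTop]
        refine ⟨max Y₁ (2*c+1), fun y hy => ?_⟩
        have h1 : Y₁ ≤ y := le_trans (le_max_left _ _) hy
        have h2 : 2*c+1 ≤ y := le_trans (le_max_right _ _) hy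
        have hy0 : 0 < y := by linarith
        have hyne : y ≠ 0 := ne_of_gt hy0
        refine m_bound s₀ hs₀ n nt hnt y hyne (hne _ (by rw [hIyim]; exact hyne)) c
          (hY₁ y h1) ?_
        rw [abs_of_pos hy0]; linarith
      · rw [eventually_atBot]
        refine ⟨min Y₂ (-(2*c+1)), fun y hy => ?_⟩
        have h1 : y ≤ Y₂ := le_trans hy (min_le_left _ _)
        have h2 : y ≤ -(2*c+1) := le_trans hy (min_le_right _ _)
        have hy0 : y < 0 := by linarith
        have hyne : y ≠ 0 := ne_of_lt hy0
        refine m_bound s₀ hs₀ n nt hnt y hyne (hne _ (by rw [hIyim]; exact hyne)) c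
          (hY₂ y h1) ?_
        rw [abs_of_neg hy0]; linarith
end
end

section
/- Let s₀ > 0, s₁ ∈ ℝ, and let n be analytic on ℂ∖ℝ with n(conj z) = conj(n(z)) and n(z) ≠ 0 for all nonreal z, and define the Schur transform n̂(z) = −s₀/n(z) − z + s₁/s₀. Then n is a Nevanlinna function satisfying lim_{y→±∞} (iy)²·(n(iy) + s₀/(iy) + s₁/(iy)²) = 0 (condition (3₀)) if and only if n̂ is a Nevanlinna function satisfying lim_{y→±∞} n̂(iy) = 0. -/
open Filter Complex Metric Topology

noncomputable section

lemma normSq_sub_conj' (a b : ℂ) :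
    normSq (a - (starRingEnd ℂ) b) = normSq (a - b) + 4 * a.im * b.im := by
  simp only [normSq_apply, sub_re, sub_im, conj_re, conj_im]
  ring

lemma ne_zero_of_im_pos {a : ℂ} (h : 0 < a.im) : a ≠ 0 := by
  intro h0; rw [h0] at h; simp at h

lemma schwarzPick_UHP (f : ℂ → ℂ) (hf : DifferentiableOn ℂ f {z : ℂ | 0 < z.im})
    (hm : ∀ z : ℂ, 0 < z.im → 0 < (f z).im) {z w : ℂ} (hz : 0 < z.im) (hw : 0 < w.im) :
    z.im * w.im * normSq (f z - (starRingEnd ℂ) (f w)) ≤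
      (f z).im * (f w).im * normSq (z - (starRingEnd ℂ) w) := by
  set C := starRingEnd ℂ with hC
  have hzw : z - C w ≠ 0 := ne_zero_of_im_pos (by simp [hC]; positivity)
  have hwCw : w - C w ≠ 0 := ne_zero_of_im_pos (by simp [hC]; positivity)
  have hQpos : 0 < normSq (z - C w) := normSq_pos.2 hzw
  set u : ℂ := (z - w) / (z - C w) with hu_def
  have hQ : normSq (z - C w) = normSq (z - w) + 4 * z.im * w.im := normSq_sub_conj' z w
  have hu2 : normSq u < 1 := by
    rw [hu_def, map_div₀]
    rw [div_lt_one hQpos]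
    nlinarith
  have hu_ball : u ∈ ball (0 : ℂ) 1 := by
    rw [mem_ball_zero_iff]
    have : ‖u‖ ^ 2 < 1 := by rw [Complex.sq_norm]; exact hu2
    nlinarith [norm_nonneg u]
  -- the Möbius map from the disc to the upper half plane sending 0 to w
  set T : ℂ → ℂ := fun v => (w - C w * v) / (1 - v) with hT_def
  have hballne : ∀ v ∈ ball (0 : ℂ) 1, (1 : ℂ) - v ≠ 0 := by
    intro v hv
    rw [mem_ball_zero_iff] at hv
    intro h
    have : v = 1 := by linear_combination -h
    rw [this] at hv; simp at hv
  have hTim : ∀ v ∈ ball (0 : ℂ) 1, 0 < (T v).im := by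
    intro v hv
    have h1v := hballne v hv
    have hv1 : normSq v < 1 := by
      rw [mem_ball_zero_iff] at hv
      have h := Complex.sq_norm v
      have hv' : ‖v‖ < 1 := by rwa [] at hv
      nlinarith [norm_nonneg v]
    have h1 : T v - w = v * (w - C w) / (1 - v) := by
      rw [hT_def]; field_simp; ring
    have h2 : T v - C w = (w - C w) / (1 - v) := by
      rw [hT_def]; field_simp; ring
    have key : normSq (T v - w) < normSq (T v - C w) := by
      rw [h1, h2, map_div₀, map_div₀, map_mul]
      have hpos : 0 < normSq (w - C w) / normSq (1 - v) := by
        apply div_pos (normSq_pos.2 hwCw) (normSq_pos.2 h1v)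
      calc normSq v * normSq (w - C w) / normSq (1 - v)
          = normSq v * (normSq (w - C w) / normSq (1 - v)) := by ring
        _ < 1 * (normSq (w - C w) / normSq (1 - v)) := by
            apply mul_lt_mul_of_pos_right hv1 hpos
        _ = normSq (w - C w) / normSq (1 - v) := one_mul _
    have := normSq_sub_conj' (T v) w
    nlinarith
  have hTdiff : DifferentiableOn ℂ T (ball (0 : ℂ) 1) := by
    apply DifferentiableOn.div
    · exact (differentiableOn_const _).sub ((differentiableOn_const _).mul differentiableOn_id)
    · exact (differentiableOn_const _).sub differentiableOn_id
    · exact hballne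
  have hT0 : T 0 = w := by simp [hT_def]
  have hTu : T u = z := by
    rw [hT_def, hu_def]
    rw [div_eq_iff (hballne u hu_ball)]
    rw [hu_def]
    field_simp
    ring
  have hfw : 0 < (f w).im := hm w hw
  have hfz : 0 < (f z).im := hm z hz
  set F : ℂ → ℂ := fun v => (f (T v) - f w) / (f (T v) - C (f w)) with hF_def
  have hden : ∀ x : ℂ, 0 < x.im → x - C (f w) ≠ 0 := by
    intro x hx
    apply ne_zero_of_im_pos
    simp [hC]
    linarith
  have hFball : ∀ v ∈ ball (0 : ℂ) 1, normSq (F v) < 1 := by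
    intro v hv
    have hTv := hTim v hv
    have hfTv := hm _ hTv
    have hd := hden _ hfTv
    have e := normSq_sub_conj' (f (T v)) (f w)
    rw [hF_def]
    simp only
    rw [map_div₀, div_lt_one (normSq_pos.2 hd)]
    nlinarith
  have hF0 : F 0 = 0 := by rw [hF_def]; simp only; rw [hT0]; simp
  have hFmaps : Set.MapsTo F (ball (0 : ℂ) 1) (ball (F 0) 1) := by
    rw [hF0]
    intro v hv
    rw [mem_ball_zero_iff]
    have h2 := hFball v hv
    have : ‖F v‖ ^ 2 < 1 := by rw [Complex.sq_norm]; exact h2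
    nlinarith [norm_nonneg (F v)]
  have hFdiff : DifferentiableOn ℂ F (ball (0 : ℂ) 1) := by
    have hTmaps : Set.MapsTo T (ball (0 : ℂ) 1) {z : ℂ | 0 < z.im} := fun v hv => hTim v hv
    have hfT : DifferentiableOn ℂ (fun v => f (T v)) (ball (0 : ℂ) 1) :=
      hf.comp hTdiff hTmaps
    apply DifferentiableOn.div
    · exact hfT.sub (differentiableOn_const _)
    · exact hfT.sub (differentiableOn_const _)
    · intro v hv
      exact hden _ (hm _ (hTim v hv))
  have key := dist_le_div_mul_dist_of_mapsTo_ball hFdiff (hFmaps.mono_right ball_subset_closedBall) hu_ball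
  rw [hF0] at key
  simp only [dist_zero_right, div_self (one_ne_zero : (1:ℝ) ≠ 0), one_mul] at key
  have key2 : normSq (F u) ≤ normSq u := by
    rw [← Complex.sq_norm, ← Complex.sq_norm]
    have h0 : (0:ℝ) ≤ ‖F u‖ := norm_nonneg _
    nlinarith [norm_nonneg u]
  rw [hF_def] at key2
  simp only at key2
  rw [hTu] at key2
  have hPpos : 0 < normSq (f z - C (f w)) := normSq_pos.2 (hden _ hfz)
  rw [map_div₀, map_div₀] at key2
  have h2 : normSq (f z - f w) * normSq (z - C w) ≤
      normSq (z - w) * normSq (f z - C (f w)) := (div_le_div_iff₀ hPpos hQpos).mp key2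
  have e1 := normSq_sub_conj' (f z) (f w)
  nlinarith [h2]

lemma mul_I_im' (y : ℝ) : (Complex.I * y).im = y := by simp

lemma mul_I_ne_zero' {y : ℝ} (hy : y ≠ 0) : (Complex.I * y : ℂ) ≠ 0 := by
  intro h
  have := congrArg Complex.im h
  simp at this
  exact hy this

lemma tendsto_inv_I_mul :
    Tendsto (fun y : ℝ => ((Complex.I * y : ℂ))⁻¹) (atTop ⊔ atBot) (𝓝 0) := by
  rw [tendsto_zero_iff_norm_tendsto_zero]
  have h1 : Tendsto (fun y : ℝ => |y|) (atTop ⊔ atBot) atTop :=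
    tendsto_sup.2 ⟨tendsto_abs_atTop_atTop, tendsto_abs_atBot_atTop⟩
  have h2 := h1.inv_tendsto_atTop
  refine h2.congr fun y => ?_
  simp [norm_inv]

lemma julia_inf (f : ℂ → ℂ) (hf : DifferentiableOn ℂ f {z : ℂ | 0 < z.im})
    (hm : ∀ z : ℂ, 0 < z.im → 0 < (f z).im) (c : ℂ)
    (hc : Tendsto (fun y : ℝ => f (Complex.I * y) - Complex.I * y) atTop (𝓝 c))
    {z : ℂ} (hz : 0 < z.im) : z.im ≤ (f z).im := by
  have him : ∀ y : ℝ, 0 < y → 0 < (Complex.I * (y : ℂ)).im := by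
    intro y hy; simpa using hy
  have key : ∀ y : ℝ, 0 < y →
      z.im * y * normSq (f z - (starRingEnd ℂ) (f (Complex.I * y))) ≤
        (f z).im * (f (Complex.I * y)).im * normSq (z - (starRingEnd ℂ) (Complex.I * y)) := by
    intro y hy
    have h := schwarzPick_UHP f hf hm hz (him y hy)
    rwa [mul_I_im'] at h
  have hAB : ∀ᶠ (y : ℝ) in atTop,
      z.im * normSq ((f z - (starRingEnd ℂ) (f (Complex.I * y) - Complex.I * y))
          * (Complex.I * y)⁻¹ + 1) ≤
        (f z).im * ((f (Complex.I * y) - Complex.I * y).im / y + 1)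
          * normSq (z * (Complex.I * y)⁻¹ + 1) := by
    filter_upwards [eventually_gt_atTop (0 : ℝ)] with y hy
    have hIy : (Complex.I * (y : ℂ)) ≠ 0 := mul_I_ne_zero' hy.ne'
    have e0 : normSq (Complex.I * (y : ℂ)) = y ^ 2 := by
      simp [Complex.normSq_mul, Complex.normSq_ofReal]; ring
    have hCg : (starRingEnd ℂ) (f (Complex.I * y) - Complex.I * y)
        = (starRingEnd ℂ) (f (Complex.I * y)) + Complex.I * y := by
      simp only [map_sub, map_mul, Complex.conj_I, Complex.conj_ofReal]; ring
    have estep : (f z - (starRingEnd ℂ) (f (Complex.I * y) - Complex.I * y))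
          * (Complex.I * y)⁻¹ + 1
        = (f z - (starRingEnd ℂ) (f (Complex.I * y))) * (Complex.I * y)⁻¹ := by
      rw [hCg, sub_add_eq_sub_sub, sub_mul, mul_inv_cancel₀ hIy]; ring
    have e1 : z.im * normSq ((f z - (starRingEnd ℂ) (f (Complex.I * y) - Complex.I * y))
          * (Complex.I * y)⁻¹ + 1) * y ^ 3
        = z.im * y * normSq (f z - (starRingEnd ℂ) (f (Complex.I * y))) := by
      rw [estep, map_mul, map_inv₀, e0]
      field_simp
    have egim : (f (Complex.I * y) - Complex.I * y).im = (f (Complex.I * y)).im - y := by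
      simp
    have hCIy : (starRingEnd ℂ) (Complex.I * y) = -(Complex.I * y) := by
      simp [map_mul, Complex.conj_I, Complex.conj_ofReal]
    have estep2 : z * (Complex.I * y)⁻¹ + 1
        = (z - (starRingEnd ℂ) (Complex.I * y)) * (Complex.I * y)⁻¹ := by
      rw [hCIy, sub_neg_eq_add, add_mul, mul_inv_cancel₀ hIy]
    have e2 : (f z).im * ((f (Complex.I * y) - Complex.I * y).im / y + 1)
          * normSq (z * (Complex.I * y)⁻¹ + 1) * y ^ 3
        = (f z).im * (f (Complex.I * y)).im * normSq (z - (starRingEnd ℂ) (Complex.I * y)) := by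
      rw [estep2, map_mul, map_inv₀, e0, egim]
      field_simp
      ring_nf
    have h3 := key y hy
    rw [← e1, ← e2] at h3
    exact le_of_mul_le_mul_right h3 (by positivity)
  have htinv' : Tendsto (fun y : ℝ => (Complex.I * y : ℂ)⁻¹) atTop (𝓝 0) :=
    tendsto_inv_I_mul.mono_left le_sup_left
  have hstar : Tendsto (fun y : ℝ => (starRingEnd ℂ) (f (Complex.I * y) - Complex.I * y))
      atTop (𝓝 ((starRingEnd ℂ) c)) :=
    (Complex.continuous_conj.tendsto c).comp hc
  have hA_lim : Tendsto (fun y : ℝ =>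
      z.im * normSq ((f z - (starRingEnd ℂ) (f (Complex.I * y) - Complex.I * y))
        * (Complex.I * y)⁻¹ + 1)) atTop (𝓝 z.im) := by
    have inner : Tendsto (fun y : ℝ =>
        (f z - (starRingEnd ℂ) (f (Complex.I * y) - Complex.I * y)) * (Complex.I * y)⁻¹ + 1)
        atTop (𝓝 ((f z - (starRingEnd ℂ) c) * 0 + 1)) :=
      (((tendsto_const_nhds : Tendsto (fun _ : ℝ => f z) atTop (𝓝 (f z))).sub hstar).mul
        htinv').add tendsto_const_nhds
    have h2 := (Complex.continuous_normSq.tendsto _).comp inner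
    have h3 := h2.const_mul z.im
    simpa only [mul_zero, zero_add, Complex.normSq_one, mul_one, Function.comp_def] using h3
  have hB_lim : Tendsto (fun y : ℝ =>
      (f z).im * ((f (Complex.I * y) - Complex.I * y).im / y + 1)
        * normSq (z * (Complex.I * y)⁻¹ + 1)) atTop (𝓝 ((f z).im)) := by
    have hgim : Tendsto (fun y : ℝ => (f (Complex.I * y) - Complex.I * y).im) atTop (𝓝 c.im) :=
      (Complex.continuous_im.tendsto c).comp hc
    have hdiv : Tendsto (fun y : ℝ => (f (Complex.I * y) - Complex.I * y).im / y) atTop (𝓝 0) :=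
      hgim.div_atTop tendsto_id
    have h1 : Tendsto (fun y : ℝ => (f (Complex.I * y) - Complex.I * y).im / y + 1)
        atTop (𝓝 1) := by
      simpa using hdiv.add (tendsto_const_nhds : Tendsto (fun _ : ℝ => (1:ℝ)) atTop _)
    have inner : Tendsto (fun y : ℝ => z * (Complex.I * y)⁻¹ + 1) atTop (𝓝 (z * 0 + 1)) :=
      ((tendsto_const_nhds : Tendsto (fun _ : ℝ => z) atTop (𝓝 z)).mul htinv').add
        tendsto_const_nhds
    have h2 := (Complex.continuous_normSq.tendsto _).comp inner
    have h3 := ((tendsto_const_nhds : Tendsto (fun _ : ℝ => (f z).im) atTop _).mul h1).mul h2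
    simpa only [mul_zero, zero_add, Complex.normSq_one, mul_one, Function.comp_def] using h3
  exact le_of_tendsto_of_tendsto hA_lim hB_lim hAB

set_option maxHeartbeats 1000000 in
/-- for the Schur transform `n̂(z) = -s₀/n(z) - z + s₁/s₀`, the function `n`
is a Nevanlinna function satisfying condition (3₀) (i.e.
`(iy)²·(n(iy) + s₀/(iy) + s₁/(iy)²) → 0` as `y → ±∞`) if and only if `n̂` is a Nevanlinna
function with `n̂(iy) → 0` as `y → ±∞`. -/
theorem schur_transform_cond_three_zero (s₀ s₁ : ℝ) (hs₀ : 0 < s₀) (n : ℂ → ℂ)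
    (hanal : AnalyticOn ℂ n {z : ℂ | z.im ≠ 0})
    (hsym : ∀ z : ℂ, z.im ≠ 0 → n ((starRingEnd ℂ) z) = (starRingEnd ℂ) (n z))
    (hne : ∀ z : ℂ, z.im ≠ 0 → n z ≠ 0)
    (nh : ℂ → ℂ) (hnh : ∀ z : ℂ, nh z = -(s₀ : ℂ) / n z - z + (s₁ : ℂ) / (s₀ : ℂ)) :
    (IsNevanlinna n ∧
        Tendsto
          (fun y : ℝ => (Complex.I * y) ^ 2 *
            (n (Complex.I * y) + (s₀ : ℂ) / (Complex.I * y) +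
              (s₁ : ℂ) / (Complex.I * y) ^ 2))
          (atTop ⊔ atBot) (nhds 0)) ↔
      (IsNevanlinna nh ∧
        Tendsto (fun y : ℝ => nh (Complex.I * y)) (atTop ⊔ atBot) (nhds 0)) := by
  have hs₀C : (s₀ : ℂ) ≠ 0 := Complex.ofReal_ne_zero.2 hs₀.ne'
  have hconst_im : ((s₁ : ℂ) / (s₀ : ℂ)).im = 0 := by
    rw [← Complex.ofReal_div]; exact Complex.ofReal_im _
  have hyne : ∀ᶠ (y : ℝ) in (atTop ⊔ atBot), y ≠ 0 :=
    eventually_sup.2 ⟨(eventually_gt_atTop 0).mono fun y h => h.ne',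
      (eventually_lt_atBot 0).mono fun y h => h.ne⟩
  have hUHPopen : IsOpen {z : ℂ | 0 < z.im} := isOpen_lt continuous_const Complex.continuous_im
  have hsub : {z : ℂ | 0 < z.im} ⊆ {z : ℂ | z.im ≠ 0} := fun z hz => ne_of_gt hz
  set E : ℝ → ℂ := fun y : ℝ => (Complex.I * y) ^ 2 *
      (n (Complex.I * y) + (s₀ : ℂ) / (Complex.I * y) +
        (s₁ : ℂ) / (Complex.I * y) ^ 2) with hE_def
  have hEeq : ∀ y : ℝ, y ≠ 0 →
      E y = (Complex.I * y) ^ 2 * n (Complex.I * y) + (s₀ : ℂ) * (Complex.I * y) + (s₁ : ℂ) := by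
    intro y hy
    have hz0 : (Complex.I * (y : ℂ)) ≠ 0 := mul_I_ne_zero' hy
    rw [hE_def]
    have hyC : (y : ℂ) ≠ 0 := Complex.ofReal_ne_zero.2 hy
    field_simp
  have tc : ∀ a : ℂ, Tendsto (fun _ : ℝ => a) (atTop ⊔ atBot) (𝓝 a) := fun a =>
    tendsto_const_nhds
  have tcT : ∀ a : ℂ, Tendsto (fun _ : ℝ => a) atTop (𝓝 a) := fun a => tendsto_const_nhds
  constructor
  · rintro ⟨hN, hE⟩
    -- Step 1 : nh (iy) → 0
    have hnhto : Tendsto (fun y : ℝ => nh (Complex.I * y)) (atTop ⊔ atBot) (𝓝 0) := by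
      have hnum : Tendsto (fun y : ℝ =>
          -(E y) + ((s₁ : ℂ) / s₀) * (E y - (s₁ : ℂ)) * (Complex.I * y)⁻¹)
          (atTop ⊔ atBot) (𝓝 0) := by
        have h := hE.neg.add
          ((((tc ((s₁ : ℂ) / s₀)).mul (hE.sub (tc (s₁ : ℂ))))).mul tendsto_inv_I_mul)
        simpa using h
      have hden : Tendsto (fun y : ℝ =>
          E y * (Complex.I * y)⁻¹ - (s₀ : ℂ) - (s₁ : ℂ) * (Complex.I * y)⁻¹)
          (atTop ⊔ atBot) (𝓝 (-(s₀ : ℂ))) := by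
        have h := ((hE.mul tendsto_inv_I_mul).sub (tc (s₀ : ℂ))).sub
          ((tc (s₁ : ℂ)).mul tendsto_inv_I_mul)
        simpa using h
      have hq := hnum.div hden (neg_ne_zero.2 hs₀C)
      rw [zero_div] at hq
      refine hq.congr' ?_
      filter_upwards [hyne] with y hy
      have hz0 : (Complex.I * (y : ℂ)) ≠ 0 := mul_I_ne_zero' hy
      have him : (Complex.I * (y : ℂ)).im ≠ 0 := by rw [mul_I_im']; exact hy
      have hnz : n (Complex.I * y) ≠ 0 := hne _ him
      simp only [Pi.div_apply]
      rw [hEeq y hy, hnh]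
      have hdeq : ((Complex.I * y) ^ 2 * n (Complex.I * y) + (s₀ : ℂ) * (Complex.I * y)
            + (s₁ : ℂ)) * (Complex.I * y)⁻¹ - (s₀ : ℂ) - (s₁ : ℂ) * (Complex.I * y)⁻¹
          = (Complex.I * y) * n (Complex.I * y) := by
        have hyC : (y : ℂ) ≠ 0 := Complex.ofReal_ne_zero.2 hy
        field_simp
        ring
      rw [hdeq, div_eq_iff (mul_ne_zero hz0 hnz)]
      have hyC : (y : ℂ) ≠ 0 := Complex.ofReal_ne_zero.2 hy
      field_simp
      ring
    -- Step 2 : strict positivity of im n on the upper half plane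
    have hstrict : ∀ z : ℂ, 0 < z.im → 0 < (n z).im := by
      by_contra hcon
      push_neg at hcon
      obtain ⟨z₀, hz₀, hz₀'⟩ := hcon
      have him0 : (n z₀).im = 0 := le_antisymm hz₀' (hN.2.2 z₀ hz₀)
      have hanal' : AnalyticOnNhd ℂ n {z : ℂ | 0 < z.im} :=
        hUHPopen.analyticOn_iff_analyticOnNhd.1 (hanal.mono hsub)
      rcases hanal'.is_constant_or_isOpen (convex_halfSpace_im_gt 0).isPreconnected with
        ⟨v, hv⟩ | hopen
      · -- constant : contradiction with the asymptotics
        have htINV : Tendsto (fun y : ℝ => (Complex.I * y : ℂ)⁻¹) atTop (𝓝 0) :=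
          tendsto_inv_I_mul.mono_left le_sup_left
        have h1 : Tendsto (fun y : ℝ => E y * ((Complex.I * y)⁻¹ * (Complex.I * y)⁻¹))
            atTop (𝓝 0) := by
          have h := (hE.mono_left le_sup_left).mul (htINV.mul htINV)
          simpa using h
        have h2 : ∀ᶠ (y : ℝ) in atTop,
            E y * ((Complex.I * y)⁻¹ * (Complex.I * y)⁻¹)
              = v + (s₀ : ℂ) * (Complex.I * y)⁻¹
                + (s₁ : ℂ) * ((Complex.I * y)⁻¹ * (Complex.I * y)⁻¹) := by
          filter_upwards [eventually_gt_atTop (0 : ℝ)] with y hy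
          have hz0 : (Complex.I * (y : ℂ)) ≠ 0 := mul_I_ne_zero' hy.ne'
          have hvy : n (Complex.I * y) = v := hv _ (by simpa using hy)
          rw [hEeq y hy.ne', hvy]
          have hyC : (y : ℂ) ≠ 0 := Complex.ofReal_ne_zero.2 hy.ne'
          field_simp
        have h3 : Tendsto (fun y : ℝ => v + (s₀ : ℂ) * (Complex.I * y)⁻¹
            + (s₁ : ℂ) * ((Complex.I * y)⁻¹ * (Complex.I * y)⁻¹)) atTop (𝓝 v) := by
          have h := ((tcT v).add ((tcT (s₀ : ℂ)).mul htINV)).add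
            ((tcT (s₁ : ℂ)).mul (htINV.mul htINV))
          simpa using h
        have hv0 : v = 0 := tendsto_nhds_unique (h1.congr' h2) h3 |>.symm
        have : n (Complex.I * (1 : ℝ)) = v := hv _ (by norm_num)
        exact hne (Complex.I * (1 : ℝ)) (by norm_num) (this.trans hv0)
      · -- open image : contradiction with im n ≥ 0
        have himg : IsOpen (n '' {z : ℂ | 0 < z.im}) :=
          hopen _ (subset_refl _) hUHPopen
        have hmem : n z₀ ∈ n '' {z : ℂ | 0 < z.im} := ⟨z₀, hz₀, rfl⟩
        rcases Metric.isOpen_iff.1 himg _ hmem with ⟨ε, hε, hball⟩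
        have hmem2 : n z₀ - Complex.I * ((ε / 2 : ℝ) : ℂ) ∈ Metric.ball (n z₀) ε := by
          rw [Metric.mem_ball, Complex.dist_eq]
          have : n z₀ - Complex.I * ((ε / 2 : ℝ) : ℂ) - n z₀ = -(Complex.I * ((ε / 2 : ℝ) : ℂ)) := by
            ring
          rw [this, norm_neg, norm_mul, Complex.norm_I, Complex.norm_real, Real.norm_eq_abs, one_mul]
          rw [abs_of_pos (by linarith)]
          linarith
        rcases hball hmem2 with ⟨z₁, hz₁, heq⟩
        have hge := hN.2.2 z₁ hz₁
        have : (n z₁).im = -(ε / 2) := by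
          rw [heq]
          simp [Complex.sub_im, him0]
        rw [this] at hge
        linarith
    -- Step 3 : nh is Nevanlinna
    have hnevnh : IsNevanlinna nh := by
      refine ⟨?_, ?_, ?_⟩
      · have hfun : nh = fun z => -(s₀ : ℂ) / n z - z + (s₁ : ℂ) / (s₀ : ℂ) := funext hnh
        rw [hfun]
        exact ((analyticOn_const.div hanal fun x hx => hne x hx).sub analyticOn_id).add
          analyticOn_const
      · intro z hz
        rw [hnh, hnh, hsym z hz]
        simp only [map_add, map_sub, map_div₀, map_neg, Complex.conj_ofReal]
      · intro z hz
        have hmdiff : DifferentiableOn ℂ (fun w => -(s₀ : ℂ) / n w) {z : ℂ | 0 < z.im} :=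
          (analyticOn_const.div (hanal.mono hsub) fun x hx => hne x (ne_of_gt hx)).differentiableOn
        have hmim : ∀ w : ℂ, 0 < w.im → 0 < ((fun w => -(s₀ : ℂ) / n w) w).im := by
          intro w hw
          have h3 : (-(s₀ : ℂ) / n w).im = s₀ * (n w).im / normSq (n w) := by
            rw [Complex.div_im]
            simp
            ring
          simp only
          rw [h3]
          have := hstrict w hw
          have hsq : 0 < normSq (n w) := normSq_pos.2 (hne w (ne_of_gt hw))
          positivity
        have hmc : Tendsto (fun y : ℝ =>
            (fun w => -(s₀ : ℂ) / n w) (Complex.I * y) - Complex.I * y)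
            atTop (𝓝 (-((s₁ : ℂ) / s₀))) := by
          have h := (hnhto.mono_left le_sup_left).sub
            (tendsto_const_nhds : Tendsto (fun _ : ℝ => (s₁ : ℂ) / s₀) atTop _)
          rw [zero_sub] at h
          refine h.congr fun y => ?_
          rw [hnh]
          ring
        have hj := julia_inf _ hmdiff hmim _ hmc hz
        have him_nh : (nh z).im = (-(s₀ : ℂ) / n z).im - z.im + ((s₁ : ℂ) / (s₀ : ℂ)).im := by
          rw [hnh]
          simp [Complex.add_im, Complex.sub_im]
        rw [him_nh, hconst_im]
        linarith
    exact ⟨hnevnh, hnhto⟩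
  · rintro ⟨hNh, hto⟩
    have him_n : ∀ z : ℂ, 0 < z.im → 0 < (n z).im := by
      intro z hz
      have hnz : n z ≠ 0 := hne z (ne_of_gt hz)
      have h1 : -(s₀ : ℂ) / n z = nh z + z - (s₁ : ℂ) / (s₀ : ℂ) := by rw [hnh]; ring
      have h2 : 0 < (-(s₀ : ℂ) / n z).im := by
        rw [h1]
        have := hNh.2.2 z hz
        simp only [Complex.sub_im, Complex.add_im, hconst_im]
        linarith
      have h3 : (-(s₀ : ℂ) / n z).im = s₀ * (n z).im / normSq (n z) := by
        rw [Complex.div_im]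
        simp
        ring
      rw [h3] at h2
      have hsq : 0 < normSq (n z) := normSq_pos.2 hnz
      by_contra hle
      push_neg at hle
      have h4 : s₀ * (n z).im ≤ 0 := mul_nonpos_of_nonneg_of_nonpos hs₀.le hle
      have h5 := div_nonpos_of_nonpos_of_nonneg h4 hsq.le
      linarith
    refine ⟨⟨hanal, hsym, fun z hz => (him_n z hz).le⟩, ?_⟩
    have hnum : Tendsto (fun y : ℝ => (s₀ : ℂ) * nh (Complex.I * y)
        + ((s₁ : ℂ) * nh (Complex.I * y) - (s₁ : ℂ) ^ 2 / s₀) * (Complex.I * y)⁻¹)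
        (atTop ⊔ atBot) (𝓝 0) := by
      have h := ((tc (s₀ : ℂ)).mul hto).add
        ((((tc (s₁ : ℂ)).mul hto).sub (tc ((s₁ : ℂ) ^ 2 / s₀))).mul tendsto_inv_I_mul)
      simpa using h
    have hden : Tendsto (fun y : ℝ => nh (Complex.I * y) * (Complex.I * y)⁻¹ + 1
        - ((s₁ : ℂ) / s₀) * (Complex.I * y)⁻¹) (atTop ⊔ atBot) (𝓝 1) := by
      have h := ((hto.mul tendsto_inv_I_mul).add (tc 1)).sub
        ((tc ((s₁ : ℂ) / s₀)).mul tendsto_inv_I_mul)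
      simpa using h
    have hq := hnum.div hden one_ne_zero
    rw [zero_div] at hq
    refine hq.congr' ?_
    filter_upwards [hyne] with y hy
    have hz0 : (Complex.I * (y : ℂ)) ≠ 0 := mul_I_ne_zero' hy
    have him : (Complex.I * (y : ℂ)).im ≠ 0 := by rw [mul_I_im']; exact hy
    have hnz : n (Complex.I * y) ≠ 0 := hne _ him
    simp only [Pi.div_apply]
    rw [hnh, hEeq y hy]
    have hdeq : (-(s₀ : ℂ) / n (Complex.I * y) - Complex.I * y + (s₁ : ℂ) / (s₀ : ℂ))
          * (Complex.I * y)⁻¹ + 1 - ((s₁ : ℂ) / s₀) * (Complex.I * y)⁻¹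
        = -(s₀ : ℂ) / ((Complex.I * y) * n (Complex.I * y)) := by
      have hyC : (y : ℂ) ≠ 0 := Complex.ofReal_ne_zero.2 hy
      field_simp
      ring
    have hDne : -(s₀ : ℂ) / ((Complex.I * y) * n (Complex.I * y)) ≠ 0 :=
      div_ne_zero (neg_ne_zero.2 hs₀C) (mul_ne_zero hz0 hnz)
    have hyC : (y : ℂ) ≠ 0 := Complex.ofReal_ne_zero.2 hy
    rw [hdeq, div_div_eq_mul_div, div_eq_iff (neg_ne_zero.2 hs₀C)]
    field_simp [Complex.I_ne_zero, hyC, hnz, hs₀C]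
    ring
end
end

section
/- Let s₀ > 0, let γ ∈ ℂ with Im γ > 0, and let f be analytic on the open upper half plane ℂ⁺ with Im f(z) ≥ 0 on ℂ⁺ and lim_{y→+∞} f(iy) = 0. Define n(z) = −s₀/(z + γ + f(z)) for z ∈ ℂ⁺ and n(z) = conj(n(conj z)) for z ∈ ℂ⁻ (the denominator is nonzero on ℂ⁺). Then n is a Nevanlinna function, lim_{y→+∞} (iy)²·(n(iy) + s₀/(iy)) = γ·s₀ and lim_{y→−∞} (iy)²·(n(iy) + s₀/(iy)) = conj(γ)·s₀; consequently y ↦ (iy)²·(n(iy) + s₀/(iy)) is bounded for |y| large (condition (2₀) holds), but there exists no real number s₁ with lim_{y→±∞} (iy)²·(n(iy) + s₀/(iy) + s₁/(iy)²) = 0 (condition (3₀) fails). -/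
open Filter Complex

noncomputable section

open Asymptotics Topology in
private lemma reflect_differentiableAt {g : ℂ → ℂ} {z : ℂ}
    (h : DifferentiableAt ℂ g ((starRingEnd ℂ) z)) :
    DifferentiableAt ℂ (fun w => (starRingEnd ℂ) (g ((starRingEnd ℂ) w))) z := by
  set c : ℂ →+* ℂ := starRingEnd ℂ with hc
  set d : ℂ := deriv g (c z) with hd
  have hg : HasDerivAt g d (c z) := h.hasDerivAt
  have hnew : HasDerivAt (fun w => c (g (c w))) (c d) z := by
    rw [hasDerivAt_iff_isLittleO] at hg ⊢
    have hct : Tendsto (fun w : ℂ => c w) (𝓝 z) (𝓝 (c z)) :=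
      (Complex.continuous_conj.tendsto z)
    have h2 := hg.comp_tendsto hct
    rw [← isLittleO_norm_norm] at h2 ⊢
    refine h2.congr (fun w => ?_) (fun w => ?_)
    · simp only [Function.comp_apply, smul_eq_mul]
      rw [← RCLike.norm_conj (g (c w) - g (c z) - (c w - c z) * d)]
      congr 1
      simp only [map_sub, map_mul, hc, Complex.conj_conj]
    · simp only [Function.comp_apply]
      rw [← RCLike.norm_conj (c w - c z)]
      congr 1
      simp [hc]
  exact hnew.differentiableAt

/-- for `n(z) = -s₀/(z + γ + f(z))` on `ℂ⁺` (extended symmetrically to `ℂ⁻`),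
with `Im γ > 0` and `f` a Nevanlinna-type function on `ℂ⁺` tending to `0` along the positive
imaginary axis, `n` is a Nevanlinna function satisfying condition (2₀) but not (3₀): the two
limits of `(iy)²·(n(iy) + s₀/(iy))` as `y → +∞` and `y → -∞` are `γs₀` and `conj(γ)s₀`. -/
theorem cond_two_zero_not_three_zero_example (s₀ : ℝ) (hs₀ : 0 < s₀) (γ : ℂ)
    (hγ : 0 < γ.im) (f : ℂ → ℂ)
    (hf : AnalyticOn ℂ f {z : ℂ | 0 < z.im})
    (hfim : ∀ z : ℂ, 0 < z.im → 0 ≤ (f z).im)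
    (hflim : Tendsto (fun y : ℝ => f (Complex.I * y)) atTop (nhds 0))
    (n : ℂ → ℂ)
    (hup : ∀ z : ℂ, 0 < z.im → n z = -(s₀ : ℂ) / (z + γ + f z))
    (hdown : ∀ z : ℂ, z.im < 0 → n z = (starRingEnd ℂ) (n ((starRingEnd ℂ) z))) :
    IsNevanlinna n ∧
    Tendsto
        (fun y : ℝ => (Complex.I * y) ^ 2 *
          (n (Complex.I * y) + (s₀ : ℂ) / (Complex.I * y)))
        atTop (nhds (γ * (s₀ : ℂ))) ∧
    Tendsto
        (fun y : ℝ => (Complex.I * y) ^ 2 *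
          (n (Complex.I * y) + (s₀ : ℂ) / (Complex.I * y)))
        atBot (nhds ((starRingEnd ℂ) γ * (s₀ : ℂ))) ∧
    IsBoundedUnder (· ≤ ·) (atTop ⊔ atBot)
        (fun y : ℝ =>
          ‖(Complex.I * y) ^ 2 * (n (Complex.I * y) + (s₀ : ℂ) / (Complex.I * y))‖) ∧
    ¬ ∃ s₁ : ℝ,
        Tendsto
          (fun y : ℝ => (Complex.I * y) ^ 2 *
            (n (Complex.I * y) + (s₀ : ℂ) / (Complex.I * y) +
              (s₁ : ℂ) / (Complex.I * y) ^ 2))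
          (atTop ⊔ atBot) (nhds 0) := by
  -- basic facts
  have hUopen : IsOpen {z : ℂ | 0 < z.im} := isOpen_lt continuous_const Complex.continuous_im
  have hLopen : IsOpen {z : ℂ | z.im < 0} := isOpen_lt Complex.continuous_im continuous_const
  have hSopen : IsOpen {z : ℂ | z.im ≠ 0} :=
    isOpen_compl_singleton.preimage Complex.continuous_im
  have hf' : AnalyticOnNhd ℂ f {z : ℂ | 0 < z.im} :=
    (hUopen.analyticOn_iff_analyticOnNhd).mp hf
  have hdim : ∀ z : ℂ, 0 < z.im → 0 < (z + γ + f z).im := by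
    intro z hz
    have := hfim z hz
    simp only [Complex.add_im]
    linarith
  have hdne : ∀ z : ℂ, 0 < z.im → z + γ + f z ≠ 0 := by
    intro z hz h0
    have := hdim z hz
    rw [h0] at this
    simp at this
  -- differentiability of n on the upper half plane
  have hnUp : ∀ z : ℂ, 0 < z.im → DifferentiableAt ℂ n z := by
    intro z hz
    have heq : n =ᶠ[nhds z] fun w => -(s₀ : ℂ) / (w + γ + f w) :=
      Filter.eventuallyEq_of_mem (hUopen.mem_nhds hz) fun w hw => hup w hw
    refine heq.differentiableAt_iff.mpr ?_
    exact (differentiableAt_const _).div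
      (((differentiableAt_id.add_const γ)).add (hf' z hz).differentiableAt) (hdne z hz)
  -- differentiability of n on the lower half plane
  have hnLow : ∀ z : ℂ, z.im < 0 → DifferentiableAt ℂ n z := by
    intro z hz
    have hcz : 0 < ((starRingEnd ℂ) z).im := by
      simp [Complex.conj_im]; linarith
    have heq : n =ᶠ[nhds z] fun w => (starRingEnd ℂ) (n ((starRingEnd ℂ) w)) :=
      Filter.eventuallyEq_of_mem (hLopen.mem_nhds hz) fun w hw => hdown w hw
    exact heq.differentiableAt_iff.mpr (reflect_differentiableAt (hnUp _ hcz))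
  -- the main expression
  set E : ℝ → ℂ := fun y =>
    (Complex.I * y) ^ 2 * (n (Complex.I * y) + (s₀ : ℂ) / (Complex.I * y)) with hE
  have hIm : ∀ y : ℝ, (Complex.I * (y : ℂ)).im = y := by intro y; simp
  -- limit at +∞
  have h1 : Tendsto (fun y : ℝ => ((y : ℂ))⁻¹) atTop (nhds 0) := by
    have h := tendsto_inv_atTop_zero (𝕜 := ℝ)
    have h2 := (Complex.continuous_ofReal.tendsto 0).comp h
    simpa [Function.comp_def, Complex.ofReal_inv] using h2
  have hinv : Tendsto (fun y : ℝ => (Complex.I * (y : ℂ))⁻¹) atTop (nhds 0) := by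
    have h2 := h1.const_mul (Complex.I)⁻¹
    have h3 : (fun y : ℝ => (Complex.I * (y : ℂ))⁻¹) =
        fun y : ℝ => (Complex.I)⁻¹ * ((y : ℂ))⁻¹ := by
      funext y; rw [mul_inv]
    rw [h3]
    simpa using h2
  have h0' : Tendsto (fun y : ℝ => γ + f (Complex.I * y)) atTop (nhds γ) := by
    have := tendsto_const_nhds (x := γ) (f := atTop (α := ℝ)) |>.add hflim
    simpa using this
  have hw : Tendsto (fun y : ℝ => (γ + f (Complex.I * y)) / (Complex.I * y)) atTop
      (nhds 0) := by
    have := h0'.mul hinv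
    simpa [div_eq_mul_inv] using this
  have hF : Tendsto (fun y : ℝ => (s₀ : ℂ) * (γ + f (Complex.I * y)) /
      (1 + (γ + f (Complex.I * y)) / (Complex.I * y))) atTop (nhds (γ * s₀)) := by
    have h3 : Tendsto (fun y : ℝ => (s₀ : ℂ) * (γ + f (Complex.I * y))) atTop
        (nhds ((s₀ : ℂ) * γ)) := tendsto_const_nhds.mul h0'
    have h4 : Tendsto (fun y : ℝ => 1 + (γ + f (Complex.I * y)) / (Complex.I * y)) atTop
        (nhds 1) := by
      have := tendsto_const_nhds (x := (1 : ℂ)) (f := atTop (α := ℝ)) |>.add hw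
      simpa using this
    have h5 := h3.div h4 one_ne_zero
    have : (s₀ : ℂ) * γ / 1 = γ * s₀ := by ring
    rwa [this] at h5
  have hTopEq : ∀ y : ℝ, 0 < y → E y = (s₀ : ℂ) * (γ + f (Complex.I * y)) /
      (1 + (γ + f (Complex.I * y)) / (Complex.I * y)) := by
    intro y hy
    set z : ℂ := Complex.I * y with hz
    have hzim : 0 < z.im := by rw [hz, hIm]; exact hy
    have hzne : z ≠ 0 := by
      intro h; rw [h] at hzim; simp at hzim
    have hd := hdne z hzim
    have hden : 1 + (γ + f z) / z = (z + γ + f z) / z := by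
      field_simp
      ring
    rw [hE]
    simp only
    rw [hup z hzim, hden, div_div_eq_mul_div]
    field_simp
    have hy0 : (y : ℂ) ≠ 0 := by exact_mod_cast hy.ne'
    rw [hz]
    field_simp
    ring_nf
  have hTop : Tendsto E atTop (nhds (γ * s₀)) := by
    refine hF.congr' ?_
    filter_upwards [eventually_gt_atTop (0 : ℝ)] with y hy
    exact (hTopEq y hy).symm
  -- limit at -∞
  have hBotEq : ∀ y : ℝ, y < 0 → E y = (starRingEnd ℂ) (E (-y)) := by
    intro y hy
    have hzim : (Complex.I * (y : ℂ)).im < 0 := by rw [hIm]; exact hy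
    have hcz : (starRingEnd ℂ) (Complex.I * (y : ℂ)) = Complex.I * ((-y : ℝ) : ℂ) := by
      rw [map_mul, Complex.conj_I, Complex.conj_ofReal]
      push_cast
      ring
    rw [hE]
    simp only
    rw [hdown _ hzim, hcz]
    set m := n (Complex.I * ((-y : ℝ) : ℂ)) with hm
    simp only [map_mul, map_pow, map_add, map_div₀, Complex.conj_I, Complex.conj_ofReal]
    push_cast
    ring
  have hBot : Tendsto E atBot (nhds ((starRingEnd ℂ) γ * s₀)) := by
    have h6 : Tendsto (fun y : ℝ => (starRingEnd ℂ) (E (-y))) atBot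
        (nhds ((starRingEnd ℂ) (γ * s₀))) :=
      (Complex.continuous_conj.tendsto _).comp (hTop.comp tendsto_neg_atBot_atTop)
    have h7 : (starRingEnd ℂ) (γ * (s₀ : ℂ)) = (starRingEnd ℂ) γ * s₀ := by
      simp [map_mul, Complex.conj_ofReal]
    rw [h7] at h6
    refine h6.congr' ?_
    filter_upwards [eventually_lt_atBot (0 : ℝ)] with y hy
    exact (hBotEq y hy).symm
  refine ⟨⟨?_, ?_, ?_⟩, hTop, hBot, ?_, ?_⟩
  · -- analyticity
    refine (hSopen.analyticOn_iff_analyticOnNhd).mpr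
      ((DifferentiableOn.analyticOnNhd ?_ hSopen))
    intro z hz
    rcases lt_or_gt_of_ne (hz : z.im ≠ 0) with h | h
    · exact (hnLow z h).differentiableWithinAt
    · exact (hnUp z h).differentiableWithinAt
  · -- conjugation symmetry
    intro z hz
    rcases lt_or_gt_of_ne hz with h | h
    · rw [hdown z h, Complex.conj_conj]
    · have : ((starRingEnd ℂ) z).im < 0 := by simp [Complex.conj_im]; linarith
      rw [hdown _ this, Complex.conj_conj]
  · -- nonnegative imaginary part
    intro z hz
    rw [hup z hz, Complex.div_im]
    have h1 := hdim z hz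
    have h2 := Complex.normSq_nonneg (z + γ + f z)
    simp only [Complex.neg_im, Complex.ofReal_im, neg_zero, zero_mul, zero_div,
      Complex.neg_re, Complex.ofReal_re, zero_sub, neg_neg, neg_mul]
    rw [neg_div, neg_neg]
    positivity
  · -- boundedness
    rw [Filter.IsBoundedUnder, Filter.map_sup]
    exact Filter.isBounded_sup (hTop.norm.isBoundedUnder_le) (hBot.norm.isBoundedUnder_le)
  · -- no s₁
    rintro ⟨s₁, hs⟩
    set E3 : ℝ → ℂ := fun y => (Complex.I * y) ^ 2 *
      (n (Complex.I * y) + (s₀ : ℂ) / (Complex.I * y) + (s₁ : ℂ) / (Complex.I * y) ^ 2)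
      with hE3
    have key : ∀ y : ℝ, y ≠ 0 → E y = E3 y - s₁ := by
      intro y hy
      have hzne : (Complex.I * (y : ℂ)) ≠ 0 := by
        simp [Complex.ext_iff, hy]
      rw [hE, hE3]
      simp only
      field_simp
      have hy' : (y : ℂ) ≠ 0 := by exact_mod_cast hy
      field_simp
      ring
    have hsTop : Tendsto E3 atTop (nhds 0) := hs.mono_left le_sup_left
    have hsBot : Tendsto E3 atBot (nhds 0) := hs.mono_left le_sup_right
    have hETop : Tendsto E atTop (nhds (0 - s₁)) := by
      refine (hsTop.sub tendsto_const_nhds).congr' ?_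
      filter_upwards [eventually_gt_atTop (0 : ℝ)] with y hy
      exact (key y hy.ne').symm
    have hEBot : Tendsto E atBot (nhds (0 - s₁)) := by
      refine (hsBot.sub tendsto_const_nhds).congr' ?_
      filter_upwards [eventually_lt_atBot (0 : ℝ)] with y hy
      exact (key y hy.ne).symm
    have e1 : γ * (s₀ : ℂ) = 0 - s₁ := tendsto_nhds_unique hTop hETop
    have e2 : (starRingEnd ℂ) γ * (s₀ : ℂ) = 0 - s₁ := tendsto_nhds_unique hBot hEBot
    have e3 : γ * (s₀ : ℂ) = (starRingEnd ℂ) γ * (s₀ : ℂ) := by rw [e1, e2]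
    have e4 : γ = (starRingEnd ℂ) γ :=
      mul_right_cancel₀ (Complex.ofReal_ne_zero.mpr hs₀.ne') e3
    have e5 := congrArg Complex.im e4
    simp [Complex.conj_im] at e5
    linarith
end
end

section
/- Let σ be a finite positive Borel measure on ℝ, let n(z) = ∫_ℝ dσ(t)/(t − z), set s₀ = σ(ℝ), and suppose that for some real number s₁ the function y ↦ (iy)³·(n(iy) + s₀/(iy) + s₁/(iy)²) is bounded as y → +∞. Then ∫_ℝ t² dσ(t) < ∞, s₁ = ∫_ℝ t dσ(t), and, with s₂ := ∫_ℝ t² dσ(t), one has lim_{y→±∞} (iy)³·(n(iy) + s₀/(iy) + s₁/(iy)² + s₂/(iy)³) = 0; that is, n(iy) = −s₀/(iy) − s₁/(iy)² − s₂/(iy)³ + o(|y|^{−3}) as y → ±∞. -/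
open Filter Complex MeasureTheory

noncomputable section

lemma sub_ne (t y : ℝ) (hy : y ≠ 0) : ((t:ℂ) - Complex.I * y) ≠ 0 := by
  intro h
  have := congrArg Complex.im h
  simp at this
  exact hy this

lemma norm_sub' (t y : ℝ) : ‖((t:ℂ) - Complex.I * y)‖ = Real.sqrt (t^2 + y^2) := by
  rw [Complex.norm_def, Complex.normSq_apply]
  simp
  ring_nf

lemma int_inv (σ : Measure ℝ) [IsFiniteMeasure σ] (y : ℝ) (hy : y ≠ 0) :
    Integrable (fun t : ℝ => ((t:ℂ) - Complex.I*y)⁻¹) σ := by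
  have hc : Continuous (fun t : ℝ => ((t:ℂ) - Complex.I*y)⁻¹) :=
    ((Complex.continuous_ofReal.sub continuous_const).inv₀ (fun t => sub_ne t y hy))
  refine Integrable.mono' (integrable_const (|y|⁻¹)) hc.aestronglyMeasurable ?_
  filter_upwards with t
  rw [norm_inv, norm_sub']
  rw [inv_le_inv₀ (by positivity) (by positivity)]
  rw [← Real.sqrt_sq_eq_abs]
  exact Real.sqrt_le_sqrt (by nlinarith)

lemma int_frac (σ : Measure ℝ) [IsFiniteMeasure σ] (y : ℝ) (hy : y ≠ 0) :
    Integrable (fun t : ℝ => (Complex.I*y)^2 * t * ((t:ℂ) - Complex.I*y)⁻¹) σ := by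
  have hc : Continuous (fun t : ℝ => (Complex.I*y)^2 * t * ((t:ℂ) - Complex.I*y)⁻¹) := by
    fun_prop (disch := intro t; exact sub_ne t y hy)
  refine Integrable.mono' (integrable_const (y^2)) hc.aestronglyMeasurable ?_
  filter_upwards with t
  rw [norm_mul, norm_mul, norm_inv, norm_sub']
  have h1 : ‖(Complex.I*(y:ℂ))^2‖ = y^2 := by
    rw [norm_pow]; simp
  rw [h1]
  have h2 : ‖(t:ℂ)‖ * (Real.sqrt (t^2+y^2))⁻¹ ≤ 1 := by
    rw [Complex.norm_real, Real.norm_eq_abs]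
    rw [mul_inv_le_iff₀ (by positivity), one_mul]
    rw [← Real.sqrt_sq_eq_abs]
    exact Real.sqrt_le_sqrt (by nlinarith)
  nlinarith [sq_nonneg y]

lemma pt_re (t y : ℝ) (hy : y ≠ 0) :
    ((Complex.I*y)^2 * t * ((t:ℂ) - Complex.I*y)⁻¹).re = -(y^2*t^2/(t^2+y^2)) := by
  have h : t^2 + y^2 ≠ 0 := by positivity
  rw [Complex.inv_def]
  simp [Complex.normSq_apply, Complex.ext_iff, pow_two]
  field_simp

lemma pt_im (t y : ℝ) (hy : y ≠ 0) :
    ((Complex.I*y)^2 * t * ((t:ℂ) - Complex.I*y)⁻¹).im = -(y^3*t/(t^2+y^2)) := by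
  have h : t^2 + y^2 ≠ 0 := by positivity
  rw [Complex.inv_def]
  simp [Complex.normSq_apply, Complex.ext_iff, pow_two]
  field_simp

lemma E_eq (σ : Measure ℝ) [IsFiniteMeasure σ]
    (n : ℂ → ℂ) (hn : ∀ z : ℂ, z.im ≠ 0 → n z = ∫ t : ℝ, ((t : ℂ) - z)⁻¹ ∂σ)
    (s₀ : ℝ) (hs₀ : s₀ = (σ Set.univ).toReal) (s₁ : ℝ) (y : ℝ) (hy : y ≠ 0) :
    (Complex.I*y)^3 * (n (Complex.I*y) + (s₀:ℂ)/(Complex.I*y) + (s₁:ℂ)/(Complex.I*y)^2)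
      = (∫ t : ℝ, (Complex.I*y)^2 * t * ((t:ℂ) - Complex.I*y)⁻¹ ∂σ) + s₁*(Complex.I*y) := by
  set z : ℂ := Complex.I*y with hzdef
  have hz : z ≠ 0 := by simp [hzdef, hy, Complex.I_ne_zero]
  rw [hn z (by simp [hzdef, hy])]
  have hconst : ((s₀:ℂ)) * z^2 = ∫ _ : ℝ, z^2 ∂σ := by
    rw [integral_const, hs₀]
    rw [← Complex.coe_smul]
    simp [smul_eq_mul, Measure.real]
  have step1 : z^3 * ((∫ t : ℝ, ((t:ℂ) - z)⁻¹ ∂σ) + (s₀:ℂ)/z + (s₁:ℂ)/z^2)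
      = (∫ t : ℝ, z^3 * ((t:ℂ) - z)⁻¹ ∂σ) + (s₀:ℂ)*z^2 + (s₁:ℂ)*z := by
    rw [integral_const_mul]
    field_simp
  rw [step1, hconst]
  rw [← integral_add ((int_inv σ y hy).const_mul _) (integrable_const _)]
  congr 1
  apply integral_congr_ae
  filter_upwards with t
  have h : (t:ℂ) - z ≠ 0 := sub_ne t y hy
  rw [← hzdef]
  field_simp
  ring

lemma int_g (σ : Measure ℝ) [IsFiniteMeasure σ] (y : ℝ) :
    Integrable (fun t : ℝ => y^2*t^2/(t^2+y^2)) σ := by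
  rcases eq_or_ne y 0 with rfl | hy
  · simp
  have hc : Continuous (fun t : ℝ => y^2*t^2/(t^2+y^2)) := by
    fun_prop (disch := intro t; positivity)
  refine Integrable.mono' (integrable_const (y^2)) hc.aestronglyMeasurable ?_
  filter_upwards with t
  rw [Real.norm_eq_abs, _root_.abs_of_nonneg (by positivity)]
  rw [div_le_iff₀ (by positivity)]
  nlinarith [sq_nonneg t, sq_nonneg y]

lemma aux_tendsto (σ : Measure ℝ) [IsFiniteMeasure σ]
    (hσ2 : Integrable (fun t : ℝ => t^2) σ)
    {l : Filter ℝ} [l.IsCountablyGenerated] (hl : Tendsto (fun y : ℝ => |y|) l atTop) :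
    Tendsto (fun y : ℝ => ∫ t : ℝ, (t:ℂ)^3 * ((t:ℂ) - Complex.I*y)⁻¹ ∂σ) l (nhds 0) := by
  have hev : ∀ᶠ y in l, (1:ℝ) ≤ |y| := hl.eventually_ge_atTop 1
  have h := tendsto_integral_filter_of_dominated_convergence (μ := σ) (l := l)
    (F := fun (y : ℝ) (t : ℝ) => (t:ℂ)^3 * ((t:ℂ) - Complex.I*y)⁻¹)
    (f := fun _ : ℝ => (0:ℂ)) (bound := fun t : ℝ => t^2)
    ?_ ?_ hσ2 ?_
  · simpa using h
  · filter_upwards [hev] with y hy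
    have hyne : y ≠ 0 := by intro h0; rw [h0] at hy; simp at hy; linarith
    have hc : Continuous (fun t : ℝ => (t:ℂ)^3 * ((t:ℂ) - Complex.I*y)⁻¹) := by
      fun_prop (disch := intro t; exact sub_ne t y hyne)
    exact hc.aestronglyMeasurable
  · filter_upwards [hev] with y hy
    have hyne : y ≠ 0 := by intro h0; rw [h0] at hy; simp at hy; linarith
    filter_upwards with t
    rw [norm_mul, norm_pow, norm_inv, norm_sub', Complex.norm_real, Real.norm_eq_abs]
    rw [mul_inv_le_iff₀ (by positivity)]
    have hle : |t| ≤ Real.sqrt (t^2+y^2) := by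
      rw [← Real.sqrt_sq_eq_abs]
      exact Real.sqrt_le_sqrt (by nlinarith)
    nlinarith [abs_nonneg t, _root_.sq_abs t, Real.sqrt_nonneg (t^2+y^2), sq_nonneg t]
  · filter_upwards with t
    apply squeeze_zero_norm' (a := fun y : ℝ => |t|^3 * |y|⁻¹)
    · filter_upwards [hev] with y hy
      have hyne : y ≠ 0 := by intro h0; rw [h0] at hy; simp at hy; linarith
      rw [norm_mul, norm_pow, norm_inv, norm_sub', Complex.norm_real, Real.norm_eq_abs]
      gcongr
      rw [← Real.sqrt_sq_eq_abs]
      exact Real.sqrt_le_sqrt (by nlinarith)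
    · have : Tendsto (fun y : ℝ => |y|⁻¹) l (nhds 0) :=
        (tendsto_inv_atTop_zero).comp hl
      simpa using this.const_mul (|t|^3)


lemma G_eq (σ : Measure ℝ) [IsFiniteMeasure σ]
    (n : ℂ → ℂ) (hn : ∀ z : ℂ, z.im ≠ 0 → n z = ∫ t : ℝ, ((t : ℂ) - z)⁻¹ ∂σ)
    (s₀ : ℝ) (hs₀ : s₀ = (σ Set.univ).toReal)
    (h1 : Integrable (fun t : ℝ => t) σ) (h2 : Integrable (fun t : ℝ => t^2) σ)
    (y : ℝ) (hy : y ≠ 0) :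
    (Complex.I*y)^3 * (n (Complex.I*y) + (s₀:ℂ)/(Complex.I*y)
        + ((∫ t : ℝ, t ∂σ : ℝ):ℂ)/(Complex.I*y)^2
        + ((∫ t : ℝ, t^2 ∂σ : ℝ):ℂ)/(Complex.I*y)^3)
      = ∫ t : ℝ, (t:ℂ)^3 * ((t:ℂ) - Complex.I*y)⁻¹ ∂σ := by
  set z : ℂ := Complex.I*y with hzdef
  have hz : z ≠ 0 := by simp [hzdef, hy, Complex.I_ne_zero]
  rw [hn z (by simp [hzdef, hy])]
  have hconst : ((s₀:ℂ)) * z^2 = ∫ _ : ℝ, z^2 ∂σ := by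
    rw [integral_const, hs₀, ← Complex.coe_smul]
    simp [smul_eq_mul, Measure.real]
  have hlin : ((∫ t : ℝ, t ∂σ : ℝ):ℂ) * z = ∫ t : ℝ, (t:ℂ) * z ∂σ := by
    rw [integral_mul_const]
    congr 1
    exact integral_ofReal.symm
  have hsq : ((∫ t : ℝ, t^2 ∂σ : ℝ):ℂ) = ∫ t : ℝ, ((t:ℂ))^2 ∂σ := by
    simp_rw [← Complex.ofReal_pow]
    exact integral_ofReal.symm
  have step1 : z^3 * ((∫ t : ℝ, ((t:ℂ) - z)⁻¹ ∂σ) + (s₀:ℂ)/z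
        + ((∫ t : ℝ, t ∂σ : ℝ):ℂ)/z^2 + ((∫ t : ℝ, t^2 ∂σ : ℝ):ℂ)/z^3)
      = (∫ t : ℝ, z^3 * ((t:ℂ) - z)⁻¹ ∂σ) + (s₀:ℂ)*z^2
        + ((∫ t : ℝ, t ∂σ : ℝ):ℂ)*z + ((∫ t : ℝ, t^2 ∂σ : ℝ):ℂ) := by
    rw [integral_const_mul]
    field_simp
  rw [step1, hconst, hlin, hsq]
  have i1 : Integrable (fun t : ℝ => z^3 * ((t:ℂ) - z)⁻¹) σ := (int_inv σ y hy).const_mul _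
  have i2 : Integrable (fun _ : ℝ => z^2) σ := integrable_const _
  have i3 : Integrable (fun t : ℝ => (t:ℂ) * z) σ := h1.ofReal.mul_const _
  have i4 : Integrable (fun t : ℝ => ((t:ℂ))^2) σ := by
    have := h2.ofReal (𝕜 := ℂ)
    simpa using this
  have expand : ∀ t : ℝ, (t:ℂ)^3 * ((t:ℂ) - z)⁻¹
      = z^3*((t:ℂ)-z)⁻¹ + z^2 + (t:ℂ)*z + (t:ℂ)^2 := by
    intro t
    have h : (t:ℂ) - z ≠ 0 := sub_ne t y hy
    field_simp
    ring
  have j2 : Integrable (fun t : ℝ => z^3*((t:ℂ)-z)⁻¹ + z^2) σ := i1.add i2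
  have j3 : Integrable (fun t : ℝ => z^3*((t:ℂ)-z)⁻¹ + z^2 + (t:ℂ)*z) σ := j2.add i3
  rw [integral_congr_ae (ae_of_all _ expand)]
  rw [integral_add j3 i4, integral_add j2 i3, integral_add i1 i2]


/-- if the Cauchy transform `n` of a finite positive measure `σ` satisfies,
for some real `s₁`, that `(iy)³·(n(iy) + s₀/(iy) + s₁/(iy)²)` is bounded as `y → +∞`,
then `∫ t² dσ < ∞`, `s₁ = ∫ t dσ`, and with `s₂ = ∫ t² dσ`,
`(iy)³·(n(iy) + s₀/(iy) + s₁/(iy)² + s₂/(iy)³) → 0` as `y → ±∞`. -/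
theorem cauchy_transform_big_O_implies_little_o
    (σ : Measure ℝ) [IsFiniteMeasure σ]
    (n : ℂ → ℂ) (hn : ∀ z : ℂ, z.im ≠ 0 → n z = ∫ t : ℝ, ((t : ℂ) - z)⁻¹ ∂σ)
    (s₀ : ℝ) (hs₀ : s₀ = (σ Set.univ).toReal)
    (s₁ : ℝ)
    (hbd : IsBoundedUnder (· ≤ ·) atTop
      (fun y : ℝ =>
        ‖(Complex.I * y) ^ 3 *
          (n (Complex.I * y) + (s₀ : ℂ) / (Complex.I * y) +
            (s₁ : ℂ) / (Complex.I * y) ^ 2)‖)) :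
    Integrable (fun t : ℝ => t ^ 2) σ ∧
    s₁ = ∫ t : ℝ, t ∂σ ∧
    Tendsto
      (fun y : ℝ => (Complex.I * y) ^ 3 *
        (n (Complex.I * y) + (s₀ : ℂ) / (Complex.I * y) +
          (s₁ : ℂ) / (Complex.I * y) ^ 2 +
          ((∫ t : ℝ, t ^ 2 ∂σ : ℝ) : ℂ) / (Complex.I * y) ^ 3))
      (atTop ⊔ atBot) (nhds 0) := by
  obtain ⟨C, hC0⟩ := hbd
  have hC : ∀ᶠ y : ℝ in atTop,
      ‖(Complex.I * y) ^ 3 *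
          (n (Complex.I * y) + (s₀ : ℂ) / (Complex.I * y) +
            (s₁ : ℂ) / (Complex.I * y) ^ 2)‖ ≤ C := eventually_map.mp hC0
  obtain ⟨y₀, hy₀⟩ := eventually_atTop.1 hC
  set M : ℝ := max y₀ 1 with hM
  -- real/imaginary parts of the integral expression
  have hre : ∀ y : ℝ, y ≠ 0 →
      ((∫ t : ℝ, (Complex.I*y)^2 * t * ((t:ℂ) - Complex.I*y)⁻¹ ∂σ) + (s₁:ℂ)*(Complex.I*y)).re
        = -∫ t : ℝ, y^2*t^2/(t^2+y^2) ∂σ := by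
    intro y hy
    rw [Complex.add_re]
    have h2 := integral_re (int_frac σ y hy)
    simp only [RCLike.re_to_complex] at h2
    rw [← h2, integral_congr_ae (ae_of_all _ fun t => pt_re t y hy), integral_neg]
    simp
  have him : ∀ y : ℝ, y ≠ 0 →
      ((∫ t : ℝ, (Complex.I*y)^2 * t * ((t:ℂ) - Complex.I*y)⁻¹ ∂σ) + (s₁:ℂ)*(Complex.I*y)).im
        = (∫ t : ℝ, -(y^3*t/(t^2+y^2)) ∂σ) + s₁*y := by
    intro y hy
    rw [Complex.add_im]
    have h2 := integral_im (int_frac σ y hy)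
    simp only [RCLike.im_to_complex] at h2
    rw [← h2, integral_congr_ae (ae_of_all _ fun t => pt_im t y hy)]
    simp
  -- Part 1 : Integrable t²
  have key : ∀ y : ℝ, M ≤ y → ∫ t : ℝ, y^2*t^2/(t^2+y^2) ∂σ ≤ C := by
    intro y hy
    have hy1 : (1:ℝ) ≤ y := le_trans (le_max_right _ _) hy
    have hyne : y ≠ 0 := by linarith
    have hb := hy₀ y (le_trans (le_max_left _ _) hy)
    rw [E_eq σ n hn s₀ hs₀ s₁ y hyne] at hb
    set W := (∫ t : ℝ, (Complex.I*y)^2 * t * ((t:ℂ) - Complex.I*y)⁻¹ ∂σ) + (s₁:ℂ)*(Complex.I*y)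
    have habs : |W.re| ≤ ‖W‖ := by
      exact Complex.abs_re_le_norm W
    rw [hre y hyne] at habs
    have hnn : 0 ≤ ∫ t : ℝ, y^2*t^2/(t^2+y^2) ∂σ :=
      integral_nonneg (fun t => by positivity)
    rw [abs_neg, _root_.abs_of_nonneg hnn] at habs
    linarith
  set a : ℕ → ℝ := fun k => M + k with ha
  have haM : ∀ k, M ≤ a k := fun k => le_add_of_nonneg_right (by positivity)
  have ha1 : ∀ k, (1:ℝ) ≤ a k := fun k => le_trans (le_max_right _ _) (haM k)
  have hane : ∀ k, a k ≠ 0 := fun k => by have := ha1 k; intro h; rw [h] at this; linarith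
  have hatop : Tendsto a atTop atTop :=
    tendsto_atTop_add_const_left _ M tendsto_natCast_atTop_atTop
  have hptlim : ∀ t : ℝ, Tendsto (fun k => (a k)^2*t^2/(t^2+(a k)^2)) atTop (nhds (t^2)) := by
    intro t
    have h0 : Tendsto (fun k => t^2+(a k)^2) atTop atTop := by
      apply tendsto_atTop_add_const_left
      exact (tendsto_pow_atTop (two_ne_zero)).comp hatop
    have h1 : Tendsto (fun k => t^4/(t^2+(a k)^2)) atTop (nhds 0) :=
      Tendsto.div_atTop tendsto_const_nhds h0
    have heq : ∀ k, (a k)^2*t^2/(t^2+(a k)^2) = t^2 - t^4/(t^2+(a k)^2) := by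
      intro k
      have hk := hane k
      have : t^2+(a k)^2 ≠ 0 := by positivity
      field_simp
      ring
    have := (tendsto_const_nhds (x := t^2) (f := atTop)).sub h1
    rw [sub_zero] at this
    exact this.congr (fun k => (heq k).symm)
  have hmeas : ∀ k, Measurable fun t : ℝ => ENNReal.ofReal ((a k)^2*t^2/(t^2+(a k)^2)) := by
    intro k
    apply ENNReal.measurable_ofReal.comp
    apply Continuous.measurable
    have hk := hane k
    fun_prop (disch := intro t; positivity)
  have hfatou := lintegral_liminf_le (μ := σ) (u := atTop) hmeas
  have hLHS : (∫⁻ t : ℝ, Filter.liminf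
        (fun k => ENNReal.ofReal ((a k)^2*t^2/(t^2+(a k)^2))) atTop ∂σ)
      = ∫⁻ t : ℝ, ENNReal.ofReal (t^2) ∂σ :=
    lintegral_congr fun t =>
      ((ENNReal.continuous_ofReal.tendsto _).comp (hptlim t)).liminf_eq
  have hRHS : (Filter.liminf
        (fun k => ∫⁻ t : ℝ, ENNReal.ofReal ((a k)^2*t^2/(t^2+(a k)^2)) ∂σ) atTop)
      ≤ ENNReal.ofReal C := by
    have hk : ∀ k, (∫⁻ t : ℝ, ENNReal.ofReal ((a k)^2*t^2/(t^2+(a k)^2)) ∂σ)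
        ≤ ENNReal.ofReal C := by
      intro k
      rw [← ofReal_integral_eq_lintegral_ofReal (int_g σ (a k))
        (ae_of_all _ fun t => by positivity)]
      exact ENNReal.ofReal_le_ofReal (key (a k) (haM k))
    calc Filter.liminf _ atTop ≤ Filter.liminf (fun _ : ℕ => ENNReal.ofReal C) atTop :=
          liminf_le_liminf (Eventually.of_forall hk)
      _ = ENNReal.ofReal C := liminf_const _
  have hσ2 : Integrable (fun t : ℝ => t^2) σ := by
    refine ⟨(continuous_pow 2).aestronglyMeasurable, ?_⟩
    have heq : (∫⁻ t : ℝ, ‖t^2‖ₑ ∂σ) = ∫⁻ t : ℝ, ENNReal.ofReal (t^2) ∂σ := by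
      apply lintegral_congr
      intro t
      rw [← ofReal_norm_eq_enorm, Real.norm_eq_abs, _root_.abs_of_nonneg (sq_nonneg t)]
    rw [HasFiniteIntegral, heq]
    calc (∫⁻ t : ℝ, ENNReal.ofReal (t^2) ∂σ) ≤ ENNReal.ofReal C := by
          rw [← hLHS]; exact le_trans hfatou hRHS
      _ < ⊤ := ENNReal.ofReal_lt_top
  -- Part 2 : s₁ = ∫ t
  have hσ1 : Integrable (fun t : ℝ => t) σ := by
    have hb : Integrable (fun t : ℝ => t^2 + 1) σ := hσ2.add (integrable_const 1)
    refine Integrable.mono' hb measurable_id.aestronglyMeasurable ?_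
    filter_upwards with t
    rw [Real.norm_eq_abs]
    nlinarith [sq_nonneg (|t| - 1), _root_.sq_abs t, abs_nonneg t]
  have int_h : ∀ y : ℝ, y ≠ 0 → Integrable (fun t : ℝ => y*t^3/(t^2+y^2)) σ := by
    intro y hy
    refine Integrable.mono' hσ2 ?_ ?_
    · apply Continuous.aestronglyMeasurable
      fun_prop (disch := intro t; positivity)
    · filter_upwards with t
      rw [Real.norm_eq_abs, _root_.abs_div, _root_.abs_of_nonneg (by positivity : (0:ℝ) ≤ t^2+y^2),
        div_le_iff₀ (by positivity), abs_mul, _root_.abs_pow]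
      nlinarith [sq_nonneg (|t| - |y|), _root_.sq_abs t, _root_.sq_abs y, abs_nonneg t,
        abs_nonneg y, sq_nonneg t, sq_nonneg (|t| * (|t| - |y|))]
  have key2 : ∀ y : ℝ, M ≤ y →
      |y*((∫ t : ℝ, t ∂σ) - s₁)| ≤ C + ∫ t : ℝ, t^2 ∂σ := by
    intro y hy
    have hy1 : (1:ℝ) ≤ y := le_trans (le_max_right _ _) hy
    have hyne : y ≠ 0 := by linarith
    have hb := hy₀ y (le_trans (le_max_left _ _) hy)
    rw [E_eq σ n hn s₀ hs₀ s₁ y hyne] at hb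
    set W := (∫ t : ℝ, (Complex.I*y)^2 * t * ((t:ℂ) - Complex.I*y)⁻¹ ∂σ) + (s₁:ℂ)*(Complex.I*y)
    have habs : |W.im| ≤ ‖W‖ := by
      exact Complex.abs_im_le_norm W
    have himy := him y hyne
    have hid : (∫ t : ℝ, -(y^3*t/(t^2+y^2)) ∂σ)
        = (-y)*(∫ t : ℝ, t ∂σ) + ∫ t : ℝ, y*t^3/(t^2+y^2) ∂σ := by
      have hpt : ∀ t : ℝ, -(y^3*t/(t^2+y^2)) = (-y)*t + y*t^3/(t^2+y^2) := by
        intro t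
        have : t^2+y^2 ≠ 0 := by positivity
        field_simp
        ring
      rw [integral_congr_ae (ae_of_all _ hpt),
        integral_add (hσ1.const_mul (-y)) (int_h y hyne), integral_const_mul]
    have hV : |∫ t : ℝ, y*t^3/(t^2+y^2) ∂σ| ≤ ∫ t : ℝ, t^2 ∂σ := by
      calc |∫ t : ℝ, y*t^3/(t^2+y^2) ∂σ| ≤ ∫ t : ℝ, |y*t^3/(t^2+y^2)| ∂σ := by
            have h := norm_integral_le_integral_norm (μ := σ) (fun t : ℝ => y*t^3/(t^2+y^2))
            simpa only [Real.norm_eq_abs] using h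
        _ ≤ ∫ t : ℝ, t^2 ∂σ := by
            refine integral_mono (int_h y hyne).abs hσ2 ?_
            intro t
            show |y*t^3/(t^2+y^2)| ≤ t^2
            rw [_root_.abs_div, _root_.abs_of_nonneg (by positivity : (0:ℝ) ≤ t^2+y^2),
              div_le_iff₀ (by positivity), abs_mul, _root_.abs_pow]
            nlinarith [sq_nonneg (|t| - |y|), _root_.sq_abs t, _root_.sq_abs y, abs_nonneg t,
              abs_nonneg y, sq_nonneg t, sq_nonneg (|t| * (|t| - |y|))]
    have heq : y*((∫ t : ℝ, t ∂σ) - s₁) = -(W.im) + ∫ t : ℝ, y*t^3/(t^2+y^2) ∂σ := by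
      rw [himy, hid]
      ring
    rw [heq]
    calc |(-(W.im)) + ∫ t : ℝ, y*t^3/(t^2+y^2) ∂σ|
        ≤ |(-(W.im))| + |∫ t : ℝ, y*t^3/(t^2+y^2) ∂σ| := abs_add_le _ _
      _ ≤ C + ∫ t : ℝ, t^2 ∂σ := by
          rw [abs_neg]
          exact add_le_add (le_trans habs hb) hV
  have hs₁ : s₁ = ∫ t : ℝ, t ∂σ := by
    have htend : Tendsto (fun y : ℝ => (C + ∫ t : ℝ, t^2 ∂σ)/y) atTop (nhds 0) :=
      Tendsto.div_atTop tendsto_const_nhds tendsto_id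
    have hle : |(∫ t : ℝ, t ∂σ) - s₁| ≤ 0 := by
      apply ge_of_tendsto htend
      filter_upwards [eventually_ge_atTop M, eventually_ge_atTop (1:ℝ)] with y hy hy1
      have h := key2 y hy
      rw [abs_mul, _root_.abs_of_nonneg (by linarith : (0:ℝ) ≤ y)] at h
      rw [le_div_iff₀ (by linarith : (0:ℝ) < y)]
      linarith [h, mul_comm (|(∫ t : ℝ, t ∂σ) - s₁|) y]
    have := abs_nonneg ((∫ t : ℝ, t ∂σ) - s₁)
    have h0 : (∫ t : ℝ, t ∂σ) - s₁ = 0 := by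
      rw [← abs_eq_zero]; linarith
    linarith [h0]
  -- Part 3
  refine ⟨hσ2, hs₁, ?_⟩
  rw [Filter.tendsto_sup]
  constructor
  · apply Tendsto.congr' _ (aux_tendsto σ hσ2 (tendsto_abs_atTop_atTop))
    filter_upwards [eventually_ne_atTop (0:ℝ)] with y hy
    rw [hs₁]
    exact (G_eq σ n hn s₀ hs₀ hσ1 hσ2 y hy).symm
  · apply Tendsto.congr' _ (aux_tendsto σ hσ2 (tendsto_abs_atBot_atTop))
    filter_upwards [eventually_ne_atBot (0:ℝ)] with y hy
    rw [hs₁]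
    exact (G_eq σ n hn s₀ hs₀ hσ1 hσ2 y hy).symm
end
end

section
/- Let p ≥ 1 and let n be a Nevanlinna function satisfying condition (1_p) with coefficients s₀,…,s_{2p} and s₀ > 0. Then the Schur transform n̂(z) = −s₀/n(z) − z + s₁/s₀ (well defined since n is nowhere zero on ℂ∖ℝ) satisfies condition (1_{p−1}) with coefficients ŝ₀,…,ŝ_{2p−2} given by ŝ_j = ((−1)^{j+1}/s₀^{j+2})·det M_j, where M_j is the (j+2)×(j+2) matrix whose (i,ℓ) entry (1 ≤ i, ℓ ≤ j+2) equals s_{i−ℓ+1} if i − ℓ + 1 ≥ 0 and 0 otherwise. -/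
open Filter Complex

noncomputable section

/-- Condition `(1_q)` with coefficients `s 0, …, s (2q)`:
`n(iy) = -s₀/(iy) - s₁/(iy)² - ⋯ - s_{2q}/(iy)^{2q+1} + o(|y|^{-(2q+1)})` as `y → ±∞`. -/
def Cond1 (n : ℂ → ℂ) (q : ℕ) (s : ℕ → ℝ) : Prop :=
  Tendsto
    (fun y : ℝ => (Complex.I * y) ^ (2 * q + 1) *
      (n (Complex.I * y) +
        ∑ j ∈ Finset.range (2 * q + 1), (s j : ℂ) / (Complex.I * y) ^ (j + 1)))
    (atTop ⊔ atBot) (nhds 0)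

/-- The coefficients `ŝ_j` of the Schur transform: `ŝ_j = ((-1)^{j+1}/s₀^{j+2})·det M_j`,
where `M_j` is the `(j+2)×(j+2)` matrix whose `(i,ℓ)` entry (`1 ≤ i,ℓ ≤ j+2`, here 0-based)
is `s_{i-ℓ+1}` when `i-ℓ+1 ≥ 0` and `0` otherwise. -/
def hatMoments (s : ℕ → ℝ) (j : ℕ) : ℝ :=
  ((-1 : ℝ) ^ (j + 1) / (s 0) ^ (j + 2)) *
    (Matrix.of fun i l : Fin (j + 2) =>
      if (l : ℕ) ≤ (i : ℕ) + 1 then s ((i : ℕ) + 1 - (l : ℕ)) else 0).det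

section aux
open Matrix

def dcoef (s : ℕ → ℝ) : ℕ → ℝ := fun m => PowerSeries.coeff m (PowerSeries.mk s)⁻¹

lemma dcoef_conv (s : ℕ → ℝ) (hs : s 0 ≠ 0) (m : ℕ) :
    ∑ k ∈ Finset.range (m+1), dcoef s k * s (m - k) = if m = 0 then 1 else 0 := by
  have h0 : PowerSeries.constantCoeff (PowerSeries.mk s) ≠ 0 := by simpa using hs
  have h := PowerSeries.inv_mul_cancel (PowerSeries.mk s) h0
  have h2 := congrArg (PowerSeries.coeff m) h
  rw [PowerSeries.coeff_mul, Finset.Nat.sum_antidiagonal_eq_sum_range_succ_mk] at h2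
  simpa [dcoef, PowerSeries.coeff_one] using h2

lemma dcoef_zero (s : ℕ → ℝ) : dcoef s 0 = (s 0)⁻¹ := by
  simp [dcoef, PowerSeries.coeff_zero_eq_constantCoeff, PowerSeries.constantCoeff_inv]

lemma hatMoments_eq (s : ℕ → ℝ) (hs : s 0 ≠ 0) (j : ℕ) :
    hatMoments s j = -(s 0) * dcoef s (j+2) := by
  set A : Matrix (Fin (j+3)) (Fin (j+3)) ℝ :=
    Matrix.of (fun i k : Fin (j+3) => if (k:ℕ) ≤ (i:ℕ) then s ((i:ℕ) - (k:ℕ)) else 0) with hA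
  have hdetA : A.det = (s 0)^(j+3) := by
    rw [Matrix.det_of_lowerTriangular]
    · simp [hA]
    · intro i k h
      have hik : (i:ℕ) < (k:ℕ) := h
      simp only [hA, Matrix.of_apply]
      rw [if_neg (by omega)]
  set x : Fin (j+3) → ℝ := fun k => dcoef s (k:ℕ) with hxdef
  set b : Fin (j+3) → ℝ := fun i => if i = 0 then 1 else 0 with hbdef
  have hmv : A.mulVec x = b := by
    funext i
    have h0 : A.mulVec x i = ∑ k ∈ Finset.range (j+3), (if k ≤ (i:ℕ) then s ((i:ℕ) - k) else 0) * dcoef s k := by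
      rw [Matrix.mulVec, dotProduct]
      rw [Finset.sum_range fun k => (if k ≤ (i:ℕ) then s ((i:ℕ) - k) else 0) * dcoef s k]
      congr 1
    rw [h0]
    have h1 : ∑ k ∈ Finset.range (j+3), (if k ≤ (i:ℕ) then s ((i:ℕ) - k) else 0) * dcoef s k
        = ∑ k ∈ Finset.range ((i:ℕ)+1), (if k ≤ (i:ℕ) then s ((i:ℕ) - k) else 0) * dcoef s k := by
      refine (Finset.sum_subset ?_ ?_).symm
      · intro k hk
        simp only [Finset.mem_range] at *
        exact lt_of_lt_of_le hk (by omega)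
      · intro k _ hk
        simp only [Finset.mem_range, Nat.lt_succ_iff, not_le] at hk
        rw [if_neg (by omega), zero_mul]
    rw [h1]
    have h2 : ∑ k ∈ Finset.range ((i:ℕ)+1), (if k ≤ (i:ℕ) then s ((i:ℕ) - k) else 0) * dcoef s k
        = ∑ k ∈ Finset.range ((i:ℕ)+1), dcoef s k * s ((i:ℕ) - k) := by
      refine Finset.sum_congr rfl fun k hk => ?_
      simp only [Finset.mem_range, Nat.lt_succ_iff] at hk
      rw [if_pos hk, mul_comm]
    rw [h2, dcoef_conv s hs, hbdef]
    simp only [Fin.ext_iff, Fin.val_zero]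
  have hcram : A.cramer b = A.det • x := by
    have h1 := congrArg (fun v => A.adjugate.mulVec v) hmv
    rw [Matrix.mulVec_mulVec, Matrix.adjugate_mul, Matrix.smul_mulVec, Matrix.one_mulVec] at h1
    rw [Matrix.cramer_eq_adjugate_mulVec, ← h1]
  have hlast := congrFun hcram (Fin.last (j+2))
  rw [Matrix.cramer_apply] at hlast
  -- compute the updated determinant via expansion along the last column
  have hexp : (A.updateCol (Fin.last (j+2)) b).det
      = (-1)^(j+2) * (Matrix.of fun i l : Fin (j + 2) =>
          if (l : ℕ) ≤ (i : ℕ) + 1 then s ((i : ℕ) + 1 - (l : ℕ)) else 0).det := by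
    rw [Matrix.det_succ_column (A.updateCol (Fin.last (j+2)) b) (Fin.last (j+2))]
    rw [Finset.sum_eq_single (0 : Fin (j+3))]
    · rw [Matrix.updateCol_self]
      have hb0 : b 0 = 1 := by simp [hbdef]
      rw [hb0]
      have hsub : ((A.updateCol (Fin.last (j+2)) b).submatrix (0 : Fin (j+2).succ).succAbove
          (Fin.last (j+2)).succAbove) = (Matrix.of fun i l : Fin (j + 2) =>
          if (l : ℕ) ≤ (i : ℕ) + 1 then s ((i : ℕ) + 1 - (l : ℕ)) else 0) := by
        funext i l
        simp only [Matrix.submatrix_apply, Fin.zero_succAbove, Fin.succAbove_last,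
          Matrix.of_apply]
        rw [Matrix.updateCol_ne (Fin.castSucc_lt_last l).ne, hA]
        simp only [Matrix.of_apply, Fin.coe_castSucc, Fin.val_succ]
      rw [hsub]
      rw [show ((0 : Fin (j+2).succ) : ℕ) = 0 from rfl, Fin.val_last]
      ring
    · intro i _ hi
      rw [Matrix.updateCol_self]
      have : b i = 0 := by simp [hbdef, hi]
      rw [this]; ring
    · intro h; simp at h
  rw [hexp] at hlast
  -- hlast : (-1)^(j+2) * detM = A.det * x last
  have hxl : x (Fin.last (j+2)) = dcoef s (j+2) := by simp [hxdef]
  rw [hdetA] at hlast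
  simp only [Pi.smul_apply, smul_eq_mul, hxl] at hlast
  unfold hatMoments
  have hpow : (s 0)^(j+3) ≠ 0 := pow_ne_zero _ hs
  field_simp
  linear_combination (-1:ℝ) * hlast

end aux

lemma cauchy_tail (f g : ℕ → ℂ) (N : ℕ)
    (h : ∀ r, r ≤ N → ∑ k ∈ Finset.range (r+1), f k * g (r-k) = if r = 0 then 1 else 0)
    (u : ℂ) :
    (∑ m ∈ Finset.range (N+1), f m * u^m) * (∑ j ∈ Finset.range (N+1), g j * u^j)
    = 1 + ∑ m ∈ Finset.range (N+1), ∑ j ∈ Finset.range (N+1),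
        (if N < m+j then f m * g j * u^(m+j) else 0) := by
  rw [Finset.sum_mul_sum]
  have hsplit : ∀ m j : ℕ, (f m * u^m) * (g j * u^j)
      = (if N < m+j then f m * g j * u^(m+j) else 0)
        + (if m+j ≤ N then f m * g j * u^(m+j) else 0) := by
    intro m j
    by_cases hc : N < m + j
    · rw [if_pos hc, if_neg (by omega), add_zero, pow_add]; ring
    · rw [if_neg hc, if_pos (by omega), zero_add, pow_add]; ring
  have : ∑ m ∈ Finset.range (N+1), ∑ j ∈ Finset.range (N+1), (f m * u^m) * (g j * u^j)
      = (∑ m ∈ Finset.range (N+1), ∑ j ∈ Finset.range (N+1),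
          (if N < m+j then f m * g j * u^(m+j) else 0))
        + ∑ m ∈ Finset.range (N+1), ∑ j ∈ Finset.range (N+1),
          (if m+j ≤ N then f m * g j * u^(m+j) else 0) := by
    rw [← Finset.sum_add_distrib]
    refine Finset.sum_congr rfl fun m _ => ?_
    rw [← Finset.sum_add_distrib]
    exact Finset.sum_congr rfl fun j _ => hsplit m j
  rw [this, add_comm]
  congr 1
  -- triangle sum equals 1
  have h1 : ∑ m ∈ Finset.range (N+1), ∑ j ∈ Finset.range (N+1),
      (if m+j ≤ N then f m * g j * u^(m+j) else 0)
      = ∑ p ∈ (Finset.range (N+1) ×ˢ Finset.range (N+1)).filter (fun p => p.1 + p.2 ≤ N),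
          f p.1 * g p.2 * u^(p.1+p.2) := by
    rw [Finset.sum_filter, Finset.sum_product]
  rw [h1]
  have h2 : ∑ p ∈ (Finset.range (N+1) ×ˢ Finset.range (N+1)).filter (fun p => p.1 + p.2 ≤ N),
      f p.1 * g p.2 * u^(p.1+p.2)
      = ∑ x ∈ (Finset.range (N+1)).sigma (fun r => Finset.range (r+1)),
          f x.2 * g (x.1 - x.2) * u^(x.1) := by
    refine Finset.sum_nbij' (i := fun p => ⟨p.1+p.2, p.1⟩) (j := fun x => (x.2, x.1 - x.2))
      ?_ ?_ ?_ ?_ ?_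
    · intro p hp
      simp only [Finset.mem_filter, Finset.mem_product, Finset.mem_range] at hp
      simp only [Finset.mem_sigma, Finset.mem_range]
      omega
    · intro x hx
      simp only [Finset.mem_sigma, Finset.mem_range] at hx
      simp only [Finset.mem_filter, Finset.mem_product, Finset.mem_range]
      omega
    · intro p hp; obtain ⟨a,b⟩ := p; simp
    · intro x hx
      simp only [Finset.mem_sigma, Finset.mem_range] at hx
      refine Sigma.ext ?_ ?_ <;> simp <;> omega
    · intro p hp
      simp only [Finset.mem_filter, Finset.mem_product, Finset.mem_range] at hp
      simp [Nat.add_sub_cancel_left]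
  rw [h2, Finset.sum_sigma]
  have h3 : ∀ r ∈ Finset.range (N+1), ∑ k ∈ Finset.range (r+1), f k * g (r-k) * u^r
      = if r = 0 then 1 else 0 := by
    intro r hr
    simp only [Finset.mem_range, Nat.lt_succ_iff] at hr
    rw [show (∑ k ∈ Finset.range (r+1), f k * g (r-k) * u^r)
        = (∑ k ∈ Finset.range (r+1), f k * g (r-k)) * u^r from (Finset.sum_mul _ _ _).symm]
    rw [h r hr]
    by_cases h0 : r = 0
    · subst h0; simp
    · simp [h0]
  rw [Finset.sum_congr rfl h3]
  simp

lemma key_identity2 (s : ℕ → ℝ) (P : ℕ) (nz z : ℂ) (hz : z ≠ 0) :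
    z * nz = (z^(2*P+3) * (nz + ∑ j ∈ Finset.range (2*P+3), (s j:ℂ)/z^(j+1))) * (z⁻¹)^(2*P+2)
      - ∑ j ∈ Finset.range (2*P+3), (s j:ℂ) * (z⁻¹)^j := by
  have h1 : z * z⁻¹ = 1 := mul_inv_cancel₀ hz
  have hzu : z^(2*P+2) * (z⁻¹)^(2*P+2) = 1 := by rw [← mul_pow, h1, one_pow]
  have hdiv : ∑ j ∈ Finset.range (2*P+3), (s j:ℂ)/z^(j+1)
      = z⁻¹ * ∑ j ∈ Finset.range (2*P+3), (s j:ℂ)*(z⁻¹)^j := by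
    rw [Finset.mul_sum]
    refine Finset.sum_congr rfl fun j _ => ?_
    rw [div_eq_mul_inv, ← inv_pow]
    ring
  rw [hdiv]
  set S := ∑ j ∈ Finset.range (2*P+3), (s j:ℂ)*(z⁻¹)^j with hS
  linear_combination (-(z*nz) - z*z⁻¹*S)*hzu + (-S)*h1

lemma key_identity (s : ℕ → ℝ) (hs : s 0 ≠ 0) (P : ℕ) (z w : ℂ) (hz : z ≠ 0) (hw : w ≠ 0) :
    z^(2*P+1) * ((-(s 0:ℂ)/w - z + (s 1:ℂ)/(s 0:ℂ))
        + ∑ k ∈ Finset.range (2*P+1), (hatMoments s k : ℂ)/z^(k+1))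
    = (s 0:ℂ) * ((∑ m ∈ Finset.range (2*P+3), ∑ j ∈ Finset.range (2*P+3),
          (if 2*P+2 < m+j then (dcoef s m:ℂ) * (s j:ℂ) * (z⁻¹)^(m+j-(2*P+2)) else 0))
        - (∑ m ∈ Finset.range (2*P+3), (dcoef s m:ℂ) * (z⁻¹)^m)
          * (z^(2*P+3) * (w + ∑ j ∈ Finset.range (2*P+3), (s j:ℂ)/z^(j+1))))
      / (z * w) := by
  have h1 : z * z⁻¹ = 1 := mul_inv_cancel₀ hz
  have hwinv : w * w⁻¹ = 1 := mul_inv_cancel₀ hw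
  have hs0 : (s 0 : ℂ) ≠ 0 := Complex.ofReal_ne_zero.mpr hs
  have hsinv : (s 0:ℂ) * (s 0:ℂ)⁻¹ = 1 := mul_inv_cancel₀ hs0
  have hd0 : (s 0:ℂ) * (dcoef s 0:ℂ) = 1 := by
    rw [dcoef_zero, Complex.ofReal_inv]
    exact mul_inv_cancel₀ hs0
  have hd1 : (s 0:ℂ)*(s 0:ℂ)*(dcoef s 1:ℂ) = -(s 1:ℂ) := by
    have h := dcoef_conv s hs 1
    rw [Finset.sum_range_succ, Finset.sum_range_one] at h
    simp only [Nat.sub_zero, Nat.sub_self, if_neg (one_ne_zero)] at h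
    have h0 : dcoef s 0 = (s 0)⁻¹ := dcoef_zero s
    rw [h0] at h
    have hr : s 0 * s 0 * dcoef s 1 = -(s 1) := by
      field_simp at h
      nlinarith [h]
    exact_mod_cast congrArg (fun x : ℝ => (x:ℂ)) hr
  have hSS : ∑ k ∈ Finset.range (2*P+1), (hatMoments s k : ℂ)/z^(k+1)
      = -(s 0:ℂ) * ∑ k ∈ Finset.range (2*P+1), (dcoef s (k+2):ℂ) * (z⁻¹)^(k+1) := by
    rw [Finset.mul_sum]
    refine Finset.sum_congr rfl fun k _ => ?_
    rw [hatMoments_eq s hs k]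
    push_cast
    rw [div_eq_mul_inv, ← inv_pow]
    ring
  set SS := ∑ k ∈ Finset.range (2*P+1), (dcoef s (k+2):ℂ) * (z⁻¹)^(k+1) with hSSdef
  set Q := ∑ m ∈ Finset.range (2*P+3), (dcoef s m:ℂ) * (z⁻¹)^m with hQdef
  set S1 := ∑ j ∈ Finset.range (2*P+3), (s j:ℂ) * (z⁻¹)^j with hS1def
  set T' := ∑ m ∈ Finset.range (2*P+3), ∑ j ∈ Finset.range (2*P+3),
      (if 2*P+2 < m+j then (dcoef s m:ℂ) * (s j:ℂ) * (z⁻¹)^(m+j) else 0) with hT'def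
  have hQd : Q = (dcoef s 0:ℂ) + (dcoef s 1:ℂ)*z⁻¹ + z⁻¹*SS := by
    rw [hQdef, show 2*P+3 = (2*P+2)+1 from by omega, Finset.sum_range_succ',
      show 2*P+2 = (2*P+1)+1 from by omega, Finset.sum_range_succ']
    rw [hSSdef, Finset.mul_sum]
    have : ∀ k, (dcoef s (k+1+1):ℂ) * (z⁻¹)^(k+1+1) = z⁻¹ * ((dcoef s (k+2):ℂ) * (z⁻¹)^(k+1)) := by
      intro k
      rw [show k+1+1 = k+2 from rfl]
      ring
    rw [Finset.sum_congr rfl fun k _ => this k]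
    simp only [pow_zero, pow_one]
    ring
  have hdiv : ∑ j ∈ Finset.range (2*P+3), (s j:ℂ)/z^(j+1) = z⁻¹ * S1 := by
    rw [hS1def, Finset.mul_sum]
    refine Finset.sum_congr rfl fun j _ => ?_
    rw [div_eq_mul_inv, ← inv_pow]
    ring
  have hconv : ∀ r, r ≤ 2*P+2 →
      ∑ k ∈ Finset.range (r+1), (dcoef s k:ℂ) * ((s (r-k):ℂ)) = if r = 0 then 1 else 0 := by
    intro r _
    have h := dcoef_conv s hs r
    rw [show (if r = 0 then (1:ℂ) else 0)
        = (((if r = 0 then (1:ℝ) else 0) : ℝ) : ℂ) from by split <;> simp]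
    rw [← h]
    push_cast
    rfl
  have hC : Q * S1 = 1 + T' := by
    rw [hQdef, hS1def, hT'def, show 2*P+3 = (2*P+2)+1 from by omega]
    exact cauchy_tail (fun m => (dcoef s m:ℂ)) (fun j => (s j:ℂ)) (2*P+2) hconv z⁻¹
  have hT : ∑ m ∈ Finset.range (2*P+3), ∑ j ∈ Finset.range (2*P+3),
      (if 2*P+2 < m+j then (dcoef s m:ℂ) * (s j:ℂ) * (z⁻¹)^(m+j-(2*P+2)) else 0)
      = z^(2*P+2) * T' := by
    rw [hT'def, Finset.mul_sum]
    refine Finset.sum_congr rfl fun m _ => ?_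
    rw [Finset.mul_sum]
    refine Finset.sum_congr rfl fun j _ => ?_
    by_cases hc : 2*P+2 < m+j
    · rw [if_pos hc, if_pos hc]
      have he : (z⁻¹)^(m+j) = (z⁻¹)^(2*P+2) * (z⁻¹)^(m+j-(2*P+2)) := by
        rw [← pow_add]
        congr 1
        omega
      rw [he]
      have hzz : z^(2*P+2) * (z⁻¹)^(2*P+2) = 1 := by rw [← mul_pow, h1, one_pow]
      linear_combination (-((dcoef s m:ℂ) * (s j:ℂ) * (z⁻¹)^(m+j-(2*P+2))))*hzz
    · rw [if_neg hc, if_neg hc, mul_zero]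
  rw [hSS, hdiv, hT, eq_div_iff (mul_ne_zero hz hw)]
  linear_combination (-((s 0:ℂ))*z^(2*P+1)*z) * hwinv
    + ((s 0:ℂ)*z^(2*P+1)*z^2*z⁻¹) * hC
    + ((s 0:ℂ)*z^(2*P+1)*z + (s 0:ℂ)*z^(2*P+1)*z*T' + (s 0:ℂ)*z^(2*P+1)*z*w*SS
        - z^(2*P+1)*z*w*(s 1:ℂ)*(s 0:ℂ)⁻¹) * h1
    + ((s 0:ℂ)*z^(2*P+1)*z^2*w) * hQd
    + (z^(2*P+1)*z^2*w) * hd0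
    + (z^(2*P+1)*z^2*z⁻¹*w*(s 0:ℂ)⁻¹) * hd1
    + (-(z^(2*P+1)*z^2*z⁻¹*w*(s 0:ℂ)*(dcoef s 1:ℂ))) * hsinv


/-- if the Nevanlinna function `n` satisfies `(1_p)` with coefficients
`s₀,…,s_{2p}`, `s₀ > 0`, then `n` is nowhere zero on `ℂ ∖ ℝ` and the Schur transform
`n̂(z) = -s₀/n(z) - z + s₁/s₀` satisfies `(1_{p-1})` with coefficients `ŝ_j`. -/
theorem schur_transform_coefficients (p : ℕ) (hp : 1 ≤ p) (n : ℂ → ℂ)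
    (hn : IsNevanlinna n) (s : ℕ → ℝ) (hs₀ : 0 < s 0) (h1p : Cond1 n p s) :
    (∀ z : ℂ, z.im ≠ 0 → n z ≠ 0) ∧
    Cond1 (fun z : ℂ => -(s 0 : ℂ) / n z - z + (s 1 : ℂ) / (s 0 : ℂ)) (p - 1)
      (hatMoments s) := by
  obtain ⟨P, rfl⟩ : ∃ P, p = P + 1 := ⟨p - 1, by omega⟩
  have hs : s 0 ≠ 0 := ne_of_gt hs₀
  simp only [Cond1, show 2*(P+1)+1 = 2*P+3 from by omega] at h1p
  have hy0 : ∀ᶠ y in (atTop ⊔ atBot : Filter ℝ), y ≠ 0 := by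
    rw [eventually_sup]
    constructor
    · filter_upwards [eventually_gt_atTop (0:ℝ)] with y hy using ne_of_gt hy
    · filter_upwards [eventually_lt_atBot (0:ℝ)] with y hy using ne_of_lt hy
  have hzne : ∀ y : ℝ, y ≠ 0 → (Complex.I * (y:ℂ)) ≠ 0 := fun y hy =>
    mul_ne_zero Complex.I_ne_zero (Complex.ofReal_ne_zero.mpr hy)
  have habs : Tendsto (fun y : ℝ => |y|) (atTop ⊔ atBot) atTop := by
    rw [tendsto_sup]
    exact ⟨tendsto_abs_atTop_atTop, tendsto_abs_atBot_atTop⟩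
  have hu : Tendsto (fun y : ℝ => (Complex.I * (y:ℂ))⁻¹) (atTop ⊔ atBot) (nhds 0) := by
    rw [tendsto_zero_iff_norm_tendsto_zero]
    refine habs.inv_tendsto_atTop.congr fun y => ?_
    rw [norm_inv, norm_mul, Complex.norm_I, one_mul, Complex.norm_real, Real.norm_eq_abs]
    rfl
  have hS1 : Tendsto (fun y : ℝ => ∑ j ∈ Finset.range (2*P+3),
      (s j:ℂ) * ((Complex.I*(y:ℂ))⁻¹)^j) (atTop ⊔ atBot) (nhds ((s 0 : ℂ))) := by
    have h := tendsto_finset_sum (Finset.range (2*P+3))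
      (fun j (_ : j ∈ Finset.range (2*P+3)) =>
        (tendsto_const_nhds (x := (s j : ℂ))).mul (hu.pow j))
    have hval : ∑ j ∈ Finset.range (2*P+3), (s j:ℂ) * (0:ℂ)^j = (s 0:ℂ) := by
      rw [Finset.sum_eq_single 0]
      · simp
      · intro j _ hj; rw [zero_pow hj, mul_zero]
      · intro h; simp at h
    rwa [hval] at h
  have hzn : Tendsto (fun y : ℝ => (Complex.I*(y:ℂ)) * n (Complex.I*y)) (atTop ⊔ atBot)
      (nhds (-(s 0:ℂ))) := by
    have hid : ∀ᶠ (y : ℝ) in (atTop ⊔ atBot : Filter ℝ),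
        ((Complex.I*(y:ℂ))^(2*P+3) * (n (Complex.I*y)
            + ∑ j ∈ Finset.range (2*P+3), (s j:ℂ)/(Complex.I*(y:ℂ))^(j+1)))
          * ((Complex.I*(y:ℂ))⁻¹)^(2*P+2)
          - ∑ j ∈ Finset.range (2*P+3), (s j:ℂ) * ((Complex.I*(y:ℂ))⁻¹)^j
        = (Complex.I*(y:ℂ)) * n (Complex.I*y) := by
      filter_upwards [hy0] with y hy
      exact (key_identity2 s P (n (Complex.I*y)) (Complex.I*y) (hzne y hy)).symm
    have h := (h1p.mul (hu.pow (2*P+2))).sub hS1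
    rw [zero_mul, zero_sub] at h
    exact h.congr' hid
  -- nonvanishing on ℂ ∖ ℝ
  have hup : ∀ z₀ : ℂ, 0 < z₀.im → n z₀ ≠ 0 := by
    intro z₀ him h0
    have hopen : IsOpen {z : ℂ | 0 < z.im} := isOpen_lt continuous_const Complex.continuous_im
    have hopen' : IsOpen {z : ℂ | z.im ≠ 0} :=
      isOpen_compl_iff.mpr (isClosed_eq Complex.continuous_im continuous_const)
    have hAN : AnalyticOnNhd ℂ n {z : ℂ | z.im ≠ 0} :=
      (hopen'.analyticOn_iff_analyticOnNhd).mp hn.1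
    have hat : AnalyticAt ℂ n z₀ := hAN z₀ (by simp [ne_of_gt him])
    rcases hat.eventually_constant_or_nhds_le_map_nhds with hconst | hmap
    · have hpre : IsPreconnected {z : ℂ | 0 < z.im} := (convex_halfSpace_im_gt 0).isPreconnected
      have hsub : {z : ℂ | 0 < z.im} ⊆ {z : ℂ | z.im ≠ 0} := fun z hz => ne_of_gt hz
      have heq : Set.EqOn n (fun _ => (0:ℂ)) {z : ℂ | 0 < z.im} := by
        apply AnalyticOnNhd.eqOn_of_preconnected_of_eventuallyEq
          (fun z hz => hAN z (hsub hz)) (analyticOnNhd_const) hpre him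
        filter_upwards [hconst] with z hz
        rw [hz, h0]
      have h1 : Tendsto (fun y : ℝ => (Complex.I * (y:ℂ)) * n (Complex.I * y)) atTop
          (nhds (-(s 0 : ℂ))) := hzn.mono_left le_sup_left
      have h2 : (fun y : ℝ => (Complex.I * (y:ℂ)) * n (Complex.I * y)) =ᶠ[atTop]
          (fun _ => (0:ℂ)) := by
        filter_upwards [eventually_gt_atTop (0:ℝ)] with y hy
        have : n (Complex.I * y) = 0 := heq (by simpa using hy)
        rw [this, mul_zero]
      have h3 : Tendsto (fun _ : ℝ => (0:ℂ)) atTop (nhds (-(s 0 : ℂ))) := h1.congr' h2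
      have h4 := tendsto_nhds_unique h3 tendsto_const_nhds
      have : s 0 = 0 := by
        field_simp at h4
        exact_mod_cast neg_eq_zero.mp h4
      exact (ne_of_gt hs₀) this
    · rw [h0] at hmap
      have hUmem : {w : ℂ | 0 ≤ w.im} ∈ Filter.map n (nhds z₀) := by
        rw [Filter.mem_map]
        exact Filter.mem_of_superset (hopen.mem_nhds him) (fun z hz => hn.2.2 z hz)
      rcases Metric.mem_nhds_iff.mp (hmap hUmem) with ⟨ε, hε, hball⟩
      have hmem : (-(ε/2) : ℂ) * Complex.I ∈ Metric.ball (0:ℂ) ε := by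
        simp only [Metric.mem_ball, dist_zero_right, norm_mul, Complex.norm_I, mul_one]
        rw [norm_neg, norm_div]
        simp only [Complex.norm_real, Real.norm_eq_abs, Complex.norm_ofNat]
        rw [abs_of_pos hε]
        linarith
      have hin := hball hmem
      simp only [Set.mem_setOf_eq] at hin
      have him2 : ((-(ε/2) : ℂ) * Complex.I).im = -(ε/2) := by simp
      rw [him2] at hin
      linarith
  have hnz : ∀ z : ℂ, z.im ≠ 0 → n z ≠ 0 := by
    intro z him
    rcases lt_or_gt_of_ne him with hlt | hgt
    · intro h0
      have hconj : n ((starRingEnd ℂ) z) = (starRingEnd ℂ) (n z) := hn.2.1 z him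
      have hne : n ((starRingEnd ℂ) z) ≠ 0 := hup _ (by simpa using hlt)
      rw [hconj, h0] at hne
      simp at hne
    · exact hup z hgt
  refine ⟨hnz, ?_⟩
  simp only [Cond1, Nat.add_sub_cancel]
  -- limits of the auxiliary sums
  have hQl : Tendsto (fun y : ℝ => ∑ m ∈ Finset.range (2*P+3),
      (dcoef s m:ℂ) * ((Complex.I*(y:ℂ))⁻¹)^m) (atTop ⊔ atBot)
      (nhds (∑ m ∈ Finset.range (2*P+3), (dcoef s m:ℂ) * (0:ℂ)^m)) :=
    tendsto_finset_sum _ (fun m _ => tendsto_const_nhds.mul (hu.pow m))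
  have hper : ∀ m j : ℕ, Tendsto (fun y : ℝ =>
      (if 2*P+2 < m+j then (dcoef s m:ℂ) * (s j:ℂ) * ((Complex.I*(y:ℂ))⁻¹)^(m+j-(2*P+2)) else 0))
      (atTop ⊔ atBot) (nhds 0) := by
    intro m j
    by_cases hc : 2*P+2 < m+j
    · simp only [if_pos hc]
      have h2 : (dcoef s m:ℂ) * (s j:ℂ) * (0:ℂ)^(m+j-(2*P+2)) = 0 := by
        rw [zero_pow (by omega), mul_zero]
      have h3 := (tendsto_const_nhds (x := (dcoef s m:ℂ)*(s j:ℂ))).mul (hu.pow (m+j-(2*P+2)))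
      rwa [h2] at h3
    · simp only [if_neg hc]; exact tendsto_const_nhds
  have hTl : Tendsto (fun y : ℝ => ∑ m ∈ Finset.range (2*P+3), ∑ j ∈ Finset.range (2*P+3),
      (if 2*P+2 < m+j then (dcoef s m:ℂ) * (s j:ℂ) * ((Complex.I*(y:ℂ))⁻¹)^(m+j-(2*P+2)) else 0))
      (atTop ⊔ atBot) (nhds 0) := by
    have h := tendsto_finset_sum (Finset.range (2*P+3)) (fun m (_ : m ∈ Finset.range (2*P+3)) =>
      tendsto_finset_sum (Finset.range (2*P+3)) (fun j (_ : j ∈ Finset.range (2*P+3)) => hper m j))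
    simpa using h
  have hden_ne : -((s 0:ℂ)) ≠ 0 := neg_ne_zero.mpr (Complex.ofReal_ne_zero.mpr hs)
  have hF := ((tendsto_const_nhds (x := (s 0:ℂ))).mul (hTl.sub (hQl.mul h1p))).div hzn hden_ne
  rw [show (s 0:ℂ) * ((0:ℂ) - (∑ m ∈ Finset.range (2*P+3), (dcoef s m:ℂ) * (0:ℂ)^m) * 0)
      / (-(s 0:ℂ)) = 0 from by simp] at hF
  refine Tendsto.congr' ?_ hF
  filter_upwards [hy0] with y hy
  have hw0 : n (Complex.I*y) ≠ 0 := hnz _ (by simpa using hy)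
  exact (key_identity s hs P (Complex.I*y) (n (Complex.I*y)) (hzne y hy) hw0).symm
end
end

section
/- Let 𝒜₀ be the p×p Jacobi matrix with diagonal a₀,…,a_{p−1} and off-diagonal b₀,…,b_{p−2}, let δ₀ and δ_{p−1} be the first and last standard basis vectors of ℂ^p, and let z ∈ ℂ with e_p(z) ≠ 0. Then 𝒜₀ − zI is invertible and (𝒜₀ − zI)^{−1} δ_{p−1} = −(1/(b_{p−1}·e_p(z)))·(e₀(z), e₁(z), …, e_{p−1}(z))ᵀ. In particular, the (p−1,p−1) entry of (𝒜₀ − zI)^{−1} equals −e_{p−1}(z)/(b_{p−1}·e_p(z)), and √s₀ times its (0,p−1) entry equals −1/(b_{p−1}·e_p(z)). -/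
open Matrix

noncomputable section

/-- The `p×p` Jacobi matrix with diagonal entries `a₀,…,a_{p-1}` and sub- and
superdiagonal entries `b₀,…,b_{p-2}`. -/
def jacobiMatrix (p : ℕ) (a b : ℕ → ℝ) : Matrix (Fin p) (Fin p) ℝ :=
  Matrix.of fun i j =>
    if (i : ℕ) = (j : ℕ) then a (i : ℕ)
    else if (i : ℕ) + 1 = (j : ℕ) then b (i : ℕ)
    else if (j : ℕ) + 1 = (i : ℕ) then b (j : ℕ)
    else 0

/-- if `e_p(z) ≠ 0` then `𝒜₀ - zI` is invertible, and its inverse applied to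
the last standard basis vector `δ_{p-1}` equals
`-(1/(b_{p-1}e_p(z)))·(e₀(z),…,e_{p-1}(z))ᵀ`; in particular, the `(p-1,p-1)` entry of
`(𝒜₀ - zI)⁻¹` is `-e_{p-1}(z)/(b_{p-1}e_p(z))` and `√s₀` times its `(0,p-1)` entry is
`-1/(b_{p-1}e_p(z))`. -/
theorem jacobi_resolvent_last_column (p : ℕ) (hp : 1 ≤ p) (s₀ : ℝ) (hs₀ : 0 < s₀)
    (a b : ℕ → ℝ) (hb : ∀ k < p, 0 < b k)
    (e : ℕ → ℂ → ℂ)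
    (he0 : ∀ z : ℂ, e 0 z = 1 / (Real.sqrt s₀ : ℂ))
    (he1 : ∀ z : ℂ, e 1 z = (z - (a 0 : ℂ)) / ((b 0 : ℂ) * (Real.sqrt s₀ : ℂ)))
    (hrecE : ∀ k, 1 ≤ k → k ≤ p - 1 → ∀ z : ℂ,
      (b (k - 1) : ℂ) * e (k - 1) z + (a k : ℂ) * e k z + (b k : ℂ) * e (k + 1) z =
        z * e k z)
    (z : ℂ) (hz : e p z ≠ 0)
    (M : Matrix (Fin p) (Fin p) ℂ)
    (hM : M = ((jacobiMatrix p a b).map Complex.ofReal) - z • (1 : Matrix (Fin p) (Fin p) ℂ)) :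
    IsUnit M ∧
    (M⁻¹.mulVec (Pi.single (⟨p - 1, by omega⟩ : Fin p) 1) =
      fun i : Fin p => -(1 / ((b (p - 1) : ℂ) * e p z)) * e (i : ℕ) z) ∧
    M⁻¹ ⟨p - 1, by omega⟩ ⟨p - 1, by omega⟩ =
      -(e (p - 1) z) / ((b (p - 1) : ℂ) * e p z) ∧
    (Real.sqrt s₀ : ℂ) * M⁻¹ ⟨0, by omega⟩ ⟨p - 1, by omega⟩ =
      -(1 / ((b (p - 1) : ℂ) * e p z)) := by
  have hS : (Real.sqrt s₀ : ℂ) ≠ 0 := by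
    simpa using (Real.sqrt_ne_zero'.mpr hs₀)
  have hbne : ∀ k < p, (b k : ℂ) ≠ 0 := by
    intro k hk
    exact_mod_cast (hb k hk).ne'
  -- entries of M
  have hMij : ∀ i j : Fin p, M i j =
      (if (i : ℕ) = (j : ℕ) then (a (i : ℕ) : ℂ) - z
       else if (i : ℕ) + 1 = (j : ℕ) then (b (i : ℕ) : ℂ)
       else if (j : ℕ) + 1 = (i : ℕ) then (b (j : ℕ) : ℂ) else 0) := by
    intro i j
    simp only [hM, Matrix.sub_apply, Matrix.map_apply, Matrix.smul_apply, Matrix.one_apply,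
      jacobiMatrix, Matrix.of_apply, smul_eq_mul]
    by_cases h : (i : ℕ) = (j : ℕ)
    · have hij : i = j := Fin.ext h
      simp [h, hij]
    · have hij : i ≠ j := fun hh => h (by rw [hh])
      simp only [h, hij, if_false, if_neg, mul_zero, sub_zero]
      split_ifs <;> simp
  -- row formula for mulVec
  have rowD : ∀ (u : Fin p → ℂ) (i : Fin p), M.mulVec u i =
      (if h : 1 ≤ (i : ℕ) then (b ((i : ℕ) - 1) : ℂ) * u ⟨(i : ℕ) - 1, by omega⟩ else 0)
      + ((a (i : ℕ) : ℂ) - z) * u i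
      + (if h : (i : ℕ) + 1 < p then (b (i : ℕ) : ℂ) * u ⟨(i : ℕ) + 1, h⟩ else 0) := by
    intro u i
    have hsum : M.mulVec u i = ∑ j : Fin p,
        ((if (j : ℕ) + 1 = (i : ℕ) then (b (j : ℕ) : ℂ) * u j else 0)
         + (if (j : ℕ) = (i : ℕ) then ((a (i : ℕ) : ℂ) - z) * u j else 0)
         + (if (i : ℕ) + 1 = (j : ℕ) then (b (i : ℕ) : ℂ) * u j else 0)) := by
      simp only [Matrix.mulVec, dotProduct]
      refine Finset.sum_congr rfl fun j _ => ?_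
      rw [hMij i j]
      split_ifs <;> first | ring1 | (exfalso; omega)
    rw [hsum, Finset.sum_add_distrib, Finset.sum_add_distrib]
    congr 1
    · congr 1
      · by_cases h1 : 1 ≤ (i : ℕ)
        · rw [dif_pos h1, Finset.sum_eq_single (⟨(i : ℕ) - 1, by omega⟩ : Fin p)]
          · rw [if_pos (by simp; omega)]
          · intro j _ hj
            rw [if_neg]
            intro hc
            exact hj (Fin.ext (by simpa using by omega : (j : ℕ) = (i : ℕ) - 1))
          · intro h; exact absurd (Finset.mem_univ _) h
        · rw [dif_neg h1]
          refine Finset.sum_eq_zero fun j _ => if_neg (by omega)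
      · rw [Finset.sum_eq_single i]
        · rw [if_pos rfl]
        · intro j _ hj
          exact if_neg fun hc => hj (Fin.ext hc)
        · intro h; exact absurd (Finset.mem_univ _) h
    · by_cases h2 : (i : ℕ) + 1 < p
      · rw [dif_pos h2, Finset.sum_eq_single (⟨(i : ℕ) + 1, h2⟩ : Fin p)]
        · rw [if_pos (by simp)]
        · intro j _ hj
          exact if_neg fun hc => hj (Fin.ext (by simpa using hc.symm))
        · intro h; exact absurd (Finset.mem_univ _) h
      · rw [dif_neg h2]
        refine Finset.sum_eq_zero fun j _ => if_neg (by omega)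
  -- rows in terms of an ℕ-indexed extension U of u
  have rowU : ∀ (u : Fin p → ℂ) (U : ℕ → ℂ)
      (hU : ∀ k (h : k < p), U k = u ⟨k, h⟩) (hU0 : ∀ k, p ≤ k → U k = 0)
      (i : ℕ) (hi1 : 1 ≤ i) (hi : i < p),
      M.mulVec u ⟨i, hi⟩ =
        (b (i - 1) : ℂ) * U (i - 1) + ((a i : ℂ) - z) * U i + (b i : ℂ) * U (i + 1) := by
    intro u U hU hU0 i hi1 hi
    rw [rowD u ⟨i, hi⟩]
    simp only
    rw [dif_pos hi1, hU (i - 1) (by omega), hU i hi]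
    by_cases h2 : i + 1 < p
    · rw [dif_pos h2, hU (i + 1) h2]
    · rw [dif_neg h2, hU0 (i + 1) (by omega), mul_zero]
  have row0 : ∀ (u : Fin p → ℂ) (U : ℕ → ℂ)
      (hU : ∀ k (h : k < p), U k = u ⟨k, h⟩) (hU0 : ∀ k, p ≤ k → U k = 0),
      M.mulVec u ⟨0, by omega⟩ = ((a 0 : ℂ) - z) * U 0 + (b 0 : ℂ) * U 1 := by
    intro u U hU hU0
    rw [rowD u ⟨0, by omega⟩]
    simp only
    rw [dif_neg (by omega), hU 0 (by omega), zero_add]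
    by_cases h2 : 0 + 1 < p
    · rw [dif_pos h2, hU 1 (by omega)]
    · rw [dif_neg h2, hU0 1 (by omega), mul_zero]
  -- kernel triviality
  have hker : ∀ u : Fin p → ℂ, M.mulVec u = 0 → u = 0 := by
    intro u hu
    set U : ℕ → ℂ := fun k => if h : k < p then u ⟨k, h⟩ else 0 with hUdef
    have hU : ∀ k (h : k < p), U k = u ⟨k, h⟩ := fun k h => dif_pos h
    have hU0 : ∀ k, p ≤ k → U k = 0 := fun k h => dif_neg (by omega)
    have key : ∀ k, k < p → U k = (Real.sqrt s₀ : ℂ) * U 0 * e k z := by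
      intro k
      induction k using Nat.strong_induction_on with
      | _ k ih =>
        intro hk
        match k, hk, ih with
        | 0, hk, ih =>
          rw [he0 z]
          field_simp
        | 1, hk, ih =>
          have h0 := row0 u U hU hU0
          rw [congrFun hu _] at h0
          simp only [Pi.zero_apply] at h0
          rw [he1 z]
          have hb0 : (b 0 : ℂ) ≠ 0 := hbne 0 (by omega)
          field_simp
          linear_combination (-1 : ℂ) * h0
        | (m + 2), hk, ih =>
          have h := rowU u U hU hU0 (m + 1) (by omega) (by omega)
          rw [congrFun hu _] at h
          simp only [Pi.zero_apply, Nat.add_sub_cancel] at h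
          have hrec := hrecE (m + 1) (by omega) (by omega) z
          simp only [Nat.add_sub_cancel] at hrec
          have ihm := ih m (by omega) (by omega)
          have ihm1 := ih (m + 1) (by omega) (by omega)
          have hbm1 : (b (m + 1) : ℂ) ≠ 0 := hbne (m + 1) (by omega)
          have hmain : (b (m + 1) : ℂ) * U (m + 2) =
              (b (m + 1) : ℂ) * ((Real.sqrt s₀ : ℂ) * U 0 * e (m + 2) z) := by
            linear_combination (-1 : ℂ) * h - (b m : ℂ) * ihm
              - (((a (m + 1) : ℂ)) - z) * ihm1 - ((Real.sqrt s₀ : ℂ) * U 0) * hrec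
          exact mul_left_cancel₀ hbm1 hmain
    have hU0eq : U 0 = 0 := by
      by_cases hp1 : p = 1
      · have h := row0 u U hU hU0
        rw [congrFun hu _] at h
        simp only [Pi.zero_apply] at h
        rw [hU0 1 (by omega)] at h
        have hz' : z - (a 0 : ℂ) ≠ 0 := by
          intro hc
          apply hz
          rw [hp1, he1, hc]
          simp
        have h2 : ((a 0 : ℂ) - z) * U 0 = 0 := by linear_combination -h
        rcases mul_eq_zero.mp h2 with h3 | h3
        · exact absurd (by linear_combination -h3) hz'
        · exact h3
      · have h := rowU u U hU hU0 (p - 1) (by omega) (by omega)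
        rw [congrFun hu _] at h
        simp only [Pi.zero_apply] at h
        rw [hU0 (p - 1 + 1) (by omega)] at h
        have hrec := hrecE (p - 1) (by omega) (le_refl _) z
        have hpe : p - 1 + 1 = p := by omega
        rw [hpe] at hrec
        have k1 := key (p - 1 - 1) (by omega)
        have k2 := key (p - 1) (by omega)
        have hmain : (b (p - 1) : ℂ) * e p z * ((Real.sqrt s₀ : ℂ) * U 0) = 0 := by
          linear_combination h + (b (p - 1 - 1) : ℂ) * k1
            + (((a (p - 1) : ℂ)) - z) * k2 + ((Real.sqrt s₀ : ℂ) * U 0) * hrec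
        have hb' : (b (p - 1) : ℂ) ≠ 0 := hbne (p - 1) (by omega)
        simpa [mul_eq_zero, hb', hz, hS] using hmain
    funext i
    have h1 := key i.1 i.2
    rw [hU0eq] at h1
    rw [hU i.1 i.2] at h1
    simpa using h1
  have hdet : M.det ≠ 0 := by
    intro h
    obtain ⟨v, hv, hMv⟩ := Matrix.exists_mulVec_eq_zero_iff.mpr h
    exact hv (hker v hMv)
  have hdetU : IsUnit M.det := isUnit_iff_ne_zero.mpr hdet
  have hunit : IsUnit M := (Matrix.isUnit_iff_isUnit_det M).mpr hdetU
  -- the candidate column vector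
  set c : ℂ := -(1 / ((b (p - 1) : ℂ) * e p z)) with hc
  set v : Fin p → ℂ := fun i : Fin p => c * e (i : ℕ) z with hv
  set V : ℕ → ℂ := fun k => if h : k < p then c * e k z else 0 with hV
  have hVU : ∀ k (h : k < p), V k = v ⟨k, h⟩ := fun k h => dif_pos h
  have hV0 : ∀ k, p ≤ k → V k = 0 := fun k h => dif_neg (by omega)
  have hVe : ∀ k, k < p → V k = c * e k z := fun k h => dif_pos h
  have hbp : (b (p - 1) : ℂ) ≠ 0 := hbne (p - 1) (by omega)
  have hMv : M.mulVec v = Pi.single (⟨p - 1, by omega⟩ : Fin p) 1 := by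
    funext i
    rcases i with ⟨i, hi⟩
    by_cases hip : i = p - 1
    · subst hip
      rw [Pi.single_eq_same]
      by_cases hp1 : p = 1
      · have h := row0 v V hVU hV0
        have hidx : (⟨p - 1, by omega⟩ : Fin p) = ⟨0, by omega⟩ := by
          simp [hp1]
        rw [hidx, h, hV0 1 (by omega), hVe 0 (by omega), he0 z]
        have hz' : z - (a 0 : ℂ) ≠ 0 := by
          intro hcc
          apply hz
          rw [hp1, he1, hcc]
          simp
        have hb0 : (b 0 : ℂ) ≠ 0 := hbne 0 (by omega)
        have hep : e p z = (z - (a 0 : ℂ)) / ((b 0 : ℂ) * (Real.sqrt s₀ : ℂ)) := by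
          rw [hp1, he1]
        rw [hc, hep]
        have hp1' : p - 1 = 0 := by omega
        rw [hp1']
        field_simp
        ring
      · have h := rowU v V hVU hV0 (p - 1) (by omega) (by omega)
        rw [h, hV0 (p - 1 + 1) (by omega), hVe (p - 1 - 1) (by omega),
          hVe (p - 1) (by omega)]
        have hrec := hrecE (p - 1) (by omega) (le_refl _) z
        have hpe : p - 1 + 1 = p := by omega
        rw [hpe] at hrec
        rw [hc]
        field_simp
        linear_combination (-1 : ℂ) * hrec
    · rw [Pi.single_eq_of_ne (by simp [Fin.ext_iff]; omega) 1]
      by_cases hi0 : i = 0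
      · subst hi0
        have hp2 : 2 ≤ p := by omega
        have h := row0 v V hVU hV0
        have hidx : (⟨0, hi⟩ : Fin p) = ⟨0, by omega⟩ := rfl
        rw [hidx, h, hVe 0 (by omega), hVe 1 (by omega), he0 z, he1 z]
        have hb0 : (b 0 : ℂ) ≠ 0 := hbne 0 (by omega)
        field_simp
        ring
      · have h := rowU v V hVU hV0 i (by omega) hi
        rw [h, hVe (i - 1) (by omega), hVe i hi, hVe (i + 1) (by omega)]
        have hrec := hrecE i (by omega) (by omega) z
        linear_combination c * hrec
  have hinv : M⁻¹.mulVec (Pi.single (⟨p - 1, by omega⟩ : Fin p) 1) = v := by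
    rw [← hMv, Matrix.mulVec_mulVec, Matrix.nonsing_inv_mul M hdetU, Matrix.one_mulVec]
  have hcol : ∀ i : Fin p, M⁻¹ i ⟨p - 1, by omega⟩ = v i := by
    intro i
    rw [← hinv, Matrix.mulVec_single]
    simp
  refine ⟨hunit, hinv, ?_, ?_⟩
  · rw [hcol ⟨p - 1, by omega⟩, hv]
    simp only [hc]
    ring
  · rw [hcol ⟨0, by omega⟩, hv]
    simp only [hc, he0 z]
    field_simp
end
end

section
/- Let V(z) be the 2×2 matrix polynomial V(z) = [[−d_{p−1}(z), −b_{p−1}·d_p(z)], [e_{p−1}(z), b_{p−1}·e_p(z)]] and J = [[0,1],[−1,0]]. Then det V(z) = 1 for all z ∈ ℂ, and for all z, w ∈ ℂ with z ≠ conj(w): (J − V(z)·J·V(w)^*)/(z − conj(w)) = Σ_{k=0}^{p−1} c_k(z)·c_k(w)^*, where c_k(z) is the column vector (d_k(z), −e_k(z))ᵀ and ^* denotes conjugate transpose. In particular, the kernel K_V(z,w) = (J − V(z)JV(w)^*)/(z − conj(w)) is a positive semidefinite (nonnegative) kernel, and V(x)·J·V(x)^* = J for every real x. -/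
open Matrix Finset
open scoped ComplexOrder

noncomputable section

/-- Christoffel–Darboux telescoping for two sequences satisfying the same
three-term recurrence at spectral parameters `z` and `wc` respectively. -/
lemma cd_sum_aux (p : ℕ) (a b : ℕ → ℝ) (z wc : ℂ) (f g : ℕ → ℂ)
    (hf : ∀ k, 1 ≤ k → k ≤ p - 1 →
      (b (k - 1) : ℂ) * f (k - 1) + (a k : ℂ) * f k + (b k : ℂ) * f (k + 1) = z * f k)
    (hg : ∀ k, 1 ≤ k → k ≤ p - 1 →
      (b (k - 1) : ℂ) * g (k - 1) + (a k : ℂ) * g k + (b k : ℂ) * g (k + 1) = wc * g k) :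
    ∀ n, 1 ≤ n → n ≤ p →
      (z - wc) * ∑ k ∈ Finset.range n, f k * g k =
        (b (n - 1) : ℂ) * (f n * g (n - 1) - f (n - 1) * g n)
          - (b 0 : ℂ) * (f 1 * g 0 - f 0 * g 1) + (z - wc) * (f 0 * g 0) := by
  intro n hn
  induction n, hn using Nat.le_induction with
  | base =>
    intro _
    simp only [Finset.sum_range_one]
    ring
  | succ n hn ih =>
    intro hnp
    have hip := ih (by omega)
    have hfn := hf n hn (by omega)
    have hgn := hg n hn (by omega)
    rw [Finset.sum_range_succ]
    simp only [Nat.add_sub_cancel]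
    linear_combination hip - hfn * g n + hgn * f n

/-- dot product with a matrix-sum mulVec distributes. -/
lemma dot_sum_mulVec_aux (s : Finset ℕ) (A : ℕ → Matrix (Fin 2) (Fin 2) ℂ)
    (u v : Fin 2 → ℂ) :
    u ⬝ᵥ (∑ k ∈ s, A k).mulVec v = ∑ k ∈ s, u ⬝ᵥ (A k).mulVec v := by
  classical
  induction s using Finset.induction with
  | empty => simp
  | insert _ _ h ih => rw [Finset.sum_insert h, Matrix.add_mulVec, dotProduct_add, ih, Finset.sum_insert h]

/-- for `V(z) = [[-d_{p-1}(z), -b_{p-1}d_p(z)], [e_{p-1}(z), b_{p-1}e_p(z)]]`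
and `J = [[0,1],[-1,0]]`: `det V(z) = 1`; for `z ≠ conj w` the kernel
`K_V(z,w) = (J - V(z)JV(w)^*)/(z - conj w)` equals `Σ_{k<p} c_k(z)c_k(w)^*` with
`c_k(z) = (d_k(z), -e_k(z))ᵀ`; `K_V` is a positive semidefinite kernel; and
`V(x)JV(x)^* = J` for real `x`. -/
theorem V_J_unitary_and_kernel (p : ℕ) (hp : 1 ≤ p) (s₀ : ℝ) (hs₀ : 0 < s₀)
    (a b : ℕ → ℝ) (hb : ∀ k < p, 0 < b k)
    (e d : ℕ → ℂ → ℂ)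
    (he0 : ∀ z : ℂ, e 0 z = 1 / (Real.sqrt s₀ : ℂ))
    (he1 : ∀ z : ℂ, e 1 z = (z - (a 0 : ℂ)) / ((b 0 : ℂ) * (Real.sqrt s₀ : ℂ)))
    (hd0 : ∀ z : ℂ, d 0 z = 0)
    (hd1 : ∀ z : ℂ, d 1 z = (Real.sqrt s₀ : ℂ) / (b 0 : ℂ))
    (hrecE : ∀ k, 1 ≤ k → k ≤ p - 1 → ∀ z : ℂ,
      (b (k - 1) : ℂ) * e (k - 1) z + (a k : ℂ) * e k z + (b k : ℂ) * e (k + 1) z =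
        z * e k z)
    (hrecD : ∀ k, 1 ≤ k → k ≤ p - 1 → ∀ z : ℂ,
      (b (k - 1) : ℂ) * d (k - 1) z + (a k : ℂ) * d k z + (b k : ℂ) * d (k + 1) z =
        z * d k z)
    (V : ℂ → Matrix (Fin 2) (Fin 2) ℂ)
    (hV : ∀ z : ℂ, V z =
      !![-d (p - 1) z, -(b (p - 1) : ℂ) * d p z; e (p - 1) z, (b (p - 1) : ℂ) * e p z])
    (J : Matrix (Fin 2) (Fin 2) ℂ) (hJ : J = !![0, 1; -1, 0]) :
    (∀ z : ℂ, (V z).det = 1) ∧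
    (∀ z w : ℂ, z ≠ (starRingEnd ℂ) w →
      (1 / (z - (starRingEnd ℂ) w)) • (J - V z * J * (V w)ᴴ) =
        ∑ k ∈ Finset.range p,
          (!![d k z; -e k z] : Matrix (Fin 2) (Fin 1) ℂ) *
            (!![d k w; -e k w] : Matrix (Fin 2) (Fin 1) ℂ)ᴴ) ∧
    (∀ (m : ℕ) (zs : Fin m → ℂ), (∀ i j, zs i ≠ (starRingEnd ℂ) (zs j)) →
      ∀ v : Fin m → Fin 2 → ℂ,
        0 ≤ ∑ i, ∑ j,
          star (v i) ⬝ᵥ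
            (((1 / (zs i - (starRingEnd ℂ) (zs j))) •
              (J - V (zs i) * J * (V (zs j))ᴴ)).mulVec (v j))) ∧
    (∀ x : ℝ, V (x : ℂ) * J * (V (x : ℂ))ᴴ = J) := by
  have hs : (Real.sqrt s₀ : ℂ) ≠ 0 :=
    Complex.ofReal_ne_zero.mpr (ne_of_gt (Real.sqrt_pos.mpr hs₀))
  have hb0 : (b 0 : ℂ) ≠ 0 := Complex.ofReal_ne_zero.mpr (ne_of_gt (hb 0 hp))
  -- conjugated initial data
  have hce0 : ∀ w : ℂ, (starRingEnd ℂ) (e 0 w) = 1 / (Real.sqrt s₀ : ℂ) := by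
    intro w; rw [he0]; simp [map_div₀, Complex.conj_ofReal]
  have hce1 : ∀ w : ℂ, (starRingEnd ℂ) (e 1 w) =
      ((starRingEnd ℂ) w - (a 0 : ℂ)) / ((b 0 : ℂ) * (Real.sqrt s₀ : ℂ)) := by
    intro w; rw [he1]; simp [map_div₀, Complex.conj_ofReal]
  have hcd0 : ∀ w : ℂ, (starRingEnd ℂ) (d 0 w) = 0 := by
    intro w; rw [hd0]; simp
  have hcd1 : ∀ w : ℂ, (starRingEnd ℂ) (d 1 w) = (Real.sqrt s₀ : ℂ) / (b 0 : ℂ) := by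
    intro w; rw [hd1]; simp [map_div₀, Complex.conj_ofReal]
  -- conjugated recurrences
  have hconjE : ∀ w : ℂ, ∀ k, 1 ≤ k → k ≤ p - 1 →
      (b (k - 1) : ℂ) * (starRingEnd ℂ) (e (k - 1) w) + (a k : ℂ) * (starRingEnd ℂ) (e k w)
        + (b k : ℂ) * (starRingEnd ℂ) (e (k + 1) w) =
        (starRingEnd ℂ) w * (starRingEnd ℂ) (e k w) := by
    intro w k h1 h2
    have := congrArg (starRingEnd ℂ) (hrecE k h1 h2 w)
    simpa [map_add, _root_.map_mul, Complex.conj_ofReal] using this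
  have hconjD : ∀ w : ℂ, ∀ k, 1 ≤ k → k ≤ p - 1 →
      (b (k - 1) : ℂ) * (starRingEnd ℂ) (d (k - 1) w) + (a k : ℂ) * (starRingEnd ℂ) (d k w)
        + (b k : ℂ) * (starRingEnd ℂ) (d (k + 1) w) =
        (starRingEnd ℂ) w * (starRingEnd ℂ) (d k w) := by
    intro w k h1 h2
    have := congrArg (starRingEnd ℂ) (hrecD k h1 h2 w)
    simpa [map_add, _root_.map_mul, Complex.conj_ofReal] using this
  -- Wronskian
  have hW : ∀ z : ℂ, ∀ n, n ≤ p - 1 →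
      (b n : ℂ) * (d (n + 1) z * e n z - d n z * e (n + 1) z) = 1 := by
    intro z n
    induction n with
    | zero =>
      intro _
      rw [hd1, he0, hd0]
      field_simp
      simp
    | succ n ih =>
      intro hnp
      have h1 := ih (by omega)
      have hfn := hrecE (n + 1) (by omega) (by omega) z
      have hgn := hrecD (n + 1) (by omega) (by omega) z
      simp only [Nat.add_sub_cancel] at hfn hgn
      linear_combination h1 - d (n + 1) z * hfn + e (n + 1) z * hgn
  -- determinant
  have hdet : ∀ z : ℂ, (V z).det = 1 := by
    intro z
    rw [hV z, Matrix.det_fin_two_of]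
    have h1 := hW z (p - 1) le_rfl
    rw [Nat.sub_add_cancel hp] at h1
    linear_combination h1
  -- the four Christoffel-Darboux sums
  have hone : (b 0 : ℂ) * ((Real.sqrt s₀ : ℂ) / (b 0 : ℂ) * (1 / (Real.sqrt s₀ : ℂ))) = 1 := by
    field_simp
  have Sdd : ∀ z w : ℂ,
      (z - (starRingEnd ℂ) w) * ∑ k ∈ Finset.range p, d k z * (starRingEnd ℂ) (d k w) =
      (b (p - 1) : ℂ) * (d p z * (starRingEnd ℂ) (d (p - 1) w)
        - d (p - 1) z * (starRingEnd ℂ) (d p w)) := by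
    intro z w
    have raw := cd_sum_aux p a b z ((starRingEnd ℂ) w)
      (fun k => d k z) (fun k => (starRingEnd ℂ) (d k w))
      (fun k h1 h2 => hrecD k h1 h2 z) (hconjD w) p hp le_rfl
    simp only [hcd0] at raw
    simp only [hd0] at raw
    linear_combination raw
  have See : ∀ z w : ℂ,
      (z - (starRingEnd ℂ) w) * ∑ k ∈ Finset.range p, e k z * (starRingEnd ℂ) (e k w) =
      (b (p - 1) : ℂ) * (e p z * (starRingEnd ℂ) (e (p - 1) w)
        - e (p - 1) z * (starRingEnd ℂ) (e p w)) := by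
    intro z w
    have raw := cd_sum_aux p a b z ((starRingEnd ℂ) w)
      (fun k => e k z) (fun k => (starRingEnd ℂ) (e k w))
      (fun k h1 h2 => hrecE k h1 h2 z) (hconjE w) p hp le_rfl
    simp only [hce0, hce1] at raw
    simp only [he0, he1] at raw
    have hclean : (b 0 : ℂ) * ((z - (a 0 : ℂ)) / ((b 0 : ℂ) * (Real.sqrt s₀ : ℂ))
          * (1 / (Real.sqrt s₀ : ℂ))
        - 1 / (Real.sqrt s₀ : ℂ)
          * (((starRingEnd ℂ) w - (a 0 : ℂ)) / ((b 0 : ℂ) * (Real.sqrt s₀ : ℂ)))) =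
        (z - (starRingEnd ℂ) w) * (1 / (Real.sqrt s₀ : ℂ) * (1 / (Real.sqrt s₀ : ℂ))) := by
      field_simp
      ring
    linear_combination raw - hclean
  have Sde : ∀ z w : ℂ,
      (z - (starRingEnd ℂ) w) * ∑ k ∈ Finset.range p, d k z * (starRingEnd ℂ) (e k w) =
      (b (p - 1) : ℂ) * (d p z * (starRingEnd ℂ) (e (p - 1) w)
        - d (p - 1) z * (starRingEnd ℂ) (e p w)) - 1 := by
    intro z w
    have raw := cd_sum_aux p a b z ((starRingEnd ℂ) w)
      (fun k => d k z) (fun k => (starRingEnd ℂ) (e k w))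
      (fun k h1 h2 => hrecD k h1 h2 z) (hconjE w) p hp le_rfl
    simp only [hce0] at raw
    simp only [hd0, hd1] at raw
    linear_combination raw - hone
  have Sed : ∀ z w : ℂ,
      (z - (starRingEnd ℂ) w) * ∑ k ∈ Finset.range p, e k z * (starRingEnd ℂ) (d k w) =
      (b (p - 1) : ℂ) * (e p z * (starRingEnd ℂ) (d (p - 1) w)
        - e (p - 1) z * (starRingEnd ℂ) (d p w)) + 1 := by
    intro z w
    have raw := cd_sum_aux p a b z ((starRingEnd ℂ) w)
      (fun k => e k z) (fun k => (starRingEnd ℂ) (d k w))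
      (fun k h1 h2 => hrecE k h1 h2 z) (hconjD w) p hp le_rfl
    simp only [hcd0, hcd1] at raw
    simp only [he0] at raw
    linear_combination raw + hone
  -- key matrix identity, valid for all z, w
  have hKey : ∀ z w : ℂ, J - V z * J * (V w)ᴴ =
      (z - (starRingEnd ℂ) w) • ∑ k ∈ Finset.range p,
        (!![d k z; -e k z] : Matrix (Fin 2) (Fin 1) ℂ) *
          (!![d k w; -e k w] : Matrix (Fin 2) (Fin 1) ℂ)ᴴ := by
    intro z w
    ext i j
    fin_cases i <;> fin_cases j <;>
      simp only [hV, hJ, Matrix.sub_apply, Matrix.smul_apply, Matrix.sum_apply,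
        Matrix.mul_apply, Matrix.conjTranspose_apply, Fin.sum_univ_two, Fin.sum_univ_one,
        Matrix.cons_val', Matrix.cons_val_zero, Matrix.cons_val_one, Matrix.head_cons,
        Matrix.head_fin_const, Matrix.empty_val', Matrix.cons_val_fin_one, Matrix.of_apply,
        Fin.mk_zero, Fin.mk_one, Fin.isValue, smul_eq_mul, Complex.star_def, star_neg,
        mul_neg, neg_mul, neg_neg, mul_zero, zero_mul, mul_one, one_mul, sub_zero,
        zero_sub, sub_neg_eq_add, map_neg, _root_.map_mul, Complex.conj_ofReal,
        Finset.mul_sum, Finset.sum_neg_distrib]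
    · have h := Sdd z w
      rw [Finset.mul_sum] at h
      linear_combination -h
    · have h := Sde z w
      rw [Finset.mul_sum] at h
      linear_combination h
    · have h := Sed z w
      rw [Finset.mul_sum] at h
      linear_combination h
    · have h := See z w
      rw [Finset.mul_sum] at h
      linear_combination -h
  -- part 2
  have hpart2 : ∀ z w : ℂ, z ≠ (starRingEnd ℂ) w →
      (1 / (z - (starRingEnd ℂ) w)) • (J - V z * J * (V w)ᴴ) =
        ∑ k ∈ Finset.range p,
          (!![d k z; -e k z] : Matrix (Fin 2) (Fin 1) ℂ) *
            (!![d k w; -e k w] : Matrix (Fin 2) (Fin 1) ℂ)ᴴ := by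
    intro z w hzw
    rw [hKey z w, smul_smul, one_div, inv_mul_cancel₀ (sub_ne_zero.mpr hzw), one_smul]
  refine ⟨hdet, hpart2, ?_, ?_⟩
  · -- positivity
    intro m zs hzs v
    have hterm : ∀ i j, star (v i) ⬝ᵥ
        (((1 / (zs i - (starRingEnd ℂ) (zs j))) •
          (J - V (zs i) * J * (V (zs j))ᴴ)).mulVec (v j)) =
        ∑ k ∈ Finset.range p,
          ((starRingEnd ℂ) (v i 0) * d k (zs i) - (starRingEnd ℂ) (v i 1) * e k (zs i)) *
            (starRingEnd ℂ) ((starRingEnd ℂ) (v j 0) * d k (zs j)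
              - (starRingEnd ℂ) (v j 1) * e k (zs j)) := by
      intro i j
      rw [hpart2 (zs i) (zs j) (hzs i j), dot_sum_mulVec_aux]
      refine Finset.sum_congr rfl fun k _ => ?_
      simp [Matrix.mulVec, dotProduct, Fin.sum_univ_two, Fin.sum_univ_one,
        Matrix.mul_apply, Matrix.conjTranspose_apply, Complex.star_def,
        map_sub, _root_.map_mul, Complex.conj_conj]
      ring
    calc (0 : ℂ) ≤ ∑ k ∈ Finset.range p,
          (∑ i, ((starRingEnd ℂ) (v i 0) * d k (zs i)
              - (starRingEnd ℂ) (v i 1) * e k (zs i))) *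
            (starRingEnd ℂ) (∑ j, ((starRingEnd ℂ) (v j 0) * d k (zs j)
              - (starRingEnd ℂ) (v j 1) * e k (zs j))) := by
          refine Finset.sum_nonneg fun k _ => ?_
          rw [Complex.mul_conj]
          exact_mod_cast Complex.normSq_nonneg _
      _ = ∑ k ∈ Finset.range p, ∑ i, ∑ j,
            ((starRingEnd ℂ) (v i 0) * d k (zs i) - (starRingEnd ℂ) (v i 1) * e k (zs i)) *
              (starRingEnd ℂ) ((starRingEnd ℂ) (v j 0) * d k (zs j)
                - (starRingEnd ℂ) (v j 1) * e k (zs j)) := by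
          refine Finset.sum_congr rfl fun k _ => ?_
          rw [map_sum, Finset.sum_mul_sum]
      _ = ∑ i, ∑ j, ∑ k ∈ Finset.range p,
            ((starRingEnd ℂ) (v i 0) * d k (zs i) - (starRingEnd ℂ) (v i 1) * e k (zs i)) *
              (starRingEnd ℂ) ((starRingEnd ℂ) (v j 0) * d k (zs j)
                - (starRingEnd ℂ) (v j 1) * e k (zs j)) := by
          rw [Finset.sum_comm]
          refine Finset.sum_congr rfl fun i _ => ?_
          rw [Finset.sum_comm]
      _ = ∑ i, ∑ j, star (v i) ⬝ᵥ
            (((1 / (zs i - (starRingEnd ℂ) (zs j))) •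
              (J - V (zs i) * J * (V (zs j))ᴴ)).mulVec (v j)) :=
          Finset.sum_congr rfl fun i _ => Finset.sum_congr rfl fun j _ => (hterm i j).symm
  · -- V(x) J V(x)^* = J for real x
    intro x
    have h := hKey (x : ℂ) (x : ℂ)
    rw [Complex.conj_ofReal, sub_self, zero_smul, sub_eq_zero] at h
    exact h.symm
end
end

section
/- With the polynomials e_k, d_k (k = 0,…,p) defined by the three-term recurrences, the following four identities hold for all z ∈ ℂ: b_{p−1}·(d_p(z)d_{p−1}(0) − d_{p−1}(z)d_p(0)) = z·Σ_{k=0}^{p−1} d_k(z)d_k(0); b_{p−1}·(d_p(z)e_{p−1}(0) − d_{p−1}(z)e_p(0)) = 1 + z·Σ_{k=0}^{p−1} d_k(z)e_k(0); b_{p−1}·(e_{p−1}(z)d_p(0) − e_p(z)d_{p−1}(0)) = 1 − z·Σ_{k=0}^{p−1} e_k(z)d_k(0); and b_{p−1}·(e_{p−1}(z)e_p(0) − e_p(z)e_{p−1}(0)) = −z·Σ_{k=0}^{p−1} e_k(z)e_k(0). (These are the entries of V(z)·V(0)^{−1}, where V(z) = [[−d_{p−1}(z), −b_{p−1}d_p(z)],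 [e_{p−1}(z), b_{p−1}e_p(z)]].) -/
open Finset

noncomputable section

/-- four Christoffel–Darboux-type identities expressing the entries of
`V(z)·V(0)⁻¹` (where `V(z) = [[-d_{p-1}(z), -b_{p-1}d_p(z)], [e_{p-1}(z), b_{p-1}e_p(z)]]`)
as sums of products of the polynomials of the first and second kind. -/
theorem entries_of_V_times_V0_inv (p : ℕ) (hp : 1 ≤ p) (s₀ : ℝ) (hs₀ : 0 < s₀)
    (a b : ℕ → ℝ) (hb : ∀ k < p, 0 < b k)
    (e d : ℕ → ℂ → ℂ)
    (he0 : ∀ z : ℂ, e 0 z = 1 / (Real.sqrt s₀ : ℂ))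
    (he1 : ∀ z : ℂ, e 1 z = (z - (a 0 : ℂ)) / ((b 0 : ℂ) * (Real.sqrt s₀ : ℂ)))
    (hd0 : ∀ z : ℂ, d 0 z = 0)
    (hd1 : ∀ z : ℂ, d 1 z = (Real.sqrt s₀ : ℂ) / (b 0 : ℂ))
    (hrecE : ∀ k, 1 ≤ k → k ≤ p - 1 → ∀ z : ℂ,
      (b (k - 1) : ℂ) * e (k - 1) z + (a k : ℂ) * e k z + (b k : ℂ) * e (k + 1) z =
        z * e k z)
    (hrecD : ∀ k, 1 ≤ k → k ≤ p - 1 → ∀ z : ℂ,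
      (b (k - 1) : ℂ) * d (k - 1) z + (a k : ℂ) * d k z + (b k : ℂ) * d (k + 1) z =
        z * d k z) :
    ∀ z : ℂ,
      ((b (p - 1) : ℂ) * (d p z * d (p - 1) 0 - d (p - 1) z * d p 0) =
        z * ∑ k ∈ Finset.range p, d k z * d k 0) ∧
      ((b (p - 1) : ℂ) * (d p z * e (p - 1) 0 - d (p - 1) z * e p 0) =
        1 + z * ∑ k ∈ Finset.range p, d k z * e k 0) ∧
      ((b (p - 1) : ℂ) * (e (p - 1) z * d p 0 - e p z * d (p - 1) 0) =
        1 - z * ∑ k ∈ Finset.range p, e k z * d k 0) ∧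
      ((b (p - 1) : ℂ) * (e (p - 1) z * e p 0 - e p z * e (p - 1) 0) =
        -(z * ∑ k ∈ Finset.range p, e k z * e k 0)) := by
  have hs : (Real.sqrt s₀ : ℂ) ≠ 0 := by
    exact_mod_cast Complex.ofReal_ne_zero.mpr (ne_of_gt (Real.sqrt_pos.mpr hs₀))
  have hb0 : (b 0 : ℂ) ≠ 0 :=
    Complex.ofReal_ne_zero.mpr (ne_of_gt (hb 0 hp))
  -- general Christoffel–Darboux type telescoping lemma
  have key : ∀ (f g : ℕ → ℂ → ℂ),
      (∀ k, 1 ≤ k → k ≤ p - 1 → ∀ z : ℂ,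
        (b (k - 1) : ℂ) * f (k - 1) z + (a k : ℂ) * f k z + (b k : ℂ) * f (k + 1) z =
          z * f k z) →
      (∀ k, 1 ≤ k → k ≤ p - 1 → ∀ z : ℂ,
        (b (k - 1) : ℂ) * g (k - 1) z + (a k : ℂ) * g k z + (b k : ℂ) * g (k + 1) z =
          z * g k z) →
      ∀ z : ℂ, ∀ n, 1 ≤ n → n ≤ p →
        (b (n - 1) : ℂ) * (f n z * g (n - 1) 0 - f (n - 1) z * g n 0) =
          (b 0 : ℂ) * (f 1 z * g 0 0 - f 0 z * g 1 0) +
            z * ∑ k ∈ Finset.Ico 1 n, f k z * g k 0 := by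
    intro f g hF hG z n
    induction n with
    | zero => intro h; omega
    | succ m ih =>
      intro h1 h2
      rcases Nat.eq_zero_or_pos m with hm | hm
      · subst hm; simp
      · have ihv := ih hm (by omega)
        have hFm := hF m hm (by omega) z
        have hGm := hG m hm (by omega) 0
        rw [Finset.sum_Ico_succ_top hm]
        simp only [Nat.add_sub_cancel]
        linear_combination ihv + (g m 0) * hFm - (f m z) * hGm
  intro z
  have hsplit : ∀ (F : ℕ → ℂ),
      ∑ k ∈ Finset.range p, F k = F 0 + ∑ k ∈ Finset.Ico 1 p, F k := by
    intro F
    rw [Finset.range_eq_Ico, Finset.sum_eq_sum_Ico_succ_bot hp]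
  refine ⟨?_, ?_, ?_, ?_⟩
  · have h := key d d hrecD hrecD z p hp le_rfl
    rw [hsplit fun k => d k z * d k 0]
    rw [h, hd0, hd0, hd1]
    ring
  · have h := key d e hrecD hrecE z p hp le_rfl
    rw [hsplit fun k => d k z * e k 0]
    rw [h, hd0, hd1, he0]
    field_simp
    ring
  · have h := key e d hrecE hrecD z p hp le_rfl
    rw [hsplit fun k => e k z * d k 0]
    have : (b (p - 1) : ℂ) * (e (p - 1) z * d p 0 - e p z * d (p - 1) 0) =
        -((b (p - 1) : ℂ) * (e p z * d (p - 1) 0 - e (p - 1) z * d p 0)) := by ring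
    rw [this, h, hd0, hd1, he0]
    field_simp
    ring
  · have h := key e e hrecE hrecE z p hp le_rfl
    rw [hsplit fun k => e k z * e k 0]
    have : (b (p - 1) : ℂ) * (e (p - 1) z * e p 0 - e p z * e (p - 1) 0) =
        -((b (p - 1) : ℂ) * (e p z * e (p - 1) 0 - e (p - 1) z * e p 0)) := by ring
    rw [this, h, he0, he0, he1, he1]
    field_simp
    ring
end
end
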